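/- arXiv:0909.0808 — 13 statements merged into one kernel-verified Lean document; each statement's English description precedes it below -/
import Mathlib

section
/- Let G = (V,E) be a finite simple graph and let k be a positive integer. G is k-colorable if and only if the polynomial system x_i^k - 1 = 0 for all i in V and \sum_{s=0}^{k-1} x_i^{k-1-s} x_j^s = 0 for all edges {i,j} in E has a solution over the complex numbers C. -/
/-- Let G = (V,E) be a finite simple graph and let k be a positive integer.
G is k-colorable if and only if the polynomial system `x_i^k - 1 = 0` for all `i ∈ V` and
`∑_{s=0}^{k-1} x_i^{k-1-s} x_j^s = 0` for all edges `{i,j} ∈ E` has a solution over ℂ. -/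
theorem stmt_1 {V : Type*} [Fintype V] (G : SimpleGraph V) (k : ℕ) (hk : 0 < k) :
    G.Colorable k ↔
    ∃ x : V → ℂ,
      (∀ i : V, x i ^ k - 1 = 0) ∧
      (∀ i j : V, G.Adj i j →
        ∑ s ∈ Finset.range k, x i ^ (k - 1 - s) * x j ^ s = 0) := by
  constructor
  · rintro ⟨C⟩
    have hζ : IsPrimitiveRoot (Complex.exp (2 * Real.pi * Complex.I / k)) k :=
      Complex.isPrimitiveRoot_exp k hk.ne'
    set ζ : ℂ := Complex.exp (2 * Real.pi * Complex.I / k)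
    refine ⟨fun i => ζ ^ (C i : ℕ), fun i => ?_, fun i j hij => ?_⟩
    · rw [← pow_mul, mul_comm, pow_mul, hζ.pow_eq_one, one_pow, sub_self]
    · have hne : ζ ^ (C j : ℕ) ≠ ζ ^ (C i : ℕ) := by
        intro h
        exact C.valid hij (Fin.ext (hζ.pow_inj (C j).isLt (C i).isLt h)).symm
      have key : (∑ s ∈ Finset.range k, (ζ ^ (C i : ℕ)) ^ (k - 1 - s) * (ζ ^ (C j : ℕ)) ^ s)
          * (ζ ^ (C j : ℕ) - ζ ^ (C i : ℕ)) = 0 := by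
        have := geom_sum₂_mul (ζ ^ (C j : ℕ)) (ζ ^ (C i : ℕ)) k
        calc (∑ s ∈ Finset.range k, (ζ ^ (C i : ℕ)) ^ (k - 1 - s) * (ζ ^ (C j : ℕ)) ^ s)
              * (ζ ^ (C j : ℕ) - ζ ^ (C i : ℕ))
            = (∑ s ∈ Finset.range k, (ζ ^ (C j : ℕ)) ^ s * (ζ ^ (C i : ℕ)) ^ (k - 1 - s))
              * (ζ ^ (C j : ℕ) - ζ ^ (C i : ℕ)) := by
              congr 1; exact Finset.sum_congr rfl fun s _ => mul_comm _ _
          _ = (ζ ^ (C j : ℕ)) ^ k - (ζ ^ (C i : ℕ)) ^ k := geom_sum₂_mul _ _ k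
          _ = 0 := by
              rw [← pow_mul, mul_comm, pow_mul, hζ.pow_eq_one, one_pow,
                ← pow_mul, mul_comm, pow_mul, hζ.pow_eq_one, one_pow, sub_self]
      rcases mul_eq_zero.mp key with h | h
      · exact h
      · exact absurd (sub_eq_zero.mp h) hne
  · rintro ⟨x, hroot, hedge⟩
    have hx1 : ∀ i, x i ^ k = 1 := fun i => by
      have := hroot i; linear_combination this
    have hx0 : ∀ i, x i ≠ 0 := fun i h => by
      have := hx1 i; rw [h, zero_pow hk.ne'] at this; exact zero_ne_one this
    let R : Finset ℂ := (Polynomial.nthRoots k (1 : ℂ)).toFinset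
    have hmem : ∀ i, x i ∈ R := fun i => by
      simp only [R, Multiset.mem_toFinset, Polynomial.mem_nthRoots hk]
      exact hx1 i
    let C : G.Coloring R := SimpleGraph.Coloring.mk (fun i => ⟨x i, hmem i⟩) (by
      intro i j hij h
      have hxe : x i = x j := congrArg Subtype.val h
      have hs := hedge i j hij
      rw [hxe] at hs
      have : ∀ s ∈ Finset.range k, x j ^ (k - 1 - s) * x j ^ s = x j ^ (k - 1) := by
        intro s hs'
        rw [← pow_add, Nat.sub_add_cancel (Nat.le_sub_one_of_lt (Finset.mem_range.mp hs'))]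
      rw [Finset.sum_congr rfl this, Finset.sum_const, Finset.card_range] at hs
      rw [nsmul_eq_mul] at hs
      rcases mul_eq_zero.mp hs with h' | h'
      · exact Nat.cast_ne_zero.mpr hk.ne' h'
      · exact pow_ne_zero _ (hx0 j) h')
    have := C.colorable
    refine this.mono ?_
    calc Fintype.card R = R.card := Fintype.card_coe R
      _ ≤ Multiset.card (Polynomial.nthRoots k (1 : ℂ)) := Multiset.toFinset_card_le _
      _ ≤ k := Polynomial.card_nthRoots k 1
end

section
/- Let G = (V,E) be a finite simple graph and let k be an odd positive integer. G is k-colorable if and only if the polynomial system x_i^k - 1 = 0 for all i in V and \sum_{s=0}^{k-1} x_i^{k-1-s} x_j^s = 0 for all edges {i,j} in E has a common root over the algebraic closure of the field F_2 with two elements. -/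
/-- Let G = (V,E) be a finite simple graph and let k be an odd positive integer.
G is k-colorable if and only if the polynomial system `x_i^k - 1 = 0` for all `i ∈ V` and
`∑_{s=0}^{k-1} x_i^{k-1-s} x_j^s = 0` for all edges `{i,j} ∈ E` has a common root over the
algebraic closure of 𝔽₂. -/
theorem stmt_2 {V : Type*} [Fintype V] (G : SimpleGraph V) (k : ℕ) (hk : 0 < k)
    (hodd : Odd k) :
    G.Colorable k ↔
    ∃ x : V → AlgebraicClosure (ZMod 2),
      (∀ i : V, x i ^ k - 1 = 0) ∧
      (∀ i j : V, G.Adj i j →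
        ∑ s ∈ Finset.range k, x i ^ (k - 1 - s) * x j ^ s = 0) := by
  set K := AlgebraicClosure (ZMod 2)
  have hk2 : ¬ (2 : ℕ) ∣ k := by
    obtain ⟨m, rfl⟩ := hodd; omega
  have hkK : (k : K) ≠ 0 := fun h0 => hk2 ((CharP.cast_eq_zero_iff K 2 k).mp h0)
  haveI : NeZero (k : K) := ⟨hkK⟩
  constructor
  · rintro ⟨c⟩
    -- get a primitive k-th root of unity
    obtain ⟨ζ, hζ⟩ : ∃ ζ : K, IsPrimitiveRoot ζ k := by
      have hdeg : (Polynomial.cyclotomic k K).degree ≠ 0 := by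
        rw [Polynomial.degree_cyclotomic]
        simpa using Nat.totient_pos.mpr hk |>.ne'
      obtain ⟨ζ, hζ⟩ := IsAlgClosed.exists_root _ hdeg
      exact ⟨ζ, (Polynomial.isRoot_cyclotomic_iff).mp hζ⟩
    refine ⟨fun i => ζ ^ (c i : ℕ), fun i => ?_, fun i j hij => ?_⟩
    · rw [← pow_mul, mul_comm, pow_mul, hζ.pow_eq_one, one_pow, sub_self]
    · have hne : ζ ^ (c j : ℕ) ≠ ζ ^ (c i : ℕ) := fun h =>
        (c.valid hij) ((Fin.val_injective (hζ.pow_inj (c j).isLt (c i).isLt h)).symm)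
      have hsub : ζ ^ (c j : ℕ) - ζ ^ (c i : ℕ) ≠ 0 := sub_ne_zero.mpr hne
      have hgeom := geom_sum₂_mul (ζ ^ (c j : ℕ)) (ζ ^ (c i : ℕ)) k
      have hpow : (ζ ^ (c j : ℕ)) ^ k - (ζ ^ (c i : ℕ)) ^ k = 0 := by
        rw [← pow_mul, ← pow_mul, mul_comm, mul_comm (c i : ℕ), pow_mul, pow_mul,
          hζ.pow_eq_one, one_pow, one_pow, sub_self]
      rw [hpow] at hgeom
      have := mul_eq_zero.mp hgeom
      rcases this with h | h
      · rw [← h]; exact Finset.sum_congr rfl fun s _ => mul_comm _ _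
      · exact absurd h hsub
  · rintro ⟨x, hroot, hadj⟩
    classical
    have hx1 : ∀ i, x i ^ k = 1 := fun i => by
      have := hroot i; linear_combination this
    -- the values x i are distinct on adjacent vertices
    have hne : ∀ i j, G.Adj i j → x i ≠ x j := by
      intro i j hij heq
      have h := hadj i j hij
      rw [heq] at h
      have hsum : ∑ s ∈ Finset.range k, x j ^ (k - 1 - s) * x j ^ s
          = (k : K) * x j ^ (k - 1) := by
        rw [Finset.sum_congr rfl (fun s hs => ?_), Finset.sum_const, Finset.card_range,
          nsmul_eq_mul]
        rw [← pow_add]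
        congr 1
        have := Finset.mem_range.mp hs
        omega
      rw [hsum] at h
      have hxj : x j ≠ 0 := fun h0 => by
        have := hx1 j; rw [h0, zero_pow hk.ne'] at this; exact one_ne_zero this.symm
      rcases mul_eq_zero.mp h with h' | h'
      · exact hkK h'
      · exact absurd h' (pow_ne_zero _ hxj)
    -- coloring by values in the roots of x^k = 1
    let S : Finset K := (Polynomial.nthRoots k (1 : K)).toFinset
    have hmem : ∀ i, x i ∈ S := fun i => by
      simp [S, Polynomial.mem_nthRoots hk, hx1 i]
    let C : G.Coloring {z // z ∈ S} :=
      SimpleGraph.Coloring.mk (fun i => ⟨x i, hmem i⟩)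
        (fun {i j} hij h => hne i j hij (congrArg Subtype.val h))
    have hcard : Fintype.card {z // z ∈ S} ≤ k := by
      rw [Fintype.card_coe]
      exact le_trans (Multiset.toFinset_card_le _) (Polynomial.card_nthRoots k 1)
    exact (C.colorable).mono hcard
end

section
/- Let G = (V,E) be a finite simple graph. A vector x in R^E satisfies x_e^2 - x_e = 0 for all e in E and \prod_{e in T} x_e = 0 for every odd cycle T of G if and only if x is the 0/1 incidence vector \chi^F of some edge subset F of E that is contained in a cut of G. -/
open SimpleGraph

private lemma path_edge_aux {V : Type*} {H : SimpleGraph V} {v w : V} (q : H.Walk w v)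
    (hq : q.IsPath) (hvw : v ≠ w) (he : s(v, w) ∈ q.edges) : q.length = 1 := by
  cases q with
  | nil => simp at he
  | @cons _ b _ h' q' =>
    rw [Walk.edges_cons, List.mem_cons] at he
    have hpath := (Walk.cons_isPath_iff h' q').mp hq
    rcases he with he | he
    · rw [Sym2.eq_iff] at he
      rcases he with ⟨rfl, rfl⟩ | ⟨h1, -⟩
      · exact absurd rfl hvw
      · subst h1
        have hnil : (⟨q', hpath.1⟩ : H.Path v v) = Path.nil := Path.loop_eq _
        have : q' = Walk.nil := congrArg Subtype.val hnil
        subst this; simp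
    · exact absurd (Walk.snd_mem_support_of_mem_edges q' he) hpath.2

private lemma cons_of_closed {V : Type*} {H : SimpleGraph V} {u : V} (p : H.Walk u u)
    (h : p.length ≠ 0) : ∃ (y : V) (h2 : H.Adj u y) (r : H.Walk y u), p = Walk.cons h2 r := by
  cases p with
  | nil => simp at h
  | cons h2 r => exact ⟨_, h2, r, rfl⟩

private lemma exists_odd_cycle {V : Type*} [DecidableEq V] {H : SimpleGraph V} :
    ∀ (n : ℕ) {v : V} (p : H.Walk v v), p.length = n → Odd n →
    ∃ (w : V) (c : H.Walk w w), c.IsCycle ∧ Odd c.length := by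
  intro n
  induction n using Nat.strong_induction_on with
  | _ n IH =>
    intro v p hl hodd
    have hn0 : n ≠ 0 := by rcases hodd with ⟨k, hk⟩; omega
    obtain ⟨w, h, q, rfl⟩ := cons_of_closed p (hl ▸ hn0)
    have hql : q.length + 1 = n := by simpa using hl
    by_cases hnd : q.support.Nodup
    · by_cases he : s(v, w) ∈ q.edges
      · have h1 := path_edge_aux q (Walk.IsPath.mk' hnd) h.ne he
        rw [Nat.odd_iff] at hodd; omega
      · exact ⟨v, Walk.cons h q, (Walk.cons_isCycle_iff q h).2 ⟨Walk.IsPath.mk' hnd, he⟩,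
          hl ▸ hodd⟩
    · rw [List.nodup_iff_count_le_one] at hnd
      push_neg at hnd
      obtain ⟨u, hu⟩ := hnd
      have hup : u ∈ (Walk.cons h q).support := by
        rw [Walk.support_cons]
        exact List.mem_cons_of_mem _ (List.count_pos_iff.mp (by omega))
      set p' := (Walk.cons h q).rotate u hup with hp'def
      have hlen' : p'.length = n := by
        have h1 := congrArg Walk.length ((Walk.cons h q).take_spec hup)
        rw [Walk.length_append] at h1
        rw [hp'def, Walk.rotate, Walk.length_append]
        omega
      have hcnt' : 1 < p'.support.tail.count u := by
        have hr := Walk.support_rotate (Walk.cons h q) u hup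
        rw [hr.perm.count_eq]
        simpa using hu
      obtain ⟨y, h2, r2, hp'⟩ := cons_of_closed p' (by omega)
      have hcnt2 : 1 < r2.support.count u := by
        rw [hp', Walk.support_cons, List.tail_cons] at hcnt'
        exact hcnt'
      have hu2 : u ∈ r2.support := List.count_pos_iff.mp (by omega)
      have hspec := r2.take_spec hu2
      have hsupp : r2.support = (r2.takeUntil u hu2).support ++ (r2.dropUntil u hu2).support.tail := by
        conv_lhs => rw [← hspec]
        rw [Walk.support_append]
      have hcnt3 : 0 < ((r2.dropUntil u hu2).support.tail).count u := by
        have h1 := r2.count_support_takeUntil_eq_one hu2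
        rw [hsupp, List.count_append] at hcnt2
        omega
      have hr3len : 0 < (r2.dropUntil u hu2).length := by
        have : u ∈ (r2.dropUntil u hu2).support.tail := List.count_pos_iff.mp hcnt3
        have h1 := List.ne_nil_of_mem this
        have h2 : (r2.dropUntil u hu2).support.tail.length ≠ 0 := fun hh =>
          h1 (List.length_eq_zero_iff.mp hh)
        rw [List.length_tail, Walk.length_support] at h2
        omega
      have hlsum : (r2.takeUntil u hu2).length + (r2.dropUntil u hu2).length = r2.length := by
        have := congrArg Walk.length hspec
        rwa [Walk.length_append] at this
      have hr2len : r2.length + 1 = n := by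
        rw [hp'] at hlen'; simpa using hlen'
      set c1 := Walk.cons h2 (r2.takeUntil u hu2) with hc1def
      have hc1len : c1.length = (r2.takeUntil u hu2).length + 1 := by simp [hc1def]
      rw [Nat.odd_iff] at hodd
      by_cases hc1odd : Odd c1.length
      · exact IH c1.length (by omega) c1 rfl hc1odd
      · rw [Nat.odd_iff] at hc1odd
        exact IH (r2.dropUntil u hu2).length (by omega) (r2.dropUntil u hu2) rfl
          (Nat.odd_iff.2 (by omega))

private lemma exists_bipartition {V : Type*} (H : SimpleGraph V)
    (hno : ∀ (u : V) (p : H.Walk u u), ¬ Odd p.length) :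
    ∃ S : Set V, ∀ a b, H.Adj a b → (a ∈ S ↔ b ∉ S) := by
  classical
  refine ⟨{v | Odd (H.dist v (H.connectedComponentMk v).out)}, fun a b hab => ?_⟩
  have hcomp : H.connectedComponentMk a = H.connectedComponentMk b :=
    ConnectedComponent.connectedComponentMk_eq_of_adj hab
  set r := (H.connectedComponentMk a).out with hr
  have hra : H.Reachable a r :=
    ConnectedComponent.exact (Quot.out_eq _).symm
  have hrb : H.Reachable b r := by
    rw [hr, hcomp]
    exact ConnectedComponent.exact (Quot.out_eq _).symm
  obtain ⟨pa, hpa⟩ := hra.exists_walk_length_eq_dist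
  obtain ⟨pb, hpb⟩ := hrb.exists_walk_length_eq_dist
  have hcl := hno a ((Walk.cons hab pb).append pa.reverse)
  rw [Walk.length_append, Walk.length_cons, Walk.length_reverse, Nat.odd_iff] at hcl
  simp only [Set.mem_setOf_eq, ← hr, ← hcomp, Nat.odd_iff]
  omega

private lemma walk_cross_parity {V : Type*} {G : SimpleGraph V} (S : Set V) :
    ∀ {u w : V} (p : G.Walk u w),
      (∀ e ∈ p.edges, ∀ a b : V, e = s(a, b) → ((a ∈ S ∧ b ∉ S) ∨ (b ∈ S ∧ a ∉ S))) →
      (Even p.length ↔ (u ∈ S ↔ w ∈ S)) := by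
  intro u w p
  induction p with
  | nil => simp
  | @cons a b c h q ih =>
    intro hcross
    have hhead := hcross s(a, b) (by simp) a b rfl
    have htail := ih fun e he x y hxy => hcross e (by simp [he]) x y hxy
    rw [Walk.length_cons, Nat.even_add_one, htail]
    tauto


/-- Let G = (V,E) be a finite simple graph. A vector `x ∈ ℝ^E` satisfies
`x_e^2 - x_e = 0` for all `e ∈ E` and `∏_{e ∈ T} x_e = 0` for every odd cycle `T` of `G`
if and only if `x` is the 0/1 incidence vector `χ^F` of some edge subset `F ⊆ E` that is
contained in a cut of `G`. -/
theorem stmt_3 {V : Type*} [Fintype V] [DecidableEq V] (G : SimpleGraph V)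
    [DecidableRel G.Adj] (x : G.edgeSet → ℝ) :
    ((∀ e : G.edgeSet, x e ^ 2 - x e = 0) ∧
      (∀ (v : V) (T : G.Walk v v), T.IsCycle → Odd T.length →
        (T.edges.map (fun e => if h : e ∈ G.edgeSet then x ⟨e, h⟩ else 1)).prod = 0)) ↔
    (∃ (F : Set G.edgeSet) (S : Set V),
      (∀ e ∈ F, ∀ a b : V, (e : Sym2 V) = s(a, b) →
        ((a ∈ S ∧ b ∉ S) ∨ (b ∈ S ∧ a ∉ S))) ∧
      x = F.indicator 1) := by
  classical
  constructor
  · rintro ⟨hsq, hcyc⟩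
    have hx01 : ∀ e : G.edgeSet, x e = 0 ∨ x e = 1 := by
      intro e
      have h1 : x e * (x e - 1) = 0 := by
        have := hsq e; nlinarith [sq_nonneg (x e)]
      rcases mul_eq_zero.mp h1 with h | h
      · exact Or.inl h
      · exact Or.inr (by linarith)
    set f : Sym2 V → ℝ := fun e => if h : e ∈ G.edgeSet then x ⟨e, h⟩ else 1 with hf
    let H : SimpleGraph V :=
      { Adj := fun a b => G.Adj a b ∧ f s(a, b) = 1
        symm := by
          constructor
          rintro a b ⟨h1, h2⟩
          exact ⟨h1.symm, by rwa [Sym2.eq_swap] at h2⟩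
        loopless := ⟨fun a ha => G.loopless.irrefl a ha.1⟩ }
    have hHedge : ∀ (uu vv : V) (p : H.Walk uu vv), ∀ e ∈ p.edges, e ∈ G.edgeSet ∧ f e = 1 := by
      intro uu vv p e he
      have hmem : e ∈ H.edgeSet := p.edges_subset_edgeSet he
      clear he
      induction e using Sym2.ind with
      | _ a b =>
        rw [SimpleGraph.mem_edgeSet] at hmem
        exact ⟨(SimpleGraph.mem_edgeSet G).mpr hmem.1, hmem.2⟩
    have hno : ∀ (u : V) (p : H.Walk u u), ¬ Odd p.length := by
      intro u p hodd
      obtain ⟨w, c, hc, hcodd⟩ := exists_odd_cycle p.length p rfl hodd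
      have hsub : ∀ e ∈ c.edges, e ∈ G.edgeSet := fun e he => (hHedge _ _ c e he).1
      have h0 := hcyc w (c.transfer G hsub) (hc.transfer hsub)
        (by rw [Walk.length_transfer]; exact hcodd)
      rw [Walk.edges_transfer] at h0
      have h1 : (c.edges.map fun e => if h : e ∈ G.edgeSet then x ⟨e, h⟩ else 1).prod = 1 := by
        apply List.prod_eq_one
        intro a ha
        obtain ⟨e, he, rfl⟩ := List.mem_map.mp ha
        have h2 := (hHedge _ _ c e he).2
        rw [hf] at h2
        simp only at h2
        rw [dif_pos (hHedge _ _ c e he).1] at h2 ⊢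
        exact h2
      rw [h1] at h0
      exact one_ne_zero h0
    obtain ⟨S, hS⟩ := exists_bipartition H hno
    refine ⟨{e | x e = 1}, S, ?_, ?_⟩
    · rintro e he a b heq
      have hG : G.Adj a b := by rw [← SimpleGraph.mem_edgeSet, ← heq]; exact e.2
      have hfe : f s(a, b) = 1 := by
        rw [hf]
        simp only
        rw [dif_pos (heq ▸ e.2)]
        have heqe : (⟨s(a, b), heq ▸ e.2⟩ : G.edgeSet) = e := Subtype.ext heq.symm
        rw [heqe]
        exact he
      have := hS a b ⟨hG, hfe⟩
      tauto
    · funext e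
      rcases hx01 e with h | h
      · rw [Set.indicator_of_notMem (by simp [Set.mem_setOf_eq, h]), h]
      · rw [Set.indicator_of_mem (by simpa [Set.mem_setOf_eq] using h), h, Pi.one_apply]
  · rintro ⟨F, S, hF, rfl⟩
    constructor
    · intro e
      by_cases he : e ∈ F
      · rw [Set.indicator_of_mem he, Pi.one_apply]; norm_num
      · rw [Set.indicator_of_notMem he]; norm_num
    · intro v T hT hodd
      by_contra h0
      have hall : ∀ e ∈ T.edges, ∀ a b : V, e = s(a, b) →
          ((a ∈ S ∧ b ∉ S) ∨ (b ∈ S ∧ a ∉ S)) := by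
        intro e he a b heq
        have hmem : e ∈ G.edgeSet := T.edges_subset_edgeSet he
        have hne : (if h : e ∈ G.edgeSet then F.indicator (1 : ↑G.edgeSet → ℝ) ⟨e, h⟩ else 1) ≠ 0 := by
          intro hz
          exact h0 (List.prod_eq_zero (List.mem_map.mpr ⟨e, he, hz⟩))
        rw [dif_pos hmem] at hne
        have heF : (⟨e, hmem⟩ : G.edgeSet) ∈ F := by
          by_contra hnF
          exact hne (Set.indicator_of_notMem hnF _)
        exact hF ⟨e, hmem⟩ heF a b heq
      have hpar := walk_cross_parity S T hall
      have heven : Even T.length := hpar.mpr Iff.rfl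
      rw [Nat.even_iff] at heven
      rw [Nat.odd_iff] at hodd
      omega
end

section
/- Let K be an algebraically closed field, let R = K[x_1,...,x_n], and let I be an ideal of R such that the quotient R/I is finite-dimensional as a K-vector space. Then the variety V(I) = {v in K^n : f(v) = 0 for all f in I} is finite and its cardinality satisfies |V(I)| <= dim_K(R/I). -/
/-- Let K be an algebraically closed field, R = K[x_1,...,x_n], and let I be
an ideal of R such that R/I is finite-dimensional as a K-vector space. Then the variety
`V(I) = {v ∈ K^n : f(v) = 0 for all f ∈ I}` is finite and `|V(I)| ≤ dim_K(R/I)`. -/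
theorem stmt_4 {K : Type*} [Field K] [IsAlgClosed K] (n : ℕ)
    (I : Ideal (MvPolynomial (Fin n) K))
    (hfd : FiniteDimensional K (MvPolynomial (Fin n) K ⧸ I)) :
    {v : Fin n → K | ∀ f ∈ I, MvPolynomial.eval v f = 0}.Finite ∧
    Nat.card {v : Fin n → K | ∀ f ∈ I, MvPolynomial.eval v f = 0} ≤
      Module.finrank K (MvPolynomial (Fin n) K ⧸ I) := by
  set S := {v : Fin n → K | ∀ f ∈ I, MvPolynomial.eval v f = 0} with hS
  have hz : ∀ v : S, ∀ f ∈ I, MvPolynomial.aeval (v : Fin n → K) f = 0 := by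
    intro v f hf
    have := v.2 f hf
    rw [show (MvPolynomial.aeval (v : Fin n → K)) f
        = RingHomClass.toRingHom (MvPolynomial.aeval (v : Fin n → K)) f from rfl,
      MvPolynomial.coe_aeval_eq_eval]
    exact this
  -- the evaluation algebra homomorphism on the quotient
  let φ : S → ((MvPolynomial (Fin n) K ⧸ I) →ₐ[K] K) := fun v =>
    Ideal.Quotient.liftₐ I (MvPolynomial.aeval (v : Fin n → K)) (hz v)
  have hφinj : Function.Injective φ := by
    intro v w h
    apply Subtype.ext
    funext i
    have := congrArg (fun ψ => ψ (Ideal.Quotient.mk I (MvPolynomial.X i))) h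
    simpa [φ] using this
  have hli : LinearIndependent K (fun v : S => (φ v).toLinearMap) :=
    (linearIndependent_algHom_toLinearMap' K (MvPolynomial (Fin n) K ⧸ I) K).comp φ hφinj
  have hfin : Finite S := hli.finite
  constructor
  · exact Set.toFinite S
  · haveI := Fintype.ofFinite S
    calc Nat.card S = Fintype.card S := Nat.card_eq_fintype_card
    _ ≤ Module.finrank K ((MvPolynomial (Fin n) K ⧸ I) →ₗ[K] K) :=
        hli.fintype_card_le_finrank
    _ = Module.finrank K (MvPolynomial (Fin n) K ⧸ I) := by
        rw [Module.finrank_linearMap, Module.finrank_self, mul_one]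
end

section
/- Let K be an algebraically closed field, let R = K[x_1,...,x_n], and let I be a radical ideal of R such that the quotient R/I is finite-dimensional as a K-vector space. Then the cardinality of the variety V(I) = {v in K^n : f(v) = 0 for all f in I} equals dim_K(R/I). -/
open MvPolynomial Ideal

section Aux

variable {K : Type*} [Field K] [IsAlgClosed K] {n : ℕ}

private lemma aux_mem_vi (x : Fin n → K) (p : MvPolynomial (Fin n) K) :
    p ∈ (MvPolynomial.vanishingIdeal K {x} : Ideal (MvPolynomial (Fin n) K)) ↔
      MvPolynomial.eval x p = 0 :=
  by rw [MvPolynomial.mem_vanishingIdeal_singleton_iff]; rfl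

private lemma aux_vi_inj : Function.Injective
    (fun x : Fin n → K => (MvPolynomial.vanishingIdeal K {x} : Ideal (MvPolynomial (Fin n) K))) := by
  intro x y h
  have h' : (MvPolynomial.vanishingIdeal K {x} : Ideal (MvPolynomial (Fin n) K)) =
      MvPolynomial.vanishingIdeal K {y} := h
  funext i
  have hx : (X i - C (x i) : MvPolynomial (Fin n) K) ∈
      (MvPolynomial.vanishingIdeal K {x} : Ideal (MvPolynomial (Fin n) K)) := by
    rw [aux_mem_vi]; simp
  rw [h', aux_mem_vi] at hx
  simp [sub_eq_zero] at hx
  exact hx.symm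

end Aux

/-- Let K be an algebraically closed field, R = K[x_1,...,x_n], and let I be
a radical ideal of R such that R/I is finite-dimensional as a K-vector space. Then the
cardinality of the variety `V(I) = {v ∈ K^n : f(v) = 0 for all f ∈ I}` equals
`dim_K(R/I)`. -/
theorem stmt_5 {K : Type*} [Field K] [IsAlgClosed K] (n : ℕ)
    (I : Ideal (MvPolynomial (Fin n) K)) (hrad : I.IsRadical)
    (hfd : FiniteDimensional K (MvPolynomial (Fin n) K ⧸ I)) :
    {v : Fin n → K | ∀ f ∈ I, MvPolynomial.eval v f = 0}.Finite ∧
    Nat.card {v : Fin n → K | ∀ f ∈ I, MvPolynomial.eval v f = 0} =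
      Module.finrank K (MvPolynomial (Fin n) K ⧸ I) := by
  classical
  set R := MvPolynomial (Fin n) K with hR
  set S : Set (Fin n → K) := {v | ∀ f ∈ I, MvPolynomial.eval v f = 0} with hSdef
  have hSz : S = MvPolynomial.zeroLocus K I := rfl
  set mI : (Fin n → K) → Ideal R := fun x => MvPolynomial.vanishingIdeal K {x} with hmI
  have hIle : ∀ x ∈ S, I ≤ mI x := by
    intro x hx f hf
    rw [hmI, aux_mem_vi]
    exact hx f hf
  have hmax : ∀ x : Fin n → K, (mI x).IsMaximal := fun x =>
    show (MvPolynomial.vanishingIdeal K {x} : Ideal R).IsMaximal from inferInstance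
  -- finiteness of S
  haveI : IsArtinianRing (R ⧸ I) := IsArtinianRing.of_finite K _
  have hfinmax : {J : Ideal (R ⧸ I) | J.IsMaximal}.Finite :=
    IsArtinianRing.setOfPred_isMaximal_finite (R := R ⧸ I)
  set φ : (Fin n → K) → Ideal (R ⧸ I) := fun x => Ideal.map (Ideal.Quotient.mk I) (mI x) with hφ
  have hcomap : ∀ x ∈ S, Ideal.comap (Ideal.Quotient.mk I) (φ x) = mI x := by
    intro x hx
    rw [hφ, Ideal.comap_map_of_surjective _ Ideal.Quotient.mk_surjective,
      ← RingHom.ker_eq_comap_bot, Ideal.mk_ker, sup_eq_left.mpr (hIle x hx)]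
  have himg : φ '' S ⊆ {J : Ideal (R ⧸ I) | J.IsMaximal} := by
    rintro - ⟨x, hx, rfl⟩
    rcases Ideal.map_eq_top_or_isMaximal_of_surjective (Ideal.Quotient.mk I) Ideal.Quotient.mk_surjective
        (hmax x) with h | h
    · exfalso
      have := hcomap x hx
      rw [show φ x = ⊤ from h, Ideal.comap_top] at this
      exact (hmax x).ne_top this.symm
    · exact h
  have hinjOn : Set.InjOn φ S := by
    intro x hx y hy hxy
    apply aux_vi_inj
    have := congrArg (Ideal.comap (Ideal.Quotient.mk I)) hxy
    rw [hcomap x hx, hcomap y hy] at this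
    exact this
  have hSfin : S.Finite := Set.Finite.of_finite_image (hfinmax.subset himg) hinjOn
  refine ⟨hSfin, ?_⟩
  haveI : Fintype S := hSfin.fintype
  -- the evaluation algebra homomorphism
  set F : R →ₐ[K] (S → K) := Pi.algHom K _ (fun p : S => MvPolynomial.aeval (p : Fin n → K))
    with hF
  have hFval : ∀ (f : R) (p : S), F f p = MvPolynomial.eval (p : Fin n → K) f := by
    intro f p
    have h1 : F f p = MvPolynomial.aeval (p : Fin n → K) f := rfl
    rw [h1]
    exact RingHom.congr_fun (MvPolynomial.coe_aeval_eq_eval _) f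
  have hker : RingHom.ker F = I := by
    ext f
    rw [RingHom.mem_ker]
    have hIr : I.radical = I := hrad.radical
    constructor
    · intro h
      have : f ∈ MvPolynomial.vanishingIdeal K S := by
        rw [MvPolynomial.mem_vanishingIdeal_iff]
        intro x hx
        have := congrFun h (⟨x, hx⟩ : S)
        simpa [hFval] using this
      rw [hSz, MvPolynomial.vanishingIdeal_zeroLocus_eq_radical, hIr] at this
      exact this
    · intro h
      funext p
      have := hIle p p.2 h
      rw [hmI, aux_mem_vi] at this
      simpa [hFval] using this
  have hpairwise : Pairwise (Function.onFun IsCoprime fun p : S => mI (p : Fin n → K)) := by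
    intro p q hpq
    refine Ideal.isCoprime_iff_sup_eq.mpr (Ideal.IsMaximal.coprime_of_ne (hmax _) (hmax _) ?_)
    intro h
    exact hpq (Subtype.ext (aux_vi_inj h))
  have hsurj : Function.Surjective F := by
    intro g
    obtain ⟨r, hr⟩ := Ideal.exists_forall_sub_mem_ideal (I := fun p : S => mI (p : Fin n → K))
      hpairwise (fun p => MvPolynomial.C (g p))
    refine ⟨r, ?_⟩
    funext p
    have := hr p
    rw [hmI, aux_mem_vi] at this
    simp only [map_sub, MvPolynomial.eval_C] at this
    rw [hFval]
    exact sub_eq_zero.mp this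
  let e : (R ⧸ I) ≃ₐ[K] (S → K) :=
    (Ideal.quotientEquivAlgOfEq K hker.symm).trans
      (Ideal.quotientKerAlgEquivOfSurjective hsurj)
  rw [e.toLinearEquiv.finrank_eq, Module.finrank_pi, Nat.card_eq_fintype_card]
end

section
/- Let K be a field, R = K[x_1,...,x_n], and for each integer d let R_d denote the K-vector space of polynomials of total degree at most d. Let F be a K-vector subspace of R_d, and define F^+ = F + x_1 F + ... + x_n F. If F = F^+ \cap R_d and dim_K(R_d / F) = dim_K(R_{d-1} / (F \cap R_{d-1})), then the quotient ring R / <F> by the ideal generated by F is a finite-dimensional K-vector space and dim_K(R / <F>) = dim_K(R_d / F). -/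
open MvPolynomial

set_option maxHeartbeats 1000000
set_option synthInstance.maxHeartbeats 400000

theorem aux_main6 {K V : Type*} [Field K] [AddCommGroup V] [Module K V]
    (F Rd Rd1 : Submodule K V) [FiniteDimensional K Rd] [FiniteDimensional K Rd1]
    (hFd : F ≤ Rd) (hmono : Rd1 ≤ Rd)
    (hdim : Module.finrank K (Rd ⧸ F.comap Rd.subtype) =
            Module.finrank K (Rd1 ⧸ F.comap Rd1.subtype)) :
    ∃ (N W : Submodule K V), N ≤ Rd1 ∧ F ≤ W ∧ IsCompl W N ∧ W ⊓ Rd ≤ F ∧ F ⊔ N = Rd := by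
  classical
  obtain ⟨N₀, hN₀⟩ := (F.comap Rd1.subtype).exists_isCompl
  refine ⟨N₀.map Rd1.subtype, ?_⟩
  set N : Submodule K V := N₀.map Rd1.subtype with hN
  have hNle : N ≤ Rd1 := Submodule.map_subtype_le _ _
  have hFfin : FiniteDimensional K F := Submodule.finiteDimensional_of_le hFd
  have hNfin : FiniteDimensional K N := Submodule.finiteDimensional_of_le hNle
  have hdisj : F ⊓ N = ⊥ := by
    rw [eq_bot_iff]
    rintro x ⟨hxF, hxN⟩
    obtain ⟨y, hy, rfl⟩ := hxN
    have h0 : y ∈ (F.comap Rd1.subtype) ⊓ N₀ := ⟨hxF, hy⟩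
    rw [hN₀.inf_eq_bot] at h0
    have : y = 0 := by simpa using h0
    simp [this]
  have hrankN : Module.finrank K N =
      Module.finrank K (Rd1 ⧸ F.comap Rd1.subtype) := by
    have e1 : (Rd1 ⧸ F.comap Rd1.subtype) ≃ₗ[K] N₀ :=
      (F.comap Rd1.subtype).quotientEquivOfIsCompl N₀ hN₀
    have e2 : N₀ ≃ₗ[K] N :=
      Submodule.equivMapOfInjective Rd1.subtype Rd1.injective_subtype N₀
    have q1 := e1.finrank_eq
    have q2 := e2.finrank_eq
    omega
  have hsupN : F ⊔ N = Rd := by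
    have hle : F ⊔ N ≤ Rd := sup_le hFd (hNle.trans hmono)
    refine Submodule.eq_of_le_of_finrank_eq hle ?_
    have h1 := Submodule.finrank_sup_add_finrank_inf_eq F N
    rw [hdisj, finrank_bot, add_zero] at h1
    have h2 := Submodule.finrank_quotient_add_finrank (F.comap Rd.subtype)
    have h4 : Module.finrank K (F.comap Rd.subtype) = Module.finrank K F :=
      (Submodule.comapSubtypeEquivOfLe hFd).finrank_eq
    omega
  obtain ⟨U, hU⟩ := Rd.exists_isCompl
  refine ⟨F ⊔ U, hNle, le_sup_left, ?_, ?_, hsupN⟩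
  · constructor
    · rw [disjoint_iff]
      rw [eq_bot_iff]
      rintro x ⟨hxW, hxN⟩
      obtain ⟨f, hf, u, hu, rfl⟩ := Submodule.mem_sup.mp hxW
      have hu' : u ∈ Rd := by
        have h1 : f + u ∈ Rd := hmono (hNle hxN)
        have h2 : (f + u) - f ∈ Rd := sub_mem h1 (hFd hf)
        simpa using h2
      have hu0 : u = 0 := by
        have : u ∈ Rd ⊓ U := ⟨hu', hu⟩
        rw [hU.inf_eq_bot] at this
        simpa using this
      subst hu0
      rw [add_zero] at hxN ⊢
      have : f ∈ F ⊓ N := ⟨hf, hxN⟩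
      rw [hdisj] at this
      simpa using this
    · rw [codisjoint_iff]
      rw [show F ⊔ U ⊔ N = F ⊔ N ⊔ U from sup_right_comm F U N, hsupN]
      exact hU.sup_eq_top
  · rintro x ⟨hxW, hxRd⟩
    obtain ⟨f, hf, u, hu, rfl⟩ := Submodule.mem_sup.mp hxW
    have hu' : u ∈ Rd := by
      have h2 : (f + u) - f ∈ Rd := sub_mem hxRd (hFd hf)
      simpa using h2
    have hu0 : u = 0 := by
      have : u ∈ Rd ⊓ U := ⟨hu', hu⟩
      rw [hU.inf_eq_bot] at this
      simpa using this
    subst hu0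
    simpa using hf

theorem aux_eval6 {K V : Type*} [Field K] [AddCommGroup V] [Module K V] (n : ℕ)
    (M : Fin n → Module.End K V) (hcomm : ∀ i j, M i * M j = M j * M i) (e : V) :
    ∃ (Lam : MvPolynomial (Fin n) K →ₗ[K] V) (Φ : MvPolynomial (Fin n) K → Module.End K V),
      Lam 1 = e ∧ (∀ i q, Lam (X i * q) = M i (Lam q)) ∧
      (∀ p q, Lam (p * q) = Φ p (Lam q)) := by
  classical
  have hcomm' : ∀ (i j : Fin n) (a b : ℕ), Commute (M i ^ a) (M j ^ b) := fun i j a b =>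
    Commute.pow_pow (hcomm i j) a b
  have hpair : ∀ m : Fin n →₀ ℕ, ((Finset.univ : Finset (Fin n)) : Set (Fin n)).Pairwise
      fun i j => Commute ((fun i => M i ^ m i) i) ((fun i => M i ^ m i) j) :=
    fun m i _ j _ _ => hcomm' i j _ _
  set Mpow : (Fin n →₀ ℕ) → Module.End K V :=
    fun m => Finset.univ.noncommProd (fun i => M i ^ m i) (hpair m) with hMpow
  have hMpow_zero : Mpow 0 = 1 := by
    rw [hMpow]
    refine (Finset.noncommProd_eq_pow_card _ _ _ 1 fun x _ => by simp).trans (one_pow _)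
  have hMpow_add : ∀ m m' : Fin n →₀ ℕ, Mpow (m + m') = Mpow m * Mpow m' := by
    intro m m'
    have h1 : ∀ i ∈ (Finset.univ : Finset (Fin n)),
        M i ^ (m + m') i = ((fun i => M i ^ m i) * fun i => M i ^ m' i) i := by
      intro i _
      simp [pow_add]
    show Finset.univ.noncommProd (fun i => M i ^ (m + m') i) (hpair _) = _
    rw [Finset.noncommProd_congr rfl h1 (fun x hx y hy h => hpair (m + m') hx hy h)]
    exact Finset.noncommProd_mul_distrib _ _
      (fun i _ j _ _ => hcomm' i j _ _) (fun i _ j _ _ => hcomm' i j _ _)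
      (fun i _ j _ _ => hcomm' i j _ _)
  have hMpow_single : ∀ (i : Fin n), Mpow (Finsupp.single i 1) = M i := by
    intro i
    have h2 : ((Finset.univ.erase i).noncommProd (fun j => M j ^ (Finsupp.single i 1) j)
        (fun _ hx _ hy hxy => hpair _ (Finset.mem_univ _) (Finset.mem_univ _) hxy)) = 1 := by
      refine (Finset.noncommProd_eq_pow_card _ _ _ 1 fun x hx => ?_).trans (one_pow _)
      rw [Finsupp.single_apply, if_neg, pow_zero]
      exact fun h => (Finset.mem_erase.mp hx).1 (h.symm) |>.elim
    have h0 := (Finset.mul_noncommProd_erase (Finset.univ) (Finset.mem_univ i)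
      (fun j => M j ^ (Finsupp.single i 1) j) (hpair _)).symm
    show Finset.univ.noncommProd (fun j => M j ^ (Finsupp.single i 1) j) (hpair _) = M i
    rw [h0, h2, mul_one, Finsupp.single_apply, if_pos rfl, pow_one]
  -- the evaluation map
  set bm := basisMonomials (Fin n) K with hbm
  set Lam : MvPolynomial (Fin n) K →ₗ[K] V :=
    (bm.constr K) (fun m => Mpow m e) with hL
  set Φ : MvPolynomial (Fin n) K →ₗ[K] Module.End K V :=
    (bm.constr K) (fun m => Mpow m) with hΦ
  have hbasis : ∀ m : Fin n →₀ ℕ, bm m = monomial m 1 := by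
    intro m
    rw [hbm]
    exact congrFun (coe_basisMonomials (Fin n) K) m
  have hLam_mono : ∀ m : Fin n →₀ ℕ, Lam (monomial m 1) = Mpow m e := by
    intro m
    rw [← hbasis, hL, Module.Basis.constr_basis]
  have hΦ_mono : ∀ m : Fin n →₀ ℕ, Φ (monomial m 1) = Mpow m := by
    intro m
    rw [← hbasis, hΦ, Module.Basis.constr_basis]
  have hmul : ∀ p q, Lam (p * q) = Φ p (Lam q) := by
    intro p q
    induction p using MvPolynomial.induction_on' with
    | monomial m a =>
      induction q using MvPolynomial.induction_on' with
      | monomial m' b =>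
        have h3 : (monomial m a : MvPolynomial (Fin n) K) * monomial m' b =
            (a * b) • monomial (m + m') 1 := by
          rw [monomial_mul, smul_monomial, smul_eq_mul, mul_one]
        have h4 : (monomial m a : MvPolynomial (Fin n) K) = a • monomial m 1 := by
          rw [smul_monomial, smul_eq_mul, mul_one]
        have h5 : (monomial m' b : MvPolynomial (Fin n) K) = b • monomial m' 1 := by
          rw [smul_monomial, smul_eq_mul, mul_one]
        rw [h3, h4, h5, map_smul, map_smul, map_smul, hLam_mono, hLam_mono, hΦ_mono,
          hMpow_add]
        simp [Module.End.mul_apply, map_smul, smul_smul]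
        rw [mul_comm]
      | add q1 q2 hq1 hq2 =>
        rw [mul_add, map_add, map_add, map_add, hq1, hq2]
    | add p1 p2 hp1 hp2 =>
      rw [add_mul, map_add, map_add, hp1, hp2, LinearMap.add_apply]
  refine ⟨Lam, Φ, ?_, ?_, hmul⟩
  · have h1 : (1 : MvPolynomial (Fin n) K) = monomial 0 1 := by simp
    rw [h1, hLam_mono, hMpow_zero, Module.End.one_apply]
  · intro i q
    have h1 : (X i : MvPolynomial (Fin n) K) = monomial (Finsupp.single i 1) 1 := rfl
    rw [show (X i : MvPolynomial (Fin n) K) * q = (monomial (Finsupp.single i 1) 1) * q from by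
      rw [← h1], hmul, hΦ_mono, hMpow_single]


/-- Let K be a field, R = K[x_1,...,x_n], and R_d the space of polynomials of
total degree at most d. Let F be a K-subspace of R_d and F⁺ = F + x_1 F + ... + x_n F.
If F = F⁺ ∩ R_d and dim_K(R_d/F) = dim_K(R_{d-1}/(F ∩ R_{d-1})), then R/⟨F⟩ is a
finite-dimensional K-vector space and dim_K(R/⟨F⟩) = dim_K(R_d/F). -/
theorem stmt_6 {K : Type*} [Field K] (n d : ℕ) (hd : 1 ≤ d)
    (F : Submodule K (MvPolynomial (Fin n) K))
    (hFd : F ≤ restrictTotalDegree (Fin n) K d)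
    [FiniteDimensional K F]
    (hfix : F = (F ⊔ ⨆ i : Fin n, F.map (LinearMap.mulLeft K (X i))) ⊓
      restrictTotalDegree (Fin n) K d)
    (hdim : Module.finrank K
        ((restrictTotalDegree (Fin n) K d) ⧸
          F.comap (restrictTotalDegree (Fin n) K d).subtype) =
      Module.finrank K
        ((restrictTotalDegree (Fin n) K (d - 1)) ⧸
          F.comap (restrictTotalDegree (Fin n) K (d - 1)).subtype)) :
    FiniteDimensional K (MvPolynomial (Fin n) K ⧸ Ideal.span (F : Set (MvPolynomial (Fin n) K))) ∧
    Module.finrank K (MvPolynomial (Fin n) K ⧸ Ideal.span (F : Set (MvPolynomial (Fin n) K))) =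
      Module.finrank K
        ((restrictTotalDegree (Fin n) K d) ⧸
          F.comap (restrictTotalDegree (Fin n) K d).subtype) := by
  classical
  set R := MvPolynomial (Fin n) K with hR
  set Rd := restrictTotalDegree (Fin n) K d with hRd
  set Rd1 := restrictTotalDegree (Fin n) K (d-1) with hRd1
  set Fplus := F ⊔ ⨆ i : Fin n, F.map (LinearMap.mulLeft K (X i)) with hFplus
  have hmono : Rd1 ≤ Rd := by
    intro p hp; rw [mem_restrictTotalDegree] at hp ⊢; omega
  have hmul : ∀ (i : Fin n) (p : R), p ∈ Rd1 → X i * p ∈ Rd := by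
    intro i p hp
    rw [mem_restrictTotalDegree] at hp ⊢
    calc (X i * p).totalDegree ≤ (X (R := K) i).totalDegree + p.totalDegree :=
          totalDegree_mul _ _
      _ ≤ 1 + (d-1) := by gcongr; exact le_of_eq (totalDegree_X i)
      _ = d := by omega
  have hXF : ∀ (i : Fin n) (f : R), f ∈ F → X i * f ∈ Fplus := by
    intro i f hf
    refine Submodule.mem_sup_right (Submodule.mem_iSup_of_mem i ?_)
    exact ⟨f, hf, rfl⟩
  have hFpRd : ∀ x : R, x ∈ Fplus → x ∈ Rd → x ∈ F := by
    intro x h1 h2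
    rw [hfix]; exact ⟨h1, h2⟩
  obtain ⟨N, W, hNle, hFW, hWN, hWRd, hsupN⟩ :=
    aux_main6 F Rd Rd1 hFd hmono hdim
  have hNW : IsCompl N W := hWN.symm
  set π : R →ₗ[K] N := N.linearProjOfIsCompl W hNW with hπ
  -- basic projection facts
  have hπN : ∀ x : N, π (x : R) = x := fun x => Submodule.linearProjOfIsCompl_apply_left hNW x
  have hπF : ∀ x : R, x ∈ F → π x = 0 := fun x hx =>
    Submodule.linearProjOfIsCompl_apply_right' hNW (hFW hx)
  have hk3 : ∀ p : R, p ∈ Rd → p - (π p : R) ∈ F := by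
    intro p hp
    have hw : p - (π p : R) ∈ W := by
      rw [← Submodule.linearProjOfIsCompl_apply_eq_zero_iff (q := W) hNW]
      show π (p - (π p : R)) = 0
      rw [map_sub, hπN, sub_self]
    exact hWRd (Submodule.mem_inf.mpr ⟨hw, sub_mem hp (hmono (hNle (π p).2))⟩)
  -- reduction
  have hred0 : ∀ (x y : R), x ∈ Rd → y ∈ Rd → x - y ∈ Fplus → π x = π y := by
    intro x y hx hy hxy
    have : x - y ∈ F := hFpRd _ hxy (sub_mem hx hy)
    have h0 : π (x - y) = 0 := hπF _ this
    rw [map_sub, sub_eq_zero] at h0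
    exact h0
  -- commuting operators
  set M : Fin n → Module.End K N := fun i =>
    π ∘ₗ (LinearMap.mulLeft K (X i)) ∘ₗ N.subtype with hM
  have hMapply : ∀ (i : Fin n) (ν : N), M i ν = π (X i * (ν : R)) := fun i ν => rfl
  have hcomm : ∀ i j, M i * M j = M j * M i := by
    intro i j
    refine LinearMap.ext fun ν => ?_
    show M i (M j ν) = M j (M i ν)
    rw [hMapply, hMapply, hMapply, hMapply]
    have hνRd1 : (ν : R) ∈ Rd1 := hNle ν.2
    have hXjν : X j * (ν : R) ∈ Rd := hmul j _ hνRd1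
    have hXiν : X i * (ν : R) ∈ Rd := hmul i _ hνRd1
    apply hred0
    · exact hmul i _ (hNle (π (X j * (ν:R))).2)
    · exact hmul j _ (hNle (π (X i * (ν:R))).2)
    · have e1 : X i * ((π (X j * (ν:R)) : R)) - X j * ((π (X i * (ν:R)) : R)) =
          X j * ((X i * (ν:R)) - (π (X i * (ν:R)) : R))
          - X i * ((X j * (ν:R)) - (π (X j * (ν:R)) : R)) := by ring
      rw [e1]
      exact sub_mem (hXF j _ (hk3 _ hXiν)) (hXF i _ (hk3 _ hXjν))
  obtain ⟨Lam, Φ, hLam_one, hLam_X, hLam_mul⟩ := aux_eval6 n M hcomm (π 1)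
  -- reduction lemma
  have hred : ∀ (i : Fin n) (q : R), q ∈ Rd1 → π (X i * ((π q : R))) = π (X i * q) := by
    intro i q hq
    apply hred0
    · exact hmul i _ (hNle (π q).2)
    · exact hmul i _ hq
    · have e1 : X i * (π q : R) - X i * q = -(X i * (q - (π q : R))) := by ring
      rw [e1]
      exact neg_mem (hXF i _ (hk3 q (hmono hq)))
  have hbase : Lam ((monomial (0 : Fin n →₀ ℕ)) (1:K)) = π ((monomial (0 : Fin n →₀ ℕ)) (1:K)) := by
    have h1 : (monomial (0 : Fin n →₀ ℕ)) (1:K) = (1 : R) := by simp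
    rw [h1, hLam_one]
  -- Lam agrees with π on monomials of degree ≤ d
  have hLmono : ∀ (k : ℕ) (m : Fin n →₀ ℕ), (m.sum fun _ e => e) ≤ k →
      (m.sum fun _ e => e) ≤ d → Lam ((monomial m) (1:K)) = π ((monomial m) (1:K)) := by
    intro k
    induction k with
    | zero =>
      intro m hm _
      have hm0 : m = 0 := by
        ext j
        by_cases hj : j ∈ m.support
        · have h1 : m j ≤ m.sum fun _ e => e :=
            Finset.single_le_sum (fun a _ => Nat.zero_le (m a)) hj
          have h2 : (0 : Fin n →₀ ℕ) j = 0 := rfl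
          omega
        · simpa [Finsupp.notMem_support_iff] using hj
      subst hm0
      exact hbase
    | succ k ih =>
      intro m hm hmd
      by_cases hm0 : m = 0
      · subst hm0; exact hbase
      · obtain ⟨i, hi⟩ : ∃ i, m i ≠ 0 := by
          by_contra h
          push_neg at h
          exact hm0 (Finsupp.ext fun j => h j)
        set m' := m - Finsupp.single i 1 with hm'
        have hmm : m' + Finsupp.single i 1 = m := by
          ext j
          by_cases hji : j = i
          · subst hji
            have : 1 ≤ m j := Nat.one_le_iff_ne_zero.mpr hi
            simp [hm', Finsupp.single_apply]
            omega
          · simp [hm', Finsupp.single_apply, Ne.symm hji, hji]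
        have hsum : (m.sum fun _ e => e) = (m'.sum fun _ e => e) + 1 := by
          rw [← hmm, Finsupp.sum_add_index' (fun _ => rfl) (fun _ _ _ => rfl)]
          simp [Finsupp.sum_single_index]
        have hmono' : (monomial m) (1:K) = X i * (monomial m') 1 := by
          rw [← hmm, monomial_add_single, pow_one, mul_comm]
        have hm'le : (m'.sum fun _ e => e) ≤ k := by omega
        have hm'd : (m'.sum fun _ e => e) ≤ d := by omega
        rw [hmono', hLam_X, ih m' hm'le hm'd, hMapply]
        apply hred
        rw [mem_restrictTotalDegree, totalDegree_monomial m' (one_ne_zero)]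
        omega
  -- Lam agrees with π on Rd
  have hLamRd : ∀ p : R, p ∈ Rd → Lam p = π p := by
    intro p hp
    have hps : ∀ v ∈ p.support, (v.sum fun _ e => e) ≤ d := fun v hv =>
      le_trans (le_totalDegree hv) ((mem_restrictTotalDegree _ _ _).mp hp)
    conv_lhs => rw [p.as_sum]
    conv_rhs => rw [p.as_sum]
    rw [map_sum, map_sum]
    refine Finset.sum_congr rfl fun v hv => ?_
    have hsm : (monomial v) (coeff v p) = (coeff v p) • ((monomial v) (1:K)) := by
      rw [smul_monomial, smul_eq_mul, mul_one]
    rw [hsm, map_smul, map_smul, hLmono d v (hps v hv) (hps v hv)]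
  -- Lam vanishes on the ideal generated by F
  have hLamJ : ∀ x ∈ Ideal.span (F : Set R), Lam x = 0 := by
    intro x hx
    refine Submodule.span_induction ?_ ?_ ?_ ?_ hx
    · intro f hf
      rw [hLamRd f (hFd hf)]
      exact hπF f hf
    · exact map_zero _
    · intro a b _ _ ha hb
      rw [map_add, ha, hb, add_zero]
    · intro r a _ ha
      rw [smul_eq_mul, hLam_mul r a, ha, map_zero]
  -- the ideal together with Rd spans everything
  have hsupJ : ∀ p : R, p ∈ (Ideal.span (F : Set R)).restrictScalars K ⊔ Rd := by
    intro p
    induction p using MvPolynomial.induction_on with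
    | C a =>
      refine Submodule.mem_sup_right ?_
      rw [mem_restrictTotalDegree, totalDegree_C]
      omega
    | add p q hp hq => exact add_mem hp hq
    | mul_X p i hp =>
      obtain ⟨a, ha, b, hb, rfl⟩ := Submodule.mem_sup.mp hp
      rw [add_mul]
      refine add_mem (Submodule.mem_sup_left ?_) ?_
      · exact Ideal.mul_mem_right _ _ ha
      · rw [← hsupN] at hb
        obtain ⟨f, hf, ν, hν, rfl⟩ := Submodule.mem_sup.mp hb
        rw [add_mul]
        refine add_mem (Submodule.mem_sup_left ?_) (Submodule.mem_sup_right ?_)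
        · exact Ideal.mul_mem_right _ _ (Ideal.subset_span hf)
        · rw [mul_comm]
          exact hmul i ν (hNle hν)
  -- conclusion
  set J := Ideal.span (F : Set R) with hJ
  have hJRdF : ∀ x : R, x ∈ J → x ∈ Rd → x ∈ F := by
    intro x hxJ hxRd
    have h2 : π x = 0 := by rw [← hLamRd x hxRd]; exact hLamJ x hxJ
    have h3 := hk3 x hxRd
    rwa [h2, Submodule.coe_zero, sub_zero] at h3
  set g : Rd →ₗ[K] (R ⧸ J) := (Ideal.Quotient.mkₐ K J).toLinearMap.comp Rd.subtype with hg
  have hgapp : ∀ x : Rd, g x = Ideal.Quotient.mk J (x : R) := fun x => rfl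
  have hgker : LinearMap.ker g = F.comap Rd.subtype := by
    ext x
    simp only [LinearMap.mem_ker, Submodule.mem_comap]
    rw [hgapp, Ideal.Quotient.eq_zero_iff_mem]
    constructor
    · intro hx
      exact hJRdF _ hx x.2
    · intro hx
      exact Ideal.subset_span hx
  have hgsur : Function.Surjective g := by
    intro y
    obtain ⟨p, rfl⟩ := Ideal.Quotient.mk_surjective y
    obtain ⟨a, ha, b, hb, rfl⟩ := Submodule.mem_sup.mp (hsupJ p)
    refine ⟨⟨b, hb⟩, ?_⟩
    rw [hgapp]
    have ha0 : Ideal.Quotient.mk J a = 0 := (Ideal.Quotient.eq_zero_iff_mem).mpr ha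
    rw [map_add, ha0, zero_add]
  haveI hfin : FiniteDimensional K (R ⧸ J) := Module.Finite.of_surjective g hgsur
  refine ⟨hfin, ?_⟩
  have e3 := (LinearMap.quotKerEquivOfSurjective g hgsur).finrank_eq
  rw [hgker] at e3
  exact e3.symm
end

section
/- Let G be a finite simple graph with vertex set {1,...,n} that is not 3-colorable, and let F_G be the set of polynomials in F_2[x_1,...,x_n] consisting of x_i^3 + 1 for each vertex i and x_i^2 + x_i x_j + x_j^2 for each edge {i,j} of G. Then the constant polynomial 1 lies in the F_2-linear span of the set of polynomials { x^a f : f in F_G, a in N^n with |a| <= 2n }, i.e., there exist polynomials b_f in F_2[x_1,...,x_n] of total degree at most 2n with 1 = \sum_{f in F_G} b_f f. -/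
open MvPolynomial

namespace Stmt7Aux

noncomputable section

variable {n : ℕ}

abbrev Poly (n : ℕ) := MvPolynomial (Fin n) (ZMod 2)

/-- exponent reduction mod 3 -/
def red (a : Fin n →₀ ℕ) : Fin n →₀ ℕ := a.mapRange (· % 3) (Nat.zero_mod 3)

@[simp] lemma red_apply (a : Fin n →₀ ℕ) (i : Fin n) : red a i = a i % 3 := rfl

lemma red_add_single (a : Fin n →₀ ℕ) (i : Fin n) :
    red (a + Finsupp.single i 3) = red a := by
  ext j
  simp only [red_apply, Finsupp.add_apply, Finsupp.single_apply]
  by_cases hj : i = j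
  · subst hj; simp [Nat.add_mod_right]
  · simp [hj]

lemma red_eq_self (a : Fin n →₀ ℕ) (h : ∀ i, a i < 3) : red a = a := by
  ext j; simp [Nat.mod_eq_of_lt (h j)]

lemma red_degree_le (a : Fin n →₀ ℕ) : (red a).sum (fun _ k => k) ≤ 2 * n := by
  rw [Finsupp.sum_fintype _ _ (fun _ => rfl)]
  calc ∑ i : Fin n, red a i ≤ ∑ _i : Fin n, 2 := by
        apply Finset.sum_le_sum
        intro i _
        have : a i % 3 < 3 := Nat.mod_lt _ (by norm_num)
        rw [red_apply]
        omega
    _ = 2 * n := by simp [Finset.sum_const, mul_comm]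

/-- Normal form: reduce all exponents mod 3. -/
def NF (p : Poly n) : Poly n := ∑ α ∈ p.support, monomial (red α) (coeff α p)

lemma NF_eq_sum_subset (p : Poly n) (s : Finset (Fin n →₀ ℕ)) (hs : p.support ⊆ s) :
    NF p = ∑ α ∈ s, monomial (red α) (coeff α p) := by
  rw [NF]
  refine Finset.sum_subset hs fun α _ hα => ?_
  rw [notMem_support_iff.mp hα, map_zero]

@[simp] lemma NF_zero : NF (0 : Poly n) = 0 := by simp [NF]

lemma NF_add (p q : Poly n) : NF (p + q) = NF p + NF q := by
  rw [NF_eq_sum_subset (p + q) (p.support ∪ q.support) support_add,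
    NF_eq_sum_subset p (p.support ∪ q.support) Finset.subset_union_left,
    NF_eq_sum_subset q (p.support ∪ q.support) Finset.subset_union_right,
    ← Finset.sum_add_distrib]
  refine Finset.sum_congr rfl fun α _ => ?_
  rw [coeff_add, map_add]

lemma NF_sum {ι : Type*} (s : Finset ι) (f : ι → Poly n) :
    NF (∑ i ∈ s, f i) = ∑ i ∈ s, NF (f i) := by
  classical
  induction s using Finset.induction with
  | empty => simp
  | insert a s h ih => rw [Finset.sum_insert h, Finset.sum_insert h, NF_add, ih]

lemma NF_monomial (α : Fin n →₀ ℕ) (c : ZMod 2) :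
    NF (monomial α c) = monomial (red α) c := by
  by_cases hc : c = 0
  · simp [hc]
  · rw [NF, support_monomial, if_neg hc, Finset.sum_singleton, coeff_monomial, if_pos rfl]

lemma NF_totalDegree (p : Poly n) : (NF p).totalDegree ≤ 2 * n := by
  refine (totalDegree_finset_sum _ _).trans (Finset.sup_le fun α _ => ?_)
  exact (totalDegree_monomial_le _ _).trans (red_degree_le α)

/-- the vertex generator -/
def vg (i : Fin n) : Poly n := X i ^ 3 + 1

def deg (a : Fin n →₀ ℕ) : ℕ := a.sum fun _ k => k

lemma coord_le_deg (a : Fin n →₀ ℕ) (i : Fin n) : a i ≤ deg a := by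
  by_cases hi : i ∈ a.support
  · exact Finset.single_le_sum (f := fun j => a j) (fun _ _ => Nat.zero_le _) hi
  · rw [Finsupp.notMem_support_iff.mp hi]; exact Nat.zero_le _

lemma charTwoPoly (p : Poly n) : p + p = 0 := CharTwo.add_self_eq_zero p

lemma monomial_red (N : ℕ) : ∀ (α : Fin n →₀ ℕ) (c : ZMod 2),
    deg α ≤ N →
    ∃ a : Fin n → Poly n,
      monomial α c = monomial (red α) c + ∑ i, a i * vg i ∧
      ∀ i, (a i).totalDegree ≤ deg α - 3 := by
  induction N with
  | zero =>
    intro α c hα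
    refine ⟨0, ?_, by simp⟩
    have : red α = α := red_eq_self α fun i => by have := coord_le_deg α i; omega
    simp [this]
  | succ N ih =>
    intro α c hα
    by_cases hsmall : ∀ i, α i < 3
    · refine ⟨0, by simp [red_eq_self α hsmall], by simp⟩
    · push_neg at hsmall
      obtain ⟨i, hi⟩ := hsmall
      set β := α - Finsupp.single i 3 with hβ
      have hαβ : α = β + Finsupp.single i 3 := by
        ext j
        simp only [hβ, Finsupp.add_apply, Finsupp.coe_tsub, Pi.sub_apply,
          Finsupp.single_apply]
        by_cases hj : i = j
        · subst hj; simp; omega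
        · simp [hj]
      have hsum : deg β + 3 = deg α := by
        rw [deg, deg, hαβ, Finsupp.sum_add_index (by simp) (by intros; rfl)]
        simp [Finsupp.sum_single_index]
      have hβN : deg β ≤ N := by omega
      obtain ⟨a', ha', hd'⟩ := ih β c hβN
      have hred : red α = red β := by rw [hαβ, red_add_single]
      have key : monomial α c = monomial β c * vg i + monomial β c := by
        rw [vg, mul_add, mul_one, X_pow_eq_monomial, monomial_mul, mul_one,
          ← hαβ, add_assoc, charTwoPoly, add_zero]
      have hsumif : ∑ j, (if j = i then monomial β c else 0) * vg j
          = monomial β c * vg i := by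
        rw [Finset.sum_eq_single i (fun b _ hb => by rw [if_neg hb, zero_mul])
          (fun h => absurd (Finset.mem_univ i) h), if_pos rfl]
      refine ⟨fun j => a' j + if j = i then monomial β c else 0, ?_, ?_⟩
      · calc monomial α c = monomial β c * vg i + monomial β c := key
          _ = monomial β c * vg i + (monomial (red β) c + ∑ j, a' j * vg j) := by
              rw [← ha']
          _ = monomial (red α) c +
              (∑ j, a' j * vg j +
                ∑ j, (if j = i then monomial β c else 0) * vg j) := by
              rw [hsumif, hred]; ring
          _ = monomial (red α) c +
              ∑ j, (a' j + if j = i then monomial β c else 0) * vg j := by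
              rw [← Finset.sum_add_distrib]
              congr 1
              exact Finset.sum_congr rfl fun j _ => (add_mul _ _ _).symm
      · intro j
        refine (totalDegree_add _ _).trans (max_le ?_ ?_)
        · exact (hd' j).trans (by omega)
        · by_cases hj : j = i
          · rw [if_pos hj]
            refine (totalDegree_monomial_le _ _).trans ?_
            show deg β ≤ deg α - 3
            omega
          · rw [if_neg hj]; simp

lemma red_poly (p : Poly n) :
    ∃ a : Fin n → Poly n,
      p = NF p + ∑ i, a i * vg i ∧
      ∀ i, (a i).totalDegree ≤ p.totalDegree - 3 := by
  choose A hA hAd using fun (α : Fin n →₀ ℕ) (c : ZMod 2) =>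
    monomial_red (deg α) α c le_rfl
  refine ⟨fun i => ∑ α ∈ p.support, A α (coeff α p) i, ?_, ?_⟩
  · conv_lhs => rw [p.as_sum]
    rw [NF]
    calc ∑ α ∈ p.support, monomial α (coeff α p)
        = ∑ α ∈ p.support,
            (monomial (red α) (coeff α p) + ∑ i, A α (coeff α p) i * vg i) :=
          Finset.sum_congr rfl fun α _ => hA α (coeff α p)
      _ = ∑ α ∈ p.support, monomial (red α) (coeff α p) +
            ∑ α ∈ p.support, ∑ i, A α (coeff α p) i * vg i := Finset.sum_add_distrib
      _ = _ := by
          congr 1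
          rw [Finset.sum_comm]
          exact Finset.sum_congr rfl fun i _ => (Finset.sum_mul _ _ _).symm
  · intro i
    refine (totalDegree_finset_sum _ _).trans (Finset.sup_le fun α hα => ?_)
    refine (hAd α (coeff α p) i).trans (Nat.sub_le_sub_right ?_ 3)
    exact le_totalDegree hα

lemma NF_mul_vg (q : Poly n) (i : Fin n) : NF (q * vg i) = 0 := by
  conv_lhs => rw [q.as_sum, Finset.sum_mul, NF_sum]
  refine Finset.sum_eq_zero fun α _ => ?_
  have : monomial α (coeff α q) * vg i
      = monomial (α + Finsupp.single i 3) (coeff α q) + monomial α (coeff α q) := by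
    rw [vg, mul_add, mul_one, X_pow_eq_monomial, monomial_mul, mul_one]
  rw [this, NF_add, NF_monomial, NF_monomial, red_add_single, charTwoPoly]

lemma NF_vanish (p : Poly n) (hp : p ∈ Ideal.span (Set.range (vg (n := n)))) :
    NF p = 0 := by
  obtain ⟨q, hq⟩ := Ideal.mem_span_range_iff_exists_fun.mp hp
  rw [← hq, NF_sum]
  exact Finset.sum_eq_zero fun i _ => NF_mul_vg (q i) i

def gen (G : SimpleGraph (Fin n)) [DecidableRel G.Adj] : Fin n ⊕ Fin n × Fin n → Poly n
  | .inl i => vg i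
  | .inr (i, j) => if G.Adj i j then X i ^ 2 + X i * X j + X j ^ 2 else 0

set_option synthInstance.maxHeartbeats 1000000 in
set_option maxHeartbeats 2000000 in
lemma one_mem (G : SimpleGraph (Fin n)) [DecidableRel G.Adj] (h : ¬ G.Colorable 3) :
    (1 : Poly n) ∈ Ideal.span (Set.range (gen G)) := by
  classical
  by_contra hne
  have hne' : Ideal.span (Set.range (gen G)) ≠ ⊤ := fun ht => hne (ht ▸ Submodule.mem_top)
  obtain ⟨m, hm, hle⟩ := Ideal.exists_le_maximal _ hne'
  have h2 : (2 : Poly n ⧸ m) = 0 := by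
    have h2' : ((2 : Poly n)) = 0 := CharTwo.two_eq_zero
    calc (2 : Poly n ⧸ m) = Ideal.Quotient.mk m 2 := by rw [map_ofNat]
      _ = 0 := by rw [h2', map_zero]
  have hv : ∀ i, Ideal.Quotient.mk m (X i) ^ 3 + 1 = 0 := by
    intro i
    have hmem : vg i ∈ m := hle (Ideal.subset_span ⟨Sum.inl i, rfl⟩)
    have h0 := Ideal.Quotient.eq_zero_iff_mem.mpr hmem
    rw [vg, map_add, map_pow, map_one] at h0
    exact h0
  have he : ∀ i j, G.Adj i j →
      Ideal.Quotient.mk m (X i) ^ 2 +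
        Ideal.Quotient.mk m (X i) * Ideal.Quotient.mk m (X j) +
        Ideal.Quotient.mk m (X j) ^ 2 = 0 := by
    intro i j hij
    have hmem : gen G (Sum.inr (i, j)) ∈ m := hle (Ideal.subset_span ⟨Sum.inr (i, j), rfl⟩)
    have h0 := Ideal.Quotient.eq_zero_iff_mem.mpr hmem
    rw [show gen G (Sum.inr (i, j)) = X i ^ 2 + X i * X j + X j ^ 2 from by
      simp [gen, if_pos hij]] at h0
    rw [map_add, map_add, map_pow, map_pow, map_mul] at h0
    exact h0
  set q : Polynomial (Poly n ⧸ m) := Polynomial.X ^ 3 + 1 with hq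
  have hqdeg : q.natDegree = 3 := by
    rw [hq, ← Polynomial.C_1, Polynomial.natDegree_X_pow_add_C]
  have hq0 : q ≠ 0 := fun h0 => by simp [h0] at hqdeg
  have hroot : ∀ i, Ideal.Quotient.mk m (X i) ∈ q.roots.toFinset := by
    intro i
    rw [Multiset.mem_toFinset, Polynomial.mem_roots hq0]
    show Polynomial.IsRoot q (Ideal.Quotient.mk m (X i))
    rw [Polynomial.IsRoot, hq]
    simpa using hv i
  have hcol : G.Colorable 3 := by
    have C : G.Coloring ↥(q.roots.toFinset) := by
      refine SimpleGraph.Coloring.mk (fun i => ⟨Ideal.Quotient.mk m (X i), hroot i⟩) ?_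
      intro i j hij hEq
      have heq : Ideal.Quotient.mk m (X i) = Ideal.Quotient.mk m (X j) :=
        Subtype.ext_iff.mp hEq
      have h3 := he i j hij
      rw [heq] at h3
      have hr : ∀ t : Poly n ⧸ m, t ^ 2 + t * t + t ^ 2 = 2 * (t * t) + t ^ 2 :=
        fun t => by ring
      rw [hr, h2, zero_mul, zero_add] at h3
      have ht0 : Ideal.Quotient.mk m (X j) = 0 :=
        pow_eq_zero_iff (n := 2) (by norm_num) |>.mp h3
      have hcontra := hv j
      rw [ht0, zero_pow (by norm_num), zero_add] at hcontra
      exact one_ne_zero hcontra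
    have := C.colorable
    refine this.mono ?_
    calc Fintype.card ↥(q.roots.toFinset) = q.roots.toFinset.card := Fintype.card_coe _
      _ ≤ Multiset.card q.roots := Multiset.toFinset_card_le _
      _ ≤ q.natDegree := Polynomial.card_roots' q
      _ = 3 := hqdeg
  exact h hcol

end

end Stmt7Aux

open Stmt7Aux

/-- Let G be a finite simple graph on vertices {1,...,n} that is not
3-colorable, and let F_G ⊆ 𝔽₂[x_1,...,x_n] consist of `x_i^3 + 1` for each vertex i and
`x_i^2 + x_i x_j + x_j^2` for each edge {i,j}. Then 1 lies in the 𝔽₂-linear span of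
`{x^a f : f ∈ F_G, |a| ≤ 2n}`, i.e. there exist polynomials b_f of total degree at most
2n with `1 = ∑_{f ∈ F_G} b_f f`. -/
theorem stmt_7 (n : ℕ) (G : SimpleGraph (Fin n)) [DecidableRel G.Adj]
    (h : ¬ G.Colorable 3) :
    ∃ (a : Fin n → MvPolynomial (Fin n) (ZMod 2))
      (b : Fin n → Fin n → MvPolynomial (Fin n) (ZMod 2)),
      (∀ i, (a i).totalDegree ≤ 2 * n) ∧
      (∀ i j, (b i j).totalDegree ≤ 2 * n) ∧
      1 = ∑ i : Fin n, a i * (X i ^ 3 + 1) +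
          ∑ i : Fin n, ∑ j : Fin n,
            if G.Adj i j then b i j * (X i ^ 2 + X i * X j + X j ^ 2) else 0 := by
  classical
  obtain ⟨c, hc⟩ := Ideal.mem_span_range_iff_exists_fun.mp (one_mem G h)
  set f : Fin n → Fin n → Poly n := fun i j => X i ^ 2 + X i * X j + X j ^ 2 with hf
  set b : Fin n → Fin n → Poly n := fun i j => NF (c (Sum.inr (i, j))) with hb
  set S : Poly n := ∑ i, ∑ j, (if G.Adj i j then b i j * f i j else 0) with hS
  have hbdeg : ∀ i j, (b i j).totalDegree ≤ 2 * n := fun i j => NF_totalDegree _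
  have hfdeg : ∀ i j, (f i j).totalDegree ≤ 2 := by
    intro i j
    rw [hf]
    refine (totalDegree_add _ _).trans (max_le ((totalDegree_add _ _).trans
      (max_le ?_ ?_)) ?_)
    · rw [totalDegree_X_pow]
    · exact (totalDegree_mul _ _).trans (by rw [totalDegree_X, totalDegree_X])
    · rw [totalDegree_X_pow]
  have hSdeg : S.totalDegree ≤ 2 * n + 2 := by
    rw [hS]
    refine (totalDegree_finset_sum _ _).trans (Finset.sup_le fun i _ => ?_)
    refine (totalDegree_finset_sum _ _).trans (Finset.sup_le fun j _ => ?_)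
    split
    · exact (totalDegree_mul _ _).trans (add_le_add (hbdeg i j) (hfdeg i j))
    · simp
  have hgdeg : (1 + S).totalDegree ≤ 2 * n + 2 :=
    (totalDegree_add _ _).trans (max_le (by simp) hSdeg)
  have hgV : (1 + S : Poly n) ∈ Ideal.span (Set.range (vg (n := n))) := by
    have hsplit : (1 + S : Poly n) = ∑ i, c (Sum.inl i) * vg i +
        ∑ i, ∑ j, (if G.Adj i j then (c (Sum.inr (i, j)) + b i j) * f i j else 0) := by
      conv_lhs => rw [← hc]
      rw [Fintype.sum_sum_type, Fintype.sum_prod_type, add_assoc]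
      congr 1
      rw [hS, ← Finset.sum_add_distrib]
      refine Finset.sum_congr rfl fun i _ => ?_
      rw [← Finset.sum_add_distrib]
      refine Finset.sum_congr rfl fun j _ => ?_
      show c (Sum.inr (i, j)) * gen G (Sum.inr (i, j)) + _ = _
      rw [show gen G (Sum.inr (i, j)) = if G.Adj i j then f i j else 0 from rfl]
      split
      · rw [add_mul]
      · rw [mul_zero, add_zero]
    rw [hsplit]
    refine Ideal.add_mem _ (Ideal.sum_mem _ fun i _ =>
      Ideal.mul_mem_left _ _ (Ideal.subset_span ⟨i, rfl⟩)) ?_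
    refine Ideal.sum_mem _ fun i _ => Ideal.sum_mem _ fun j _ => ?_
    split
    · obtain ⟨a', ha', -⟩ := red_poly (c (Sum.inr (i, j)))
      have hsum : c (Sum.inr (i, j)) + b i j = ∑ k, a' k * vg k := by
        rw [hb]
        calc c (Sum.inr (i, j)) + NF (c (Sum.inr (i, j)))
            = (NF (c (Sum.inr (i, j))) + ∑ k, a' k * vg k) + NF (c (Sum.inr (i, j))) := by
              rw [← ha']
          _ = ∑ k, a' k * vg k +
              (NF (c (Sum.inr (i, j))) + NF (c (Sum.inr (i, j)))) := by ring
          _ = ∑ k, a' k * vg k := by rw [charTwoPoly, add_zero]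
      rw [hsum, Finset.sum_mul]
      refine Ideal.sum_mem _ fun k _ => ?_
      exact Ideal.mul_mem_right _ _ (Ideal.mul_mem_left _ _ (Ideal.subset_span ⟨k, rfl⟩))
    · exact Ideal.zero_mem _
  obtain ⟨a, ha, had⟩ := red_poly (1 + S)
  have hNF0 : NF (1 + S) = 0 := NF_vanish _ hgV
  refine ⟨a, b, ?_, hbdeg, ?_⟩
  · intro i
    refine (had i).trans ?_
    omega
  · calc (1 : Poly n) = (1 + S) + S := by rw [add_assoc, charTwoPoly, add_zero]
      _ = (NF (1 + S) + ∑ i, a i * vg i) + S := by rw [← ha]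
      _ = ∑ i, a i * (X i ^ 3 + 1) +
          ∑ i : Fin n, ∑ j : Fin n,
            (if G.Adj i j then b i j * (X i ^ 2 + X i * X j + X j ^ 2) else 0) := by
          rw [hNF0, zero_add, hS]
          rfl
end

section
/- Let G be a finite simple graph with vertex set {1,...,n} that contains a 4-clique as a subgraph or contains an odd wheel as a subgraph (i.e., there is a vertex v and an odd cycle of G not through v such that v is adjacent to every vertex of the cycle). Let F_G be the set of polynomials in F_2[x_1,...,x_n] consisting of x_i^3 + 1 for each vertex i and x_i^2 + x_i x_j + x_j^2 for each edge {i,j} of G. Then the constant polynomial 1 lies in the F_2-linear span of the set { f : f in F_G } \cup { x_i f : f in F_G, 1 <= i <= n }; that is, there is a degree-one Nullstellensatz certificate 1 = \sum_{f in F_G} b_f f with each b_f of total degree at most 1. -/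
open MvPolynomial

section Aux

variable (n : ℕ) (G : SimpleGraph (Fin n)) [DecidableRel G.Adj]

def Cert (q : MvPolynomial (Fin n) (ZMod 2)) : Prop :=
  ∃ (a : Fin n → MvPolynomial (Fin n) (ZMod 2))
    (b : Fin n → Fin n → MvPolynomial (Fin n) (ZMod 2)),
    (∀ i, (a i).totalDegree ≤ 1) ∧
    (∀ i j, (b i j).totalDegree ≤ 1) ∧
    q = ∑ i : Fin n, a i * (X i ^ 3 + 1) +
        ∑ i : Fin n, ∑ j : Fin n,
          if G.Adj i j then b i j * (X i ^ 2 + X i * X j + X j ^ 2) else 0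

variable {n G}

lemma cert_congr {q q' : MvPolynomial (Fin n) (ZMod 2)} (h : q = q') (hq : Cert n G q) :
    Cert n G q' := h ▸ hq

lemma cert_zero : Cert n G 0 := by
  refine ⟨0, 0, by simp, by simp, by simp⟩

lemma cert_add {q q' : MvPolynomial (Fin n) (ZMod 2)} (hq : Cert n G q) (hq' : Cert n G q') :
    Cert n G (q + q') := by
  obtain ⟨a, b, ha, hb, he⟩ := hq
  obtain ⟨a', b', ha', hb', he'⟩ := hq'
  refine ⟨a + a', b + b', fun i => ?_, fun i j => ?_, ?_⟩
  · exact le_trans (totalDegree_add _ _) (max_le (ha i) (ha' i))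
  · exact le_trans (totalDegree_add _ _) (max_le (hb i j) (hb' i j))
  · have h1 : ∀ i : Fin n, (a + a') i * (X i ^ 3 + 1)
        = a i * (X i ^ 3 + 1) + a' i * (X i ^ 3 + 1) := by
      intro i; simp [add_mul]
    have h2 : ∀ i j : Fin n,
        (if G.Adj i j then (b + b') i j * (X i ^ 2 + X i * X j + X j ^ 2) else 0)
        = (if G.Adj i j then b i j * (X i ^ 2 + X i * X j + X j ^ 2) else 0)
          + (if G.Adj i j then b' i j * (X i ^ 2 + X i * X j + X j ^ 2) else 0) := by
      intro i j; split <;> simp [add_mul]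
    rw [he, he']
    simp only [h1, h2, Finset.sum_add_distrib]
    ring

lemma cert_vertex (i : Fin n) : Cert n G (X i ^ 3 + 1) := by
  refine ⟨fun k => if k = i then 1 else 0, 0, fun k => ?_, by simp, ?_⟩
  · dsimp only; split <;> simp
  · simp [ite_mul, Finset.sum_ite_eq']

lemma cert_edge {i j : Fin n} (hij : G.Adj i j) (c : Fin n) :
    Cert n G (X c * (X i ^ 2 + X i * X j + X j ^ 2)) := by
  refine ⟨0, fun p q => if p = i ∧ q = j then X c else 0, by simp, fun p q => ?_, ?_⟩
  · dsimp only; split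
    · exact le_of_eq (totalDegree_X c)
    · simp
  · have key : ∀ p q : Fin n,
        (if G.Adj p q then (if p = i ∧ q = j then (X c : MvPolynomial (Fin n) (ZMod 2)) else 0)
            * (X p ^ 2 + X p * X q + X q ^ 2) else 0)
        = if p = i then (if q = j then X c * (X i ^ 2 + X i * X j + X j ^ 2) else 0) else 0 := by
      intro p q
      by_cases hpq : p = i ∧ q = j
      · obtain ⟨rfl, rfl⟩ := hpq; simp [hij]
      · rw [if_neg hpq]
        rcases em (p = i) with rfl | hp
        · rcases em (q = j) with rfl | hq
          · exact absurd ⟨rfl, rfl⟩ hpq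
          · simp [hq]
        · simp [hp]
    simp only [key]
    simp [Finset.sum_ite_eq']

lemma two_eq_zero' : (2 : MvPolynomial (Fin n) (ZMod 2)) = 0 := by
  have : ((2 : ZMod 2)) = 0 := rfl
  rw [← map_ofNat (C : ZMod 2 →+* MvPolynomial (Fin n) (ZMod 2)) 2, this, map_zero]

lemma cert_dart {v a b : Fin n} (hva : G.Adj v a) (hvb : G.Adj v b) (hab : G.Adj a b) :
    Cert n G (X v ^ 2 * (X a + X b) + 1) := by
  have h := cert_add (cert_add (cert_add (cert_edge hva b) (cert_edge hvb a))
    (cert_edge hab a)) (cert_vertex a)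
  refine cert_congr ?_ h
  have hID : X b * (X v ^ 2 + X v * X a + X a ^ 2) + X a * (X v ^ 2 + X v * X b + X b ^ 2)
      + X a * (X a ^ 2 + X a * X b + X b ^ 2) + (X a ^ 3 + 1)
      = X v ^ 2 * (X a + X b) + 1
        + 2 * (X v * X a * X b + X a ^ 2 * X b + X a * X b ^ 2 + X a ^ 3
          : MvPolynomial (Fin n) (ZMod 2)) := by
    ring
  rw [hID, two_eq_zero']; ring

lemma nil_helper (v y : Fin n) :
    (0 : MvPolynomial (Fin n) (ZMod 2))
      = X v ^ 2 * (X y + X y) + C ((((SimpleGraph.Walk.nil : G.Walk y y).length : ℕ)) : ZMod 2) := by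
  have h1 : (X y + X y : MvPolynomial (Fin n) (ZMod 2)) = 2 * X y := by ring
  simp [h1, two_eq_zero']

lemma cert_walk {v u w : Fin n} (p : G.Walk u w) (hadj : ∀ x ∈ p.support, G.Adj v x) :
    Cert n G (X v ^ 2 * (X u + X w) + C ((p.length : ZMod 2))) := by
  induction p with
  | nil => exact cert_congr (nil_helper v _) cert_zero
  | @cons u x w hux p ih =>
      have hvu : G.Adj v u := hadj u (by simp)
      have hvx : G.Adj v x := hadj x (by simp [SimpleGraph.Walk.support_cons,
        SimpleGraph.Walk.start_mem_support])
      have hrest : ∀ y ∈ p.support, G.Adj v y := fun y hy =>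
        hadj y (by simp [SimpleGraph.Walk.support_cons, hy])
      have h := cert_add (cert_dart hvu hvx hux) (ih hrest)
      refine cert_congr ?_ h
      have hcast : (((p.length + 1 : ℕ)) : ZMod 2) = (p.length : ZMod 2) + 1 := by push_cast; ring
      rw [SimpleGraph.Walk.length_cons, hcast, C_add, C_1]
      have hID : X v ^ 2 * (X u + X x) + 1 + (X v ^ 2 * (X x + X w) + C ((p.length : ZMod 2)))
          = X v ^ 2 * (X u + X w) + (C ((p.length : ZMod 2)) + 1)
            + 2 * (X v ^ 2 * X x : MvPolynomial (Fin n) (ZMod 2)) := by ring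
      rw [hID, two_eq_zero']; ring

lemma cert_one {v u : Fin n} (c : G.Walk u u) (hodd : Odd c.length)
    (hadj : ∀ x ∈ c.support, G.Adj v x) : Cert n G 1 := by
  have h := cert_walk c hadj
  refine cert_congr ?_ h
  obtain ⟨k, hk⟩ := hodd
  have hcast : ((c.length : ZMod 2)) = 1 := by
    rw [hk]; push_cast
    have : (2 : ZMod 2) = 0 := rfl
    rw [this]; ring
  have : X v ^ 2 * (X u + X u) = 2 * (X v ^ 2 * X u : MvPolynomial (Fin n) (ZMod 2)) := by ring
  rw [hcast, this, two_eq_zero', C_1]; ring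

end Aux

/-- Let G be a finite simple graph on {1,...,n} containing a 4-clique or an
odd wheel (a vertex v adjacent to every vertex of an odd cycle not through v). With F_G
the 3-coloring encoding over 𝔽₂ (`x_i^3 + 1` per vertex, `x_i^2 + x_i x_j + x_j^2` per
edge), there is a degree-one Nullstellensatz certificate `1 = ∑_{f ∈ F_G} b_f f` with
each b_f of total degree at most 1. -/
theorem stmt_8 (n : ℕ) (G : SimpleGraph (Fin n)) [DecidableRel G.Adj]
    (h : (∃ s : Finset (Fin n), G.IsNClique 4 s) ∨
      (∃ (v u : Fin n) (c : G.Walk u u), c.IsCycle ∧ Odd c.length ∧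
        v ∉ c.support ∧ ∀ w ∈ c.support, G.Adj v w)) :
    ∃ (a : Fin n → MvPolynomial (Fin n) (ZMod 2))
      (b : Fin n → Fin n → MvPolynomial (Fin n) (ZMod 2)),
      (∀ i, (a i).totalDegree ≤ 1) ∧
      (∀ i j, (b i j).totalDegree ≤ 1) ∧
      1 = ∑ i : Fin n, a i * (X i ^ 3 + 1) +
          ∑ i : Fin n, ∑ j : Fin n,
            if G.Adj i j then b i j * (X i ^ 2 + X i * X j + X j ^ 2) else 0 := by
  have key : Cert n G 1 := by
    rcases h with ⟨s, hs⟩ | ⟨v, u, c, _, hodd, _, hadj⟩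
    · -- 4-clique: extract 4 distinct vertices
      obtain ⟨hclique, hcard⟩ := hs
      obtain ⟨v, hv⟩ : ∃ v, v ∈ s := Finset.card_pos.mp (by omega)
      have h3 : (s.erase v).card = 3 := by rw [Finset.card_erase_of_mem hv]; omega
      obtain ⟨a, b, c, hab, hac, hbc, habc⟩ := Finset.card_eq_three.mp h3
      have ha' : a ∈ s.erase v := by rw [habc]; simp
      have hb' : b ∈ s.erase v := by rw [habc]; simp
      have hc' : c ∈ s.erase v := by rw [habc]; simp
      have ha : a ∈ s := Finset.mem_of_mem_erase ha'
      have hb : b ∈ s := Finset.mem_of_mem_erase hb'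
      have hc : c ∈ s := Finset.mem_of_mem_erase hc'
      have hva : v ≠ a := (Finset.ne_of_mem_erase ha').symm
      have hvb : v ≠ b := (Finset.ne_of_mem_erase hb').symm
      have hvc : v ≠ c := (Finset.ne_of_mem_erase hc').symm
      have Aab : G.Adj a b := hclique ha hb hab
      have Abc : G.Adj b c := hclique hb hc hbc
      have Aca : G.Adj c a := hclique hc ha (Ne.symm hac)
      have Ava : G.Adj v a := hclique hv ha hva
      have Avb : G.Adj v b := hclique hv hb hvb
      have Avc : G.Adj v c := hclique hv hc hvc
      let w : G.Walk a a := SimpleGraph.Walk.cons Aab (SimpleGraph.Walk.cons Abc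
        (SimpleGraph.Walk.cons Aca SimpleGraph.Walk.nil))
      have hlen : Odd w.length := by simp [w]; decide
      have hsupp : ∀ x ∈ w.support, G.Adj v x := by
        intro x hx
        simp [w, SimpleGraph.Walk.support_cons] at hx
        rcases hx with rfl | rfl | rfl | rfl
        · exact Ava
        · exact Avb
        · exact Avc
        · exact Ava
      exact cert_one w hlen hsupp
    · exact cert_one c hodd hadj
  exact key
end

section
/- Let G = (V,E) be a finite simple graph with linearly ordered vertex set. Suppose there exists a finite list C of oriented partial 3-cycles and oriented chordless 4-cycles of G such that: (1) for every edge {i,j} in E, the total number of occurrences (counted with multiplicity over the members of C) of the arc (i,j) plus the number of occurrences of the arc (j,i) is even; and (2) the total number of occurrences of arcs (i,j) with i < j, summed over all members of C, is odd. Then G has no proper 3-coloring. -/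
private lemma list_finset_swap {α β M : Type*} [AddCommMonoid M] (l : List α) (s : Finset β)
    (f : α → β → M) :
    (l.map fun a => ∑ b ∈ s, f a b).sum = ∑ b ∈ s, (l.map fun a => f a b).sum := by
  induction l with
  | nil => simp
  | cons a l ih => simp [ih, Finset.sum_add_distrib]

private lemma sum_map_eq {α M : Type*} [BEq α] [LawfulBEq α] [DecidableEq α] [Fintype α]
    [AddCommMonoid M] (m : List α) (H : α → M) :
    (m.map H).sum = ∑ p : α, (m.count p) • H p := by
  induction m with
  | nil => simp
  | cons a l ih =>
    have hsingle : ∀ p : α, (if (a == p : Bool) then (1:ℕ) else 0) • H p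
        = if a = p then H p else 0 := by
      intro p; by_cases h : a = p <;> simp [h]
    simp only [List.map_cons, List.sum_cons, List.count_cons, add_smul, ih,
      Finset.sum_add_distrib, hsingle, Finset.sum_ite_eq, Finset.mem_univ, if_true]
    rw [add_comm]

private lemma list_cast_sum {α R : Type*} [CommRing R] (l : List α) (g : α → ℕ) :
    (l.map fun a => ((g a : ℕ) : R)).sum = ((l.map g).sum : R) := by
  induction l with
  | nil => simp
  | cons a l ih => simp [ih]

private lemma list_cast_mul {α R : Type*} [CommRing R] (l : List α) (g : α → ℕ) (x : R) :
    (l.map fun a => (g a : R) * x).sum = ((l.map g).sum : R) * x := by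
  induction l with
  | nil => simp
  | cons a l ih => simp [ih, add_mul]

/-- Let G = (V,E) be a finite simple graph with linearly ordered vertex set.
Suppose there is a finite list C of oriented partial 3-cycles and oriented chordless
4-cycles of G such that (1) for every edge {i,j}, the total number of occurrences of the
arc (i,j) plus that of (j,i) over the members of C is even, and (2) the total number of
occurrences of arcs (i,j) with i < j over the members of C is odd. Then G has no proper
3-coloring. -/
theorem stmt_9 {V : Type*} [Fintype V] [LinearOrder V] (G : SimpleGraph V)
    (C : List (List (V × V)))
    (hC : ∀ m ∈ C,
      (∃ i j k : V, m = [(i, j), (j, k)] ∧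
        G.Adj i j ∧ G.Adj j k ∧ G.Adj k i) ∨
      (∃ i j k l : V, m = [(i, j), (j, l), (l, k), (k, i)] ∧
        G.Adj i j ∧ G.Adj j l ∧ G.Adj l k ∧ G.Adj k i ∧ ¬ G.Adj j k ∧ ¬ G.Adj i l))
    (h1 : ∀ i j : V, G.Adj i j →
      Even ((C.map (fun m => m.count (i, j) + m.count (j, i))).sum))
    (h2 : Odd ((C.map (fun m => (m.filter (fun a => a.1 < a.2)).length)).sum)) :
    ¬ G.Colorable 3 := by
  rintro ⟨c⟩
  set f : V → ZMod 3 := fun v => (c v : ZMod 3) with hfdef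
  have hf : ∀ {x y}, G.Adj x y → f x ≠ f y := by
    intro x y hxy h
    exact c.valid hxy (by exact_mod_cast h)
  set H : V × V → ZMod 2 :=
    fun p => (if p.1 < p.2 then 1 else 0) + (if f p.2 - f p.1 = 1 then 1 else 0) with hHdef
  -- decide lemmas
  have hd3 : ∀ a b c : ZMod 3, a ≠ b → b ≠ c → c ≠ a →
      ((if b-a=1 then (1:ZMod 2) else 0) + (if c-b=1 then 1 else 0)) = 0 := by decide
  have hd4 : ∀ a b c d : ZMod 3, a≠b → b≠c → c≠d → d≠a →
      ((if b-a=1 then (1:ZMod 2) else 0)+((if c-b=1 then 1 else 0)+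
       ((if d-c=1 then 1 else 0)+(if a-d=1 then 1 else 0)))) = 0 := by decide
  set T : ZMod 2 := ((C.map (fun m => (m.map H).sum)).sum) with hTdef
  -- T = 1
  have hm1 : ∀ m ∈ C, (m.map H).sum = ((m.filter (fun a => a.1 < a.2)).length : ZMod 2) := by
    intro m hm
    rw [← List.countP_eq_length_filter]
    rcases hC m hm with ⟨i, j, k, rfl, hij, hjk, hki⟩ | ⟨i, j, k, l, rfl, hij, hjl, hlk, hki, -, -⟩
    · have h3 := hd3 (f i) (f j) (f k) (hf hij) (hf hjk) (hf hki)
      simp only [List.map_cons, List.map_nil, List.sum_cons, List.sum_nil, hHdef,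
        List.countP_cons, List.countP_nil, decide_eq_true_eq]
      push_cast
      linear_combination h3
    · have h4 := hd4 (f i) (f j) (f l) (f k) (hf hij) (hf hjl) (hf hlk) (hf hki)
      simp only [List.map_cons, List.map_nil, List.sum_cons, List.sum_nil, hHdef,
        List.countP_cons, List.countP_nil, decide_eq_true_eq]
      push_cast
      linear_combination h4
  have hT1 : T = 1 := by
    rw [hTdef, List.map_congr_left hm1, list_cast_sum]
    obtain ⟨t, ht⟩ := h2
    rw [ht]
    push_cast
    rw [show ((2:ZMod 2)) = 0 by decide]
    ring
  -- T = 0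
  set N : V × V → ℕ := fun p => (C.map (fun m => m.count p)).sum with hNdef
  have hmem : ∀ m ∈ C, ∀ p : V × V, p ∈ m → G.Adj p.1 p.2 := by
    intro m hm p hp
    rcases hC m hm with ⟨i, j, k, rfl, hij, hjk, hki⟩ | ⟨i, j, k, l, rfl, hij, hjl, hlk, hki, -, -⟩ <;>
      simp only [List.mem_cons, List.not_mem_nil, or_false] at hp <;>
      rcases hp with rfl | rfl | rfl | rfl | rfl <;>
      assumption
  have hN0 : ∀ p : V × V, ¬ G.Adj p.1 p.2 → N p = 0 := by
    intro p hp
    rw [hNdef]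
    simp only [List.sum_eq_zero_iff, List.mem_map]
    rintro n ⟨m, hm, rfl⟩
    rw [List.count_eq_zero]
    exact fun h => hp (hmem m hm p h)
  -- express T as a Finset sum
  have hTsum : T = ∑ p : V × V, (N p : ZMod 2) * H p := by
    rw [hTdef]
    have : ∀ m : List (V × V), (m.map H).sum = ∑ p : V × V, (m.count p : ZMod 2) * H p := by
      intro m
      rw [sum_map_eq]
      exact Finset.sum_congr rfl fun p _ => nsmul_eq_mul _ _
    simp only [this]
    rw [list_finset_swap]
    refine Finset.sum_congr rfl fun p _ => ?_
    rw [list_cast_mul]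
  have hg0 : ∀ p : V × V, (N p : ZMod 2) * H p + (N p.swap : ZMod 2) * H p.swap = 0 := by
    intro p
    by_cases hadj : G.Adj p.1 p.2
    · obtain ⟨i, j⟩ := p
      have hNN : (N (i, j) : ZMod 2) = (N (j, i) : ZMod 2) := by
        have heq := h1 i j hadj
        have hsum : (C.map fun m => m.count (i, j) + m.count (j, i)).sum
            = N (i, j) + N (j, i) := by
          simp only [hNdef]
          rw [List.sum_map_add]
        rw [hsum] at heq
        rw [ZMod.natCast_eq_natCast_iff']
        obtain ⟨t, ht⟩ := heq
        omega
      have hHH : H (i, j) + H (j, i) = 0 := by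
        have hne : i ≠ j := hadj.ne
        have h2' : (if f j - f i = 1 then (1:ZMod 2) else 0) +
            (if f i - f j = 1 then (1:ZMod 2) else 0) = 1 := by
          have := hf hadj
          revert this
          generalize f i = a; generalize f j = b
          revert a b; decide
        have h1' : (if i < j then (1:ZMod 2) else 0) + (if j < i then (1:ZMod 2) else 0) = 1 := by
          rcases lt_or_gt_of_ne hne with h | h <;> simp [h, asymm h]
        have hsplit : H (i, j) + H (j, i)
            = ((if i < j then (1:ZMod 2) else 0) + (if j < i then 1 else 0))
              + ((if f j - f i = 1 then (1:ZMod 2) else 0)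
                + (if f i - f j = 1 then (1:ZMod 2) else 0)) := by
          simp only [hHdef]
          ring
        rw [hsplit, h1', h2']
        decide
      simp only [Prod.swap_prod_mk]
      rw [hNN, ← mul_add, hHH, mul_zero]
    · rw [hN0 p hadj, hN0 p.swap (by simpa [SimpleGraph.adj_comm] using hadj)]
      simp
  have hT0 : T = 0 := by
    rw [hTsum]
    refine Finset.sum_involution (fun p _ => p.swap) (fun p _ => hg0 p)
      (fun p _ hne heq => hne ?_) (fun p _ => Finset.mem_univ _)
      (fun p _ => Prod.swap_swap p)
    have hpp : p.1 = p.2 := by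
      have h2' := congrArg Prod.fst heq
      simpa using h2'.symm
    obtain ⟨i, j⟩ := p
    simp only at hpp
    subst hpp
    rw [hN0 (i, i) (fun h => G.irrefl h)]
    simp
  rw [hT0] at hT1
  exact one_ne_zero hT1.symm
end

section
/- Let p be a real polynomial in n variables of total degree at most 2d. Then p is a sum of squares of polynomials if and only if there exists a real positive semidefinite symmetric matrix Q, with rows and columns indexed by the exponent vectors a in N^n with |a| <= d, such that p = \sum_{a,b} Q_{a,b} x^{a+b}, i.e., p = z^T Q z where z is the vector of all monomials of degree at most d. -/
open MvPolynomial

/-- The exponent vectors `a ∈ ℕ^n` with `|a| ≤ d`, encoded with entries in `Fin (d+1)`. -/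
def MonIdx (n d : ℕ) : Type := {a : Fin n → Fin (d + 1) // ∑ i, (a i : ℕ) ≤ d}

instance (n d : ℕ) : Fintype (MonIdx n d) := by unfold MonIdx; infer_instance

namespace Stmt10Aux

variable {n d : ℕ}

/-- encode a `MonIdx` as a finitely supported exponent vector. -/
noncomputable def enc (a : MonIdx n d) : Fin n →₀ ℕ :=
  Finsupp.equivFunOnFinite.symm fun i => (a.1 i : ℕ)

lemma enc_apply (a : MonIdx n d) (i : Fin n) : enc a i = (a.1 i : ℕ) := rfl

lemma enc_injective : Function.Injective (enc (n := n) (d := d)) := by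
  intro a b h
  apply Subtype.ext
  funext i
  refine Fin.ext ?_
  rw [← enc_apply a i, ← enc_apply b i, h]

lemma degree_eq_sum (m : Fin n →₀ ℕ) : m.degree = ∑ i, m i := by
  rw [Finsupp.degree]
  exact Finset.sum_subset (Finset.subset_univ _)
    (fun i _ hi => Finsupp.notMem_support_iff.mp hi)

lemma degree_enc (a : MonIdx n d) : (enc a).degree ≤ d := by
  rw [degree_eq_sum]
  simpa only [enc_apply] using a.2

/-- the monomial corresponding to a `MonIdx`. -/
noncomputable def mon (a : MonIdx n d) : MvPolynomial (Fin n) ℝ := monomial (enc a) 1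

lemma monomial_one_eq_prod (s : Fin n →₀ ℕ) :
    (monomial s (1 : ℝ)) = ∏ i, X i ^ (s i) := by
  rw [← prod_X_pow_eq_monomial]
  exact Finset.prod_subset (Finset.subset_univ _)
    (fun i _ hi => by simp [Finsupp.notMem_support_iff.mp hi])

lemma mon_mul (a b : MonIdx n d) :
    mon a * mon b = ∏ i : Fin n, X i ^ ((a.1 i : ℕ) + (b.1 i : ℕ)) := by
  rw [mon, mon, monomial_mul, one_mul, monomial_one_eq_prod]
  exact Finset.prod_congr rfl fun i _ => by rw [Finsupp.add_apply, enc_apply, enc_apply]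

/-- The key algebraic identity `∑ₖ (∑ₐ Aₖₐ mₐ)² = ∑ₐ ∑_b (∑ₖ AₖₐAₖ_b) mₐ m_b`. -/
lemma sum_sq_eq {ι : Type*} [Fintype ι] (A : ι → MonIdx n d → ℝ) :
    ∑ k : ι, (∑ a : MonIdx n d, A k a • mon a) ^ 2
      = ∑ a : MonIdx n d, ∑ b : MonIdx n d,
          (∑ k : ι, A k a * A k b) • (mon a * mon b) := by
  simp only [sq, Finset.sum_mul_sum, smul_mul_smul_comm, Finset.sum_smul]
  rw [Finset.sum_comm]
  exact Finset.sum_congr rfl fun a _ => Finset.sum_comm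

lemma exists_dec (m : Fin n →₀ ℕ) (h : m.degree ≤ d) : ∃ a : MonIdx n d, enc a = m := by
  rw [degree_eq_sum] at h
  have hlt : ∀ i, m i < d + 1 := fun i =>
    Nat.lt_succ_of_le (le_trans
      (Finset.single_le_sum (fun j _ => Nat.zero_le (m j)) (Finset.mem_univ i)) h)
  refine ⟨⟨fun i => ⟨m i, hlt i⟩, by simpa using h⟩, ?_⟩
  ext i
  rfl

/-- A polynomial of total degree at most `d` is a linear combination of the `mon a`. -/
lemma decompose (q : MvPolynomial (Fin n) ℝ) (hq : q.totalDegree ≤ d) :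
    q = ∑ a : MonIdx n d, coeff (enc a) q • mon a := by
  have hterm : ∀ a : MonIdx n d,
      coeff (enc a) q • mon a = monomial (enc a) (coeff (enc a) q) := fun a => by
    rw [mon, smul_monomial, smul_eq_mul, mul_one]
  simp only [hterm]
  apply MvPolynomial.ext
  intro m
  rw [coeff_sum]
  simp only [coeff_monomial]
  by_cases hm : m.degree ≤ d
  · obtain ⟨a₀, ha₀⟩ := exists_dec m hm
    rw [Finset.sum_eq_single a₀]
    · simp [ha₀]
    · intro b _ hb
      have : enc b ≠ m := fun hbm => hb (enc_injective (hbm.trans ha₀.symm))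
      simp [this]
    · intro h; exact absurd (Finset.mem_univ a₀) h
  · have hc0 : coeff m q = 0 := by
      by_contra hcm
      have := le_totalDegree (p := q) (s := m) (mem_support_iff.mpr hcm)
      exact hm (le_trans (le_of_eq rfl) (this.trans hq))
    rw [hc0, Finset.sum_eq_zero]
    intro a _
    have : enc a ≠ m := fun ha => hm (ha ▸ degree_enc a)
    simp [this]

lemma degree_add' (u v : Fin n →₀ ℕ) : (u + v).degree = u.degree + v.degree := by
  simp only [degree_eq_sum, Finsupp.add_apply]
  exact Finset.sum_add_distrib

/-- top homogeneous component of a product. -/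
lemma hc_mul_top {D : ℕ} (f g : MvPolynomial (Fin n) ℝ)
    (hf : f.totalDegree ≤ D) (hg : g.totalDegree ≤ D) :
    homogeneousComponent (D + D) (f * g)
      = homogeneousComponent D f * homogeneousComponent D g := by
  apply MvPolynomial.ext
  intro m
  rw [coeff_homogeneousComponent, coeff_mul, coeff_mul]
  have key : ∀ uv ∈ Finset.HasAntidiagonal.antidiagonal m,
      coeff uv.1 (homogeneousComponent D f) * coeff uv.2 (homogeneousComponent D g)
        = if m.degree = D + D then coeff uv.1 f * coeff uv.2 g else 0 := by
    rintro ⟨u, v⟩ huv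
    rw [Finset.HasAntidiagonal.mem_antidiagonal] at huv
    have hdeg : u.degree + v.degree = m.degree := by rw [← huv, degree_add']
    rw [coeff_homogeneousComponent, coeff_homogeneousComponent]
    by_cases hu : u.degree = D
    · by_cases hv : v.degree = D
      · have : m.degree = D + D := by omega
        simp [hu, hv, this]
      · -- v.degree ≠ D
        by_cases hm : m.degree = D + D
        · -- then v.degree > D so coeff v g = 0
          have hvD : D < v.degree := by omega
          have : coeff v g = 0 := coeff_eq_zero_of_totalDegree_lt (lt_of_le_of_lt hg hvD)
          simp [hv, hm, this]
        · simp [hv, hm]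
    · by_cases hm : m.degree = D + D
      · rcases lt_or_ge u.degree D with h | h
        · have hvD : D < v.degree := by omega
          have : coeff v g = 0 := coeff_eq_zero_of_totalDegree_lt (lt_of_le_of_lt hg hvD)
          simp [this, hm]
        · have huD : D < u.degree := lt_of_le_of_ne h (Ne.symm hu)
          have : coeff u f = 0 := coeff_eq_zero_of_totalDegree_lt (lt_of_le_of_lt hf huD)
          simp [this, hm]
      · simp [hu, hm]
  rw [Finset.sum_congr rfl key]
  by_cases hm : m.degree = D + D
  · simp [hm]
  · simp [hm]

/-- the top homogeneous component of a nonzero polynomial is nonzero. -/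
lemma hc_top_ne_zero (q : MvPolynomial (Fin n) ℝ) (hq : q ≠ 0) :
    homogeneousComponent q.totalDegree q ≠ 0 := by
  have hne : q.support.Nonempty := support_nonempty.mpr hq
  obtain ⟨s, hs, hsd⟩ := Finset.exists_mem_eq_sup q.support hne
    (fun s => s.sum fun _ e => e)
  intro h0
  have hcs : coeff s (homogeneousComponent q.totalDegree q) = coeff s q := by
    rw [coeff_homogeneousComponent, if_pos]
    rw [totalDegree, hsd]
    rfl
  rw [h0] at hcs
  exact mem_support_iff.mp hs hcs.symm

/-- a finite sum of squares of real polynomials vanishes iff every term does. -/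
lemma sq_sum_zero {ι : Type*} [Fintype ι] (h : ι → MvPolynomial (Fin n) ℝ)
    (hs : ∑ i, (h i) ^ 2 = 0) (i : ι) : h i = 0 := by
  apply MvPolynomial.funext
  intro x
  have hx : ∑ j, (eval x (h j)) ^ 2 = 0 := by
    have := congrArg (eval x) hs
    simpa [map_sum] using this
  have := (Finset.sum_eq_zero_iff_of_nonneg (fun j _ => sq_nonneg (eval x (h j)))).mp hx
    i (Finset.mem_univ i)
  have : eval x (h i) = 0 := by
    have := sq_eq_zero_iff.mp this
    exact this
  simp [this]

/-- In a sum of squares of total degree at most `2d`, all the summands have degree at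
most `d`. -/
lemma deg_le {t : ℕ} (q : Fin t → MvPolynomial (Fin n) ℝ)
    (h : (∑ i, q i ^ 2).totalDegree ≤ 2 * d) (i : Fin t) : (q i).totalDegree ≤ d := by
  by_contra hi
  set D := Finset.univ.sup (fun j : Fin t => (q j).totalDegree) with hDdef
  have hjD : ∀ j, (q j).totalDegree ≤ D := fun j => Finset.le_sup (f := fun j : Fin t => (q j).totalDegree) (Finset.mem_univ j)
  have hD : d < D := lt_of_lt_of_le (not_le.mp hi) (hjD i)
  have hsum : ∑ j, (homogeneousComponent D (q j)) ^ 2 = 0 := by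
    have hlt : (∑ j, q j ^ 2).totalDegree < D + D :=
      lt_of_le_of_lt h (by omega)
    have h2 : homogeneousComponent (D + D) (∑ j, q j ^ 2) = 0 :=
      homogeneousComponent_eq_zero _ _ hlt
    calc ∑ j, (homogeneousComponent D (q j)) ^ 2
        = ∑ j, homogeneousComponent (D + D) (q j ^ 2) := by
          refine Finset.sum_congr rfl fun j _ => ?_
          rw [sq, sq, hc_mul_top _ _ (hjD j) (hjD j)]
      _ = homogeneousComponent (D + D) (∑ j, q j ^ 2) := (map_sum _ _ _).symm
      _ = 0 := h2
  have hz : ∀ j, homogeneousComponent D (q j) = 0 := sq_sum_zero _ hsum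
  have : Nonempty (Fin t) := ⟨i⟩
  obtain ⟨j, _, hjeq⟩ := Finset.exists_mem_eq_sup Finset.univ
    (Finset.univ_nonempty (α := Fin t)) (fun j : Fin t => (q j).totalDegree)
  have hqj : q j ≠ 0 := by
    intro h0
    rw [h0, totalDegree_zero] at hjeq
    omega
  have := hc_top_ne_zero (q j) hqj
  rw [← hjeq] at this
  exact this (hz j)

end Stmt10Aux

open Stmt10Aux in
/-- A real polynomial p in n variables of total degree at most 2d is a sum
of squares of polynomials if and only if there is a real positive semidefinite symmetric
matrix Q, indexed by the exponent vectors a with |a| ≤ d, such that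
`p = ∑_{a,b} Q_{a,b} x^{a+b}`, i.e. `p = zᵀ Q z` for z the vector of monomials of degree
at most d. -/
theorem stmt_10 (n d : ℕ) (p : MvPolynomial (Fin n) ℝ) (hp : p.totalDegree ≤ 2 * d) :
    (∃ (t : ℕ) (q : Fin t → MvPolynomial (Fin n) ℝ), p = ∑ i, q i ^ 2) ↔
    ∃ Q : Matrix (MonIdx n d) (MonIdx n d) ℝ, Q.PosSemidef ∧
      p = ∑ a : MonIdx n d, ∑ b : MonIdx n d,
        Q a b • ∏ i : Fin n, X i ^ ((a.1 i : ℕ) + (b.1 i : ℕ)) := by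
  constructor
  · rintro ⟨t, q, rfl⟩
    have hdeg : ∀ i, (q i).totalDegree ≤ d := deg_le q hp
    classical
    set A : Matrix (Fin t) (MonIdx n d) ℝ := fun k a => coeff (enc a) (q k) with hA
    refine ⟨A.conjTranspose * A, Matrix.posSemidef_conjTranspose_mul_self A, ?_⟩
    have hentry : ∀ a b : MonIdx n d, (A.conjTranspose * A) a b = ∑ k, A k a * A k b := by
      intro a b
      simp [Matrix.mul_apply, Matrix.conjTranspose_apply, mul_comm]
    have hq : ∀ k, q k = ∑ a : MonIdx n d, A k a • mon a := fun k =>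
      decompose (q k) (hdeg k)
    calc ∑ k, q k ^ 2 = ∑ k, (∑ a : MonIdx n d, A k a • mon a) ^ 2 := by
          exact Finset.sum_congr rfl fun k _ => by rw [← hq k]
      _ = ∑ a : MonIdx n d, ∑ b : MonIdx n d,
            (∑ k, A k a * A k b) • (mon a * mon b) := sum_sq_eq A
      _ = ∑ a : MonIdx n d, ∑ b : MonIdx n d,
            (A.conjTranspose * A) a b • ∏ i : Fin n, X i ^ ((a.1 i : ℕ) + (b.1 i : ℕ)) := by
          refine Finset.sum_congr rfl fun a _ => Finset.sum_congr rfl fun b _ => ?_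
          rw [hentry, mon_mul]
  · rintro ⟨Q, hQ, hp'⟩
    obtain ⟨B, hB⟩ : ∃ B : Matrix (MonIdx n d) (MonIdx n d) ℝ, Q = star B * B := by
      classical
      open scoped MatrixOrder in exact CStarAlgebra.nonneg_iff_eq_star_mul_self.mp hQ.nonneg
    classical
    set t := Fintype.card (MonIdx n d) with ht
    set e : Fin t ≃ MonIdx n d := (Fintype.equivFin (MonIdx n d)).symm with he
    set qf : Fin t → MvPolynomial (Fin n) ℝ :=
      fun k => ∑ a : MonIdx n d, B (e k) a • mon a with hqf
    refine ⟨t, qf, ?_⟩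
    have hsum : ∑ k : Fin t, (∑ a : MonIdx n d, B (e k) a • mon a) ^ 2
        = ∑ j : MonIdx n d, (∑ a : MonIdx n d, B j a • mon a) ^ 2 :=
      Equiv.sum_comp e (fun j => (∑ a : MonIdx n d, B j a • mon a) ^ 2)
    rw [hsum, sum_sq_eq B, hp']
    refine Finset.sum_congr rfl fun a _ => Finset.sum_congr rfl fun b _ => ?_
    have hentry : Q a b = ∑ k, B k a * B k b := by
      rw [hB]
      simp [Matrix.mul_apply, Matrix.conjTranspose_apply, mul_comm]
    rw [hentry, mon_mul]
end

section
/- Let S be a nonempty finite subset of R^n. Then S is exact if and only if there exist finitely many polynomials g_1,...,g_m of degree at most 1 such that conv(S) = {x in R^n : g_i(x) >= 0 for i = 1,...,m} and each g_i is 1-sos mod I(S). -/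
open MvPolynomial

/-- `f` is `k`-sos mod `I`: there are polynomials `h_j` of total degree at most `k` with
`f - ∑ j, h_j ^ 2 ∈ I`. -/
def IsKSos {σ : Type*} (I : Ideal (MvPolynomial σ ℝ)) (k : ℕ) (f : MvPolynomial σ ℝ) :
    Prop :=
  ∃ (t : ℕ) (h : Fin t → MvPolynomial σ ℝ),
    (∀ j, (h j).totalDegree ≤ k) ∧ f - ∑ j, h j ^ 2 ∈ I

/-- The `k`-th theta body of an ideal `I`: the set of points where every polynomial of
degree at most 1 that is `k`-sos mod `I` is nonnegative. -/
def thetaBody {σ : Type*} (I : Ideal (MvPolynomial σ ℝ)) (k : ℕ) : Set (σ → ℝ) :=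
  {x | ∀ f : MvPolynomial σ ℝ, f.totalDegree ≤ 1 → IsKSos I k f → 0 ≤ eval x f}

/-- A finite set `S ⊆ ℝ^n` is exact: every polynomial of degree at most 1 that is
nonnegative on `S` is 1-sos mod `I(S)`, the vanishing ideal of `S`. -/
def IsExact {n : ℕ} (S : Set (Fin n → ℝ)) : Prop :=
  ∀ f : MvPolynomial (Fin n) ℝ, f.totalDegree ≤ 1 →
    (∀ s ∈ S, 0 ≤ eval s f) → IsKSos (vanishingIdeal ℝ S) 1 f


namespace StmtAux

open Matrix Finset

section Cone
variable {d : ℕ}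

/-- The cone generated by a finite family of vectors. -/
def coneI {ι : Type*} [Fintype ι] (w : ι → (Fin d → ℝ)) : Set (Fin d → ℝ) :=
  {x | ∃ c : ι → ℝ, (∀ i, 0 ≤ c i) ∧ x = ∑ i, c i • w i}

lemma mem_coneI_self {ι : Type*} [Fintype ι] [DecidableEq ι] (w : ι → (Fin d → ℝ)) (i : ι) :
    w i ∈ coneI w := by
  refine ⟨fun j => if j = i then 1 else 0, fun j => by positivity, ?_⟩
  simp [ite_smul]

lemma zero_mem_coneI {ι : Type*} [Fintype ι] (w : ι → (Fin d → ℝ)) :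
    0 ∈ coneI w :=
  ⟨0, fun _ => le_rfl, by simp⟩

lemma dotProduct_sum {ι : Type*} (s : Finset ι) (u : Fin d → ℝ) (f : ι → (Fin d → ℝ)) :
    u ⬝ᵥ (∑ i ∈ s, f i) = ∑ i ∈ s, u ⬝ᵥ f i := by
  classical
  induction s using Finset.induction with
  | empty => simp
  | insert _ _ hx ih => simp [Finset.sum_insert hx, dotProduct_add, ih]

lemma dotProduct_nonneg_of_mem_coneI {ι : Type*} [Fintype ι] {w : ι → (Fin d → ℝ)}
    {u x : Fin d → ℝ} (hw : ∀ i, 0 ≤ u ⬝ᵥ w i) (hx : x ∈ coneI w) : 0 ≤ u ⬝ᵥ x := by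
  obtain ⟨c, hc, rfl⟩ := hx
  rw [dotProduct_sum]
  refine Finset.sum_nonneg fun i _ => ?_
  rw [dotProduct_smul]
  exact mul_nonneg (hc i) (hw i)

lemma sum_smul_mem_coneI {ι κ : Type*} [Fintype ι] [Fintype κ] {w : ι → (Fin d → ℝ)}
    (c : κ → ℝ) (v : κ → (Fin d → ℝ)) (hc : ∀ k, 0 ≤ c k) (hv : ∀ k, v k ∈ coneI w) :
    ∑ k, c k • v k ∈ coneI w := by
  classical
  choose e he hev using hv
  refine ⟨fun i => ∑ k, c k * e k i, fun i => Finset.sum_nonneg fun k _ =>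
    mul_nonneg (hc k) (he k i), ?_⟩
  calc ∑ k, c k • v k = ∑ k, ∑ i, (c k * e k i) • w i := by
        refine Finset.sum_congr rfl fun k _ => ?_
        rw [hev k, Finset.smul_sum]
        exact Finset.sum_congr rfl fun i _ => by rw [smul_smul]
    _ = ∑ i, (∑ k, c k * e k i) • w i := by
        rw [Finset.sum_comm]
        exact Finset.sum_congr rfl fun i _ => (Finset.sum_smul).symm

lemma smul_mem_coneI {ι : Type*} [Fintype ι] {w : ι → (Fin d → ℝ)} {x : Fin d → ℝ}
    {t : ℝ} (ht : 0 ≤ t) (hx : x ∈ coneI w) : t • x ∈ coneI w := by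
  obtain ⟨c, hc, rfl⟩ := hx
  refine ⟨fun i => t * c i, fun i => mul_nonneg ht (hc i), ?_⟩
  rw [Finset.smul_sum]
  exact Finset.sum_congr rfl fun i _ => by rw [smul_smul]

lemma add_mem_coneI {ι : Type*} [Fintype ι] {w : ι → (Fin d → ℝ)} {x y : Fin d → ℝ}
    (hx : x ∈ coneI w) (hy : y ∈ coneI w) : x + y ∈ coneI w := by
  obtain ⟨c, hc, rfl⟩ := hx
  obtain ⟨c', hc', rfl⟩ := hy
  refine ⟨fun i => c i + c' i, fun i => add_nonneg (hc i) (hc' i), ?_⟩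
  rw [← Finset.sum_add_distrib]
  exact Finset.sum_congr rfl fun i _ => (add_smul _ _ _).symm

/-- Fourier–Motzkin elimination step. -/
lemma coneI_inter_halfspace {ι : Type} [Fintype ι] [DecidableEq ι]
    (w : ι → (Fin d → ℝ)) (u : Fin d → ℝ) :
    ∃ (κ : Type) (_ : Fintype κ) (w' : κ → (Fin d → ℝ)),
      coneI w' = coneI w ∩ {x | 0 ≤ u ⬝ᵥ x} := by
  classical
  set a : ι → ℝ := fun i => u ⬝ᵥ w i with ha
  set w' : ι ⊕ ι × ι → (Fin d → ℝ) := Sum.elim (fun i : ι => if 0 ≤ a i then w i else 0)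
      (fun p : ι × ι => if 0 ≤ a p.1 ∧ a p.2 < 0 then a p.1 • w p.2 - a p.2 • w p.1 else 0)
      with hw'
  refine ⟨ι ⊕ ι × ι, inferInstance, w', ?_⟩
  have hmem : ∀ k, w' k ∈ coneI w := by
    rintro (i | ⟨j, k⟩)
    · simp only [hw', Sum.elim_inl]
      split_ifs
      · exact mem_coneI_self w i
      · exact zero_mem_coneI w
    · simp only [hw', Sum.elim_inr]
      split_ifs with h
      · rw [sub_eq_add_neg, ← neg_smul]
        exact add_mem_coneI (smul_mem_coneI h.1 (mem_coneI_self w k))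
          (smul_mem_coneI (by linarith [h.2]) (mem_coneI_self w j))
      · exact zero_mem_coneI w
  have hdot : ∀ k, 0 ≤ u ⬝ᵥ w' k := by
    rintro (i | ⟨j, k⟩)
    · simp only [hw', Sum.elim_inl]
      split_ifs with h
      · exact h
      · simp
    · simp only [hw', Sum.elim_inr]
      split_ifs with h
      · rw [dotProduct_sub, dotProduct_smul, dotProduct_smul]
        have h1 : u ⬝ᵥ w k = a k := rfl
        have h2 : u ⬝ᵥ w j = a j := rfl
        rw [h1, h2]
        simp only [smul_eq_mul]
        have : a j * a k - a k * a j = 0 := by ring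
        rw [this]
      · simp
  ext x
  constructor
  · rintro ⟨c, hc, rfl⟩
    exact ⟨sum_smul_mem_coneI c w' hc hmem,
      dotProduct_nonneg_of_mem_coneI hdot ⟨c, hc, rfl⟩⟩
  · rintro ⟨⟨lam, hlam, rfl⟩, hx⟩
    set A : ℝ := ∑ i, (if 0 ≤ a i then lam i * a i else 0) with hA
    set B : ℝ := ∑ i, (if 0 ≤ a i then 0 else lam i * a i) with hB
    have hA0 : 0 ≤ A := Finset.sum_nonneg fun i _ => by
      split_ifs with h
      · exact mul_nonneg (hlam i) h
      · exact le_rfl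
    have hB0 : B ≤ 0 := Finset.sum_nonpos fun i _ => by
      split_ifs with h
      · exact le_rfl
      · exact mul_nonpos_of_nonneg_of_nonpos (hlam i) (le_of_not_ge h)
    have hAB : 0 ≤ A + B := by
      have heq : A + B = u ⬝ᵥ ∑ i, lam i • w i := by
        rw [hA, hB, ← Finset.sum_add_distrib, dotProduct_sum]
        refine Finset.sum_congr rfl fun i _ => ?_
        rw [dotProduct_smul, smul_eq_mul]
        have h1 : u ⬝ᵥ w i = a i := rfl
        rw [h1]
        split_ifs <;> ring
      rw [heq]
      exact hx
    rcases eq_or_lt_of_le hA0 with hApos | hApos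
    · -- A = 0 case
      have hBz : B = 0 := le_antisymm hB0 (by linarith)
      have hlamz : ∀ i, ¬(0 ≤ a i) → lam i = 0 := by
        intro i hi
        have hsum : (∑ j, if 0 ≤ a j then (0:ℝ) else lam j * a j) = 0 := by rw [← hB]; exact hBz
        have h2 := (Finset.sum_eq_zero_iff_of_nonpos
          (f := fun j : ι => if 0 ≤ a j then (0:ℝ) else lam j * a j)
          (s := Finset.univ) (fun j _ => by
            split_ifs with h
            · exact le_rfl
            · exact mul_nonpos_of_nonneg_of_nonpos (hlam j) (le_of_not_ge h))).mp hsum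
            i (Finset.mem_univ i)
        rw [if_neg hi] at h2
        have hai : a i ≠ 0 := fun h => hi (le_of_eq h.symm)
        exact (mul_eq_zero.mp h2).resolve_right hai
      refine ⟨Sum.elim (fun i : ι => if 0 ≤ a i then lam i else 0) (fun _ : ι × ι => 0),
        ?_, ?_⟩
      · rintro (i | p)
        · simp only [Sum.elim_inl]
          split_ifs with h
          · exact hlam i
          · exact le_rfl
        · simp only [Sum.elim_inr]
          exact le_rfl
      · rw [Fintype.sum_sum_type]
        simp only [Sum.elim_inl, Sum.elim_inr, zero_smul, Finset.sum_const_zero, add_zero]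
        refine Finset.sum_congr rfl fun i _ => ?_
        simp only [hw', Sum.elim_inl]
        split_ifs with h
        · rfl
        · rw [hlamz i h]; simp
    · -- A > 0 case
      have hAne : A ≠ 0 := ne_of_gt hApos
      refine ⟨Sum.elim (fun i : ι => if 0 ≤ a i then lam i * (A + B) / A else 0)
        (fun p : ι × ι => if 0 ≤ a p.1 ∧ a p.2 < 0 then lam p.1 * lam p.2 / A else 0), ?_, ?_⟩
      · rintro (i | p)
        · simp only [Sum.elim_inl]
          split_ifs with h
          · exact div_nonneg (mul_nonneg (hlam i) hAB) hA0
          · exact le_rfl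
        · simp only [Sum.elim_inr]
          split_ifs with h
          · exact div_nonneg (mul_nonneg (hlam p.1) (hlam p.2)) hA0
          · exact le_rfl
      · rw [Fintype.sum_sum_type]
        simp only [Sum.elim_inl, Sum.elim_inr]
        have hT1 : (∑ i, (if 0 ≤ a i then lam i * (A + B) / A else 0) • w' (Sum.inl i))
            = ∑ i, (if 0 ≤ a i then (lam i * (A + B) / A) • w i else 0) := by
          refine Finset.sum_congr rfl fun i _ => ?_
          simp only [hw', Sum.elim_inl]
          split_ifs with h <;> simp
        have hT2 : (∑ p : ι × ι,
              (if 0 ≤ a p.1 ∧ a p.2 < 0 then lam p.1 * lam p.2 / A else 0) • w' (Sum.inr p))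
            = (∑ k, (if a k < 0 then lam k • w k else 0))
              - ∑ j, (if 0 ≤ a j then (lam j * B / A) • w j else 0) := by
          have step1 : (∑ p : ι × ι,
              (if 0 ≤ a p.1 ∧ a p.2 < 0 then lam p.1 * lam p.2 / A else 0) • w' (Sum.inr p))
              = ∑ j, ∑ k, ((if 0 ≤ a j ∧ a k < 0 then (lam j * lam k * a j / A) • w k else 0)
                - (if 0 ≤ a j ∧ a k < 0 then (lam j * lam k * a k / A) • w j else 0)) := by
            rw [Fintype.sum_prod_type]
            refine Finset.sum_congr rfl fun j _ => Finset.sum_congr rfl fun k _ => ?_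
            simp only [hw', Sum.elim_inr]
            split_ifs with h
            · rw [smul_sub, smul_smul, smul_smul]
              congr 1
              · congr 1
                ring
              · congr 1
                ring
            · simp
          rw [step1]
          simp only [Finset.sum_sub_distrib]
          congr 1
          · rw [Finset.sum_comm]
            refine Finset.sum_congr rfl fun k _ => ?_
            by_cases hk : a k < 0
            · rw [if_pos hk]
              have hterm : ∀ j, (if 0 ≤ a j ∧ a k < 0 then (lam j * lam k * a j / A) • w k else 0)
                  = ((if 0 ≤ a j then lam j * a j else 0) * (lam k / A)) • w k := by
                intro j
                by_cases hj : 0 ≤ a j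
                · rw [if_pos ⟨hj, hk⟩, if_pos hj]
                  congr 1
                  ring
                · rw [if_neg (fun h => hj h.1), if_neg hj, zero_mul, zero_smul]
              simp only [hterm]
              rw [← Finset.sum_smul, ← Finset.sum_mul, ← hA]
              congr 1
              field_simp
            · rw [if_neg hk]
              refine Finset.sum_eq_zero fun j _ => ?_
              rw [if_neg (fun h => hk h.2)]
          · refine Finset.sum_congr rfl fun j _ => ?_
            by_cases hj : 0 ≤ a j
            · rw [if_pos hj]
              have hterm : ∀ k, (if 0 ≤ a j ∧ a k < 0 then (lam j * lam k * a k / A) • w j else 0)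
                  = ((if 0 ≤ a k then 0 else lam k * a k) * (lam j / A)) • w j := by
                intro k
                by_cases hk : 0 ≤ a k
                · rw [if_neg (fun h => (not_lt.mpr hk) h.2), if_pos hk, zero_mul, zero_smul]
                · rw [if_pos ⟨hj, not_le.mp hk⟩, if_neg hk]
                  congr 1
                  ring
              simp only [hterm]
              rw [← Finset.sum_smul, ← Finset.sum_mul, ← hB]
              congr 1
              field_simp
            · rw [if_neg hj]
              refine Finset.sum_eq_zero fun k _ => ?_
              rw [if_neg (fun h => hj h.1)]
        rw [hT1, hT2, ← Finset.sum_sub_distrib, ← Finset.sum_add_distrib]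
        refine Finset.sum_congr rfl fun i _ => ?_
        by_cases hi : 0 ≤ a i
        · rw [if_pos hi, if_pos hi, if_neg (not_lt.mpr hi), zero_sub, ← sub_eq_add_neg,
            ← sub_smul]
          congr 1
          field_simp
          ring
        · rw [if_neg hi, if_neg hi, if_pos (not_le.mp hi), zero_add, sub_zero]

lemma univ_eq_coneI :
    (Set.univ : Set (Fin d → ℝ)) = coneI (Sum.elim (fun i : Fin d => Pi.single i (1:ℝ))
      (fun i : Fin d => -Pi.single i (1:ℝ))) := by
  ext x
  simp only [Set.mem_univ, true_iff]
  refine ⟨Sum.elim (fun i => max (x i) 0) (fun i => max (-(x i)) 0), ?_, ?_⟩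
  · rintro (i | i) <;> simp [le_max_right]
  · rw [Fintype.sum_sum_type]
    simp only [Sum.elim_inl, Sum.elim_inr]
    rw [← Finset.sum_add_distrib]
    have : ∀ i, max (x i) 0 • (Pi.single i (1:ℝ) : Fin d → ℝ)
          + max (-(x i)) 0 • (-(Pi.single i (1:ℝ) : Fin d → ℝ))
        = (Pi.single i (x i) : Fin d → ℝ) := by
      intro i
      rw [smul_neg, ← sub_eq_add_neg, ← sub_smul, max_zero_sub_max_neg_zero_eq_self]
      funext j
      by_cases h : j = i
      · subst h; simp
      · simp [Pi.single_apply, h]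
    simp only [this]
    exact (Finset.univ_sum_single x).symm ▸ (Finset.univ_sum_single x)

/-- Minkowski: a cone given by finitely many homogeneous linear inequalities is
finitely generated. -/
lemma minkowski {m : ℕ} (u : Fin m → (Fin d → ℝ)) :
    ∃ (κ : Type) (_ : Fintype κ) (w : κ → (Fin d → ℝ)),
      {y | ∀ j, 0 ≤ u j ⬝ᵥ y} = coneI w := by
  induction m with
  | zero =>
    refine ⟨Fin d ⊕ Fin d, inferInstance, Sum.elim (fun i : Fin d => Pi.single i (1:ℝ))
      (fun i : Fin d => -Pi.single i (1:ℝ)), ?_⟩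
    rw [← univ_eq_coneI]
    ext y; simp [Fin.forall_fin_zero_pi]
  | succ m ih =>
    obtain ⟨κ, hκ, w, hw⟩ := ih (fun j => u j.succ)
    letI := hκ
    letI := Classical.decEq κ
    obtain ⟨κ', hκ', w', hw'⟩ := coneI_inter_halfspace w (u 0)
    refine ⟨κ', hκ', w', ?_⟩
    rw [hw', ← hw]
    ext y
    constructor
    · intro hy
      exact ⟨fun j => hy j.succ, hy 0⟩
    · rintro ⟨h1, h2⟩ j
      refine Fin.cases ?_ ?_ j
      · exact h2
      · exact h1

/-- Farkas' lemma (homogeneous affine form). -/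
lemma farkas : ∀ {m : ℕ} (u : Fin m → (Fin d → ℝ)) (c : Fin d → ℝ),
    (∀ y, (∀ j, 0 ≤ u j ⬝ᵥ y) → 0 ≤ c ⬝ᵥ y) →
    ∃ t : Fin m → ℝ, (∀ j, 0 ≤ t j) ∧ c = ∑ j, t j • u j := by
  intro m
  induction m with
  | zero =>
    intro u c h
    have h1 := h c (fun j => j.elim0)
    have h2 := h (-c) (fun j => j.elim0)
    rw [dotProduct_neg] at h2
    have hc : c ⬝ᵥ c = 0 := le_antisymm (by linarith) h1
    have : c = 0 := dotProduct_self_eq_zero.mp hc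
    exact ⟨fun _ => 0, fun j => le_rfl, by simp [this]⟩
  | succ m ih =>
    intro u c h
    classical
    obtain ⟨κ, hκ, w, hw⟩ := minkowski (fun j : Fin m => u j.succ)
    letI := hκ
    letI := Classical.decEq κ
    set a : κ → ℝ := fun i => u 0 ⬝ᵥ w i with ha
    set b : κ → ℝ := fun i => c ⬝ᵥ w i with hb
    have hwD : ∀ i, ∀ j : Fin m, 0 ≤ u j.succ ⬝ᵥ w i := by
      intro i
      have : w i ∈ {y | ∀ j : Fin m, 0 ≤ u j.succ ⬝ᵥ y} := by
        rw [hw]; exact mem_coneI_self w i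
      exact this
    have hF1 : ∀ i, 0 ≤ a i → 0 ≤ b i := by
      intro i hai
      refine h (w i) fun j => ?_
      refine Fin.cases ?_ ?_ j
      · exact hai
      · exact fun j' => hwD i j'
    have hF2 : ∀ i k, 0 ≤ a i → a k < 0 → 0 ≤ a i * b k - a k * b i := by
      intro i k hai hak
      have hv : a i • w k + (-(a k)) • w i ∈ coneI w :=
        add_mem_coneI (smul_mem_coneI hai (mem_coneI_self w k))
          (smul_mem_coneI (by linarith) (mem_coneI_self w i))
      have hvD : ∀ j : Fin (m+1), 0 ≤ u j ⬝ᵥ (a i • w k + (-(a k)) • w i) := by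
        intro j
        refine Fin.cases ?_ ?_ j
        · rw [dotProduct_add, dotProduct_smul, dotProduct_smul]
          have e1 : u 0 ⬝ᵥ w k = a k := rfl
          have e2 : u 0 ⬝ᵥ w i = a i := rfl
          rw [e1, e2, smul_eq_mul, smul_eq_mul]
          nlinarith
        · intro j'
          have : a i • w k + (-(a k)) • w i ∈ {y | ∀ j : Fin m, 0 ≤ u j.succ ⬝ᵥ y} := by
            rw [hw]; exact hv
          exact this j'
      have hfin := h _ hvD
      rw [dotProduct_add, dotProduct_smul, dotProduct_smul] at hfin
      have e1 : c ⬝ᵥ w k = b k := rfl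
      have e2 : c ⬝ᵥ w i = b i := rfl
      rw [e1, e2, smul_eq_mul, smul_eq_mul] at hfin
      linarith
    set s : Finset ℝ :=
      insert 0 ((Finset.univ.filter (fun i => a i < 0)).image (fun i => b i / a i)) with hs
    have hsne : s.Nonempty := ⟨0, Finset.mem_insert_self _ _⟩
    set t0 := s.max' hsne with ht0def
    have ht0 : 0 ≤ t0 := Finset.le_max' s 0 (Finset.mem_insert_self _ _)
    have hkey : ∀ i, t0 * a i ≤ b i := by
      intro i
      rcases lt_or_ge (a i) 0 with hai | hai
      · have hmem : b i / a i ∈ s := Finset.mem_insert_of_mem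
          (Finset.mem_image_of_mem _ (Finset.mem_filter.mpr ⟨Finset.mem_univ i, hai⟩))
        have hle := Finset.le_max' s _ hmem
        have h2 : t0 * a i ≤ (b i / a i) * a i :=
          mul_le_mul_of_nonpos_right hle (le_of_lt hai)
        rwa [div_mul_cancel₀ _ (ne_of_lt hai)] at h2
      · have hbi := hF1 i hai
        have ht0mem := Finset.max'_mem s hsne
        rw [ht0def]
        rcases Finset.mem_insert.mp ht0mem with h0 | himg
        · rw [h0, zero_mul]
          exact hbi
        · obtain ⟨k, hk, hbk⟩ := Finset.mem_image.mp himg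
          have hak : a k < 0 := (Finset.mem_filter.mp hk).2
          rw [← hbk, div_mul_eq_mul_div, div_le_iff_of_neg hak]
          have := hF2 i k hai hak
          nlinarith
    have hc' : ∀ y, (∀ j : Fin m, 0 ≤ u j.succ ⬝ᵥ y) → 0 ≤ (c - t0 • u 0) ⬝ᵥ y := by
      intro y hy
      have hyD : y ∈ coneI w := by rw [← hw]; exact hy
      refine dotProduct_nonneg_of_mem_coneI (fun i => ?_) hyD
      rw [sub_dotProduct, smul_dotProduct]
      have e1 : c ⬝ᵥ w i = b i := rfl
      have e2 : u 0 ⬝ᵥ w i = a i := rfl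
      rw [e1, e2, smul_eq_mul]
      linarith [hkey i]
    obtain ⟨t', ht', hct⟩ := ih (fun j => u j.succ) (c - t0 • u 0) hc'
    refine ⟨Fin.cons t0 t', ?_, ?_⟩
    · intro j
      refine Fin.cases ?_ ?_ j
      · simpa using ht0
      · intro j'
        simpa using ht' j'
    · rw [Fin.sum_univ_succ]
      simp only [Fin.cons_zero, Fin.cons_succ]
      rw [← hct, add_comm, sub_add_cancel]

end Cone

section Poly
variable {n : ℕ}

/-- Homogenizing lift of a point. -/
def lift (x : Fin n → ℝ) : Fin (n+1) → ℝ := Fin.snoc x 1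

/-- The affine polynomial with coefficient vector `y`. -/
noncomputable def polyOf (y : Fin (n+1) → ℝ) : MvPolynomial (Fin n) ℝ :=
  (∑ i : Fin n, C (y i.castSucc) * X i) + C (y (Fin.last n))

lemma eval_polyOf (y : Fin (n+1) → ℝ) (x : Fin n → ℝ) :
    eval x (polyOf y) = lift x ⬝ᵥ y := by
  rw [polyOf, dotProduct]
  rw [Fin.sum_univ_castSucc]
  simp only [lift, Fin.snoc_castSucc, Fin.snoc_last, map_add, map_sum, eval_C, eval_X, eval_mul,
    one_mul]
  congr 1
  exact Finset.sum_congr rfl fun i _ => mul_comm _ _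

lemma totalDegree_polyOf (y : Fin (n+1) → ℝ) : (polyOf y).totalDegree ≤ 1 := by
  refine le_trans (totalDegree_add _ _) (max_le ?_ ?_)
  · refine le_trans (totalDegree_finset_sum _ _) (Finset.sup_le fun i _ => ?_)
    refine le_trans (totalDegree_mul _ _) ?_
    rw [totalDegree_C, totalDegree_X]
  · rw [totalDegree_C]
    exact Nat.zero_le 1

lemma monomial_structure {m : Fin n →₀ ℕ} (hm : (m.sum fun _ e => e) ≤ 1) :
    m = 0 ∨ ∃ i, m = Finsupp.single i 1 := by
  rcases eq_or_ne m 0 with h | h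
  · exact Or.inl h
  · obtain ⟨j, hj⟩ := Finsupp.ne_iff.mp h
    simp only [Finsupp.coe_zero, Pi.zero_apply] at hj
    have hjs : j ∈ m.support := Finsupp.mem_support_iff.mpr hj
    refine Or.inr ⟨j, ?_⟩
    have hsum : ∑ k ∈ m.support, m k ≤ 1 := by
      rw [Finsupp.sum] at hm; exact hm
    have hmj : m j = 1 := by
      have h1 : 1 ≤ m j := Nat.one_le_iff_ne_zero.mpr hj
      have h2 : m j ≤ 1 := le_trans (Finset.single_le_sum (fun k _ => Nat.zero_le _) hjs) hsum
      omega
    ext k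
    rcases eq_or_ne k j with rfl | hkj
    · simp [hmj]
    · rw [Finsupp.single_apply, if_neg (fun h => hkj (h.symm))]
      by_contra hk
      have hks : k ∈ m.support := Finsupp.mem_support_iff.mpr hk
      have hsub : ({j, k} : Finset (Fin n)) ⊆ m.support := by
        intro z hz
        rcases Finset.mem_insert.mp hz with rfl | hz
        · exact hjs
        · rwa [Finset.mem_singleton.mp hz]
      have hp : m j + m k ≤ ∑ z ∈ m.support, m z := by
        rw [← Finset.sum_pair (fun h => hkj (h.symm))]
        exact Finset.sum_le_sum_of_subset hsub
      omega

/-- Every polynomial of total degree at most 1 is an affine function. -/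
lemma exists_vec {f : MvPolynomial (Fin n) ℝ} (hf : f.totalDegree ≤ 1) :
    ∃ y : Fin (n+1) → ℝ, ∀ x, eval x f = lift x ⬝ᵥ y := by
  classical
  refine ⟨Fin.snoc (fun i => coeff (Finsupp.single i 1) f) (coeff 0 f), fun x => ?_⟩
  rw [dotProduct, Fin.sum_univ_castSucc]
  simp only [lift, Fin.snoc_castSucc, Fin.snoc_last, one_mul]
  set T : Finset ((Fin n) →₀ ℕ) :=
    insert 0 (Finset.univ.image fun i => Finsupp.single i 1) with hT
  have hsupp : f.support ⊆ T := by
    intro m hm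
    have hle : (m.sum fun _ e => e) ≤ 1 := le_trans (le_totalDegree hm) hf
    rcases monomial_structure hle with rfl | ⟨i, rfl⟩
    · exact Finset.mem_insert_self _ _
    · exact Finset.mem_insert_of_mem (Finset.mem_image_of_mem _ (Finset.mem_univ i))
  rw [eval_eq]
  rw [Finset.sum_subset hsupp (fun m _ hm => by
    rw [MvPolynomial.notMem_support_iff.mp hm, zero_mul])]
  have h0T : (0 : (Fin n) →₀ ℕ) ∉ (Finset.univ.image fun i => Finsupp.single i 1) := by
    simp only [Finset.mem_image, not_exists]
    intro i hi
    rcases hi with ⟨-, hi⟩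
    have := congrFun (congrArg (fun g : (Fin n) →₀ ℕ => (g : Fin n → ℕ)) hi) i
    simp at this
  rw [hT, Finset.sum_insert h0T]
  have hinj : Function.Injective (fun i : Fin n => Finsupp.single i (1:ℕ)) := by
    intro i j hij
    by_contra hne
    have := congrFun (congrArg (fun g : (Fin n) →₀ ℕ => (g : Fin n → ℕ)) hij) i
    simp only [Finsupp.single_apply, if_true, eq_self_iff_true] at this
    rw [if_neg (fun h => hne h.symm)] at this
    simp at this
  rw [Finset.sum_image (fun i _ j _ h => hinj h)]
  rw [add_comm]
  congr 1
  · refine Finset.sum_congr rfl fun i _ => ?_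
    rw [Finsupp.support_single_ne_zero i one_ne_zero]
    simp [mul_comm]
  · simp

lemma lift_affine {a b : ℝ} (hab : a + b = 1) (x z : Fin n → ℝ) :
    lift (a • x + b • z) = a • lift x + b • lift z := by
  funext j
  refine Fin.lastCases ?_ ?_ j
  · simp [lift, hab]
  · intro i
    simp [lift]

lemma convex_dot (y : Fin (n+1) → ℝ) : Convex ℝ {x : Fin n → ℝ | 0 ≤ lift x ⬝ᵥ y} := by
  intro x hx z hz a b ha hb hab
  show 0 ≤ lift (a • x + b • z) ⬝ᵥ y
  rw [lift_affine hab, add_dotProduct, smul_dotProduct, smul_dotProduct]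
  exact add_nonneg (smul_nonneg ha hx) (smul_nonneg hb hz)

section KSos
variable {σ : Type*} {I : Ideal (MvPolynomial σ ℝ)} {k : ℕ}

lemma ksos_congr {f f' : MvPolynomial σ ℝ} (hff' : f - f' ∈ I) (h : IsKSos I k f') :
    IsKSos I k f := by
  obtain ⟨t, hh, hdeg, hmem⟩ := h
  refine ⟨t, hh, hdeg, ?_⟩
  have : f - ∑ j, hh j ^ 2 = (f - f') + (f' - ∑ j, hh j ^ 2) := by ring
  rw [this]
  exact Ideal.add_mem _ hff' hmem

lemma ksos_const {a : ℝ} (ha : 0 ≤ a) : IsKSos I k (C a) := by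
  refine ⟨1, fun _ => C (Real.sqrt a), fun _ => by simp [totalDegree_C], ?_⟩
  have : (C (Real.sqrt a) : MvPolynomial σ ℝ) ^ 2 = C a := by
    rw [← C_pow, sq, Real.mul_self_sqrt ha]
  simp [this]

lemma ksos_add {f g : MvPolynomial σ ℝ} (hf : IsKSos I k f) (hg : IsKSos I k g) :
    IsKSos I k (f + g) := by
  obtain ⟨t1, h1, hd1, hm1⟩ := hf
  obtain ⟨t2, h2, hd2, hm2⟩ := hg
  refine ⟨t1 + t2, Fin.append h1 h2, ?_, ?_⟩
  · intro j
    refine Fin.addCases ?_ ?_ j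
    · intro i; rw [Fin.append_left]; exact hd1 i
    · intro i; rw [Fin.append_right]; exact hd2 i
  · have hsum : ∑ j : Fin (t1 + t2), (Fin.append h1 h2 j) ^ 2
        = ∑ j : Fin t1, h1 j ^ 2 + ∑ j : Fin t2, h2 j ^ 2 := by
      rw [Fin.sum_univ_add]
      congr 1
      · exact Finset.sum_congr rfl fun j _ => by rw [Fin.append_left]
      · exact Finset.sum_congr rfl fun j _ => by rw [Fin.append_right]
    rw [hsum]
    have : f + g - (∑ j : Fin t1, h1 j ^ 2 + ∑ j : Fin t2, h2 j ^ 2)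
        = (f - ∑ j : Fin t1, h1 j ^ 2) + (g - ∑ j : Fin t2, h2 j ^ 2) := by ring
    rw [this]
    exact Ideal.add_mem _ hm1 hm2

lemma ksos_smul {f : MvPolynomial σ ℝ} {a : ℝ} (ha : 0 ≤ a) (hf : IsKSos I k f) :
    IsKSos I k (C a * f) := by
  obtain ⟨t, h, hd, hm⟩ := hf
  refine ⟨t, fun j => C (Real.sqrt a) * h j, ?_, ?_⟩
  · intro j
    refine le_trans (totalDegree_mul _ _) ?_
    rw [totalDegree_C, zero_add]
    exact hd j
  · have : ∀ j, (C (Real.sqrt a) * h j) ^ 2 = C a * (h j ^ 2) := by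
      intro j
      rw [mul_pow, ← C_pow, sq (Real.sqrt a), Real.mul_self_sqrt ha]
    simp only [this]
    rw [← Finset.mul_sum]
    have : C a * f - C a * ∑ j, h j ^ 2 = C a * (f - ∑ j, h j ^ 2) := by ring
    rw [this]
    exact Ideal.mul_mem_left _ _ hm

lemma ksos_sum {m : ℕ} {g : Fin m → MvPolynomial σ ℝ}
    (hg : ∀ i, IsKSos I k (g i)) : IsKSos I k (∑ i, g i) := by
  induction m with
  | zero => simpa using ksos_const (le_refl (0:ℝ)) (I := I) (k := k)
  | succ m ih =>
    rw [Fin.sum_univ_succ]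
    exact ksos_add (hg 0) (ih fun i => hg i.succ)

end KSos

end Poly
end StmtAux

open StmtAux Matrix Finset

/-- A nonempty finite set S ⊆ ℝ^n is exact if and only if there is a finite
linear inequality description `conv(S) = {x : g_i(x) ≥ 0, i = 1,...,m}` by degree-≤1
polynomials g_i each of which is 1-sos mod I(S). -/
theorem stmt_13 (n : ℕ) (S : Set (Fin n → ℝ)) (hfin : S.Finite) (hne : S.Nonempty) :
    IsExact S ↔
    ∃ (m : ℕ) (g : Fin m → MvPolynomial (Fin n) ℝ),
      (∀ i, (g i).totalDegree ≤ 1) ∧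
      convexHull ℝ S = {x | ∀ i, 0 ≤ eval x (g i)} ∧
      (∀ i, IsKSos (vanishingIdeal ℝ S) 1 (g i)) := by
  classical
  constructor
  · -- forward direction
    intro hex
    haveI := hfin.fintype
    set m0 := Fintype.card ↥S with hm0
    set eS := Fintype.equivFin ↥S with heS
    set sval : Fin m0 → (Fin n → ℝ) := fun j => ((eS.symm j : ↥S) : Fin n → ℝ) with hsval
    set u : Fin m0 → (Fin (n+1) → ℝ) := fun j => lift (sval j) with huu
    obtain ⟨κ, hκ, w, hw⟩ := minkowski u
    letI := hκ
    letI := Classical.decEq κ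
    set m := Fintype.card κ with hm
    set eqv := (Fintype.equivFin κ).symm with heqv
    set g : Fin m → MvPolynomial (Fin n) ℝ := fun i => polyOf (w (eqv i)) with hg
    have hwC : ∀ k : κ, ∀ j, 0 ≤ u j ⬝ᵥ w k := by
      intro k
      have : w k ∈ {y | ∀ j, 0 ≤ u j ⬝ᵥ y} := by rw [hw]; exact mem_coneI_self w k
      exact this
    have hgS : ∀ i, ∀ s ∈ S, 0 ≤ eval s (g i) := by
      intro i s hs
      rw [hg, eval_polyOf]
      have hsv : sval (eS ⟨s, hs⟩) = s := by rw [hsval]; simp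
      have := hwC (eqv i) (eS ⟨s, hs⟩)
      rw [huu] at this
      dsimp only at this
      rwa [hsv] at this
    refine ⟨m, g, fun i => totalDegree_polyOf _, ?_,
      fun i => hex (g i) (totalDegree_polyOf _) (hgS i)⟩
    apply Set.Subset.antisymm
    · refine convexHull_min (fun s hs i => hgS i s hs) ?_
      intro x hx z hz a b ha hb hab i
      have hx' : (0:ℝ) ≤ lift x ⬝ᵥ w (eqv i) := by
        have := hx i; rwa [hg, eval_polyOf] at this
      have hz' : (0:ℝ) ≤ lift z ⬝ᵥ w (eqv i) := by
        have := hz i; rwa [hg, eval_polyOf] at this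
      show (0:ℝ) ≤ eval (a • x + b • z) (g i)
      rw [hg, eval_polyOf]
      exact convex_dot (w (eqv i)) hx' hz' ha hb hab
    · intro x hx
      by_contra hxc
      obtain ⟨φ, u0, hφ1, hφ2⟩ := geometric_hahn_banach_closed_point
        (convex_convexHull ℝ S) (hfin.isClosed_convexHull (𝕜 := ℝ)) hxc
      set y : Fin (n+1) → ℝ := Fin.snoc (fun i => -(φ (Pi.single i 1))) u0 with hy
      have hφsum : ∀ z : Fin n → ℝ, φ z = ∑ i, z i * φ (Pi.single i 1) := by
        intro z
        have hzdec : z = ∑ i, z i • (Pi.single i 1 : Fin n → ℝ) := by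
          have h1 : ∀ i, z i • (Pi.single i 1 : Fin n → ℝ) = Pi.single i (z i) := by
            intro i
            funext j
            rcases eq_or_ne j i with rfl | hji
            · simp
            · simp [Pi.single_apply, hji]
          simp only [h1]
          exact (Finset.univ_sum_single z).symm
        conv_lhs => rw [hzdec]
        rw [map_sum]
        exact Finset.sum_congr rfl fun i _ => by
          rw [ContinuousLinearMap.map_smul, smul_eq_mul]
      have hyval : ∀ z : Fin n → ℝ, lift z ⬝ᵥ y = u0 - φ z := by
        intro z
        rw [dotProduct, Fin.sum_univ_castSucc]
        have h1 : ∀ i : Fin n, lift z i.castSucc * y i.castSucc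
            = z i * (-(φ (Pi.single i 1))) := by
          intro i
          rw [hy, lift]
          simp [Fin.snoc_castSucc]
        have h2 : lift z (Fin.last n) * y (Fin.last n) = u0 := by
          rw [hy, lift]
          simp [Fin.snoc_last]
        rw [h2]
        simp only [h1, mul_neg]
        rw [hφsum z, Finset.sum_neg_distrib]
        ring
      have hyC : ∀ j, 0 ≤ u j ⬝ᵥ y := by
        intro j
        rw [huu]
        dsimp only
        rw [hyval]
        have hsvS : sval j ∈ S := by rw [hsval]; exact (eS.symm j).2
        have := hφ1 (sval j) (subset_convexHull ℝ S hsvS)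
        linarith
      have hyK : y ∈ coneI w := by rw [← hw]; exact hyC
      have hxy : 0 ≤ lift x ⬝ᵥ y := by
        refine dotProduct_nonneg_of_mem_coneI (fun k => ?_) hyK
        have := hx (eqv.symm k)
        rw [hg, eval_polyOf] at this
        rwa [heqv, Equiv.apply_symm_apply] at this
      rw [hyval x] at hxy
      linarith
  · -- backward direction
    rintro ⟨m, g, hdeg, hconv, hsos⟩ f hfdeg hfS
    obtain ⟨cf, hcf⟩ := exists_vec hfdeg
    choose cg hcg using fun i => exists_vec (hdeg i)
    -- f is nonnegative on the convex hull of S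
    have hfconv : ∀ x ∈ convexHull ℝ S, 0 ≤ eval x f := by
      intro x hx
      have hsub : convexHull ℝ S ⊆ {x : Fin n → ℝ | 0 ≤ lift x ⬝ᵥ cf} :=
        convexHull_min (fun s hs => by
          show (0:ℝ) ≤ lift s ⬝ᵥ cf
          rw [← hcf]; exact hfS s hs) (convex_dot cf)
      rw [hcf]
      exact hsub hx
    set elast : Fin (n+1) → ℝ := Pi.single (Fin.last n) 1 with helast
    set u : Fin (m+1) → (Fin (n+1) → ℝ) := Fin.cons elast cg with hu
    have hfarkas : ∀ y : Fin (n+1) → ℝ, (∀ j : Fin (m+1), 0 ≤ u j ⬝ᵥ y) → 0 ≤ cf ⬝ᵥ y := by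
      intro y hy
      have hy0 : 0 ≤ y (Fin.last n) := by
        have := hy 0
        rwa [hu, Fin.cons_zero, helast, single_dotProduct, one_mul] at this
      have hyi : ∀ i : Fin m, 0 ≤ cg i ⬝ᵥ y := fun i => by
        have := hy i.succ
        rwa [hu, Fin.cons_succ] at this
      rcases eq_or_lt_of_le hy0 with hy0' | hy0'
      · -- y is a recession direction
        by_contra hneg
        push_neg at hneg
        obtain ⟨x0, hx0⟩ := hne
        have hx0c : x0 ∈ convexHull ℝ S := subset_convexHull ℝ S hx0
        set A : ℝ := lift x0 ⬝ᵥ cf with hA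
        have hA0 : 0 ≤ A := by rw [hA, ← hcf]; exact hfconv x0 hx0c
        set B : ℝ := cf ⬝ᵥ y with hB
        set r : ℝ := (A + 1) / (-B) with hr
        have hr0 : 0 ≤ r := by
          apply div_nonneg (by linarith) (by linarith)
        set xr : Fin n → ℝ := x0 + r • (fun i => y i.castSucc) with hxr
        have hliftxr : lift xr = lift x0 + r • y := by
          funext j
          refine Fin.lastCases ?_ ?_ j
          · simp only [lift, Fin.snoc_last, Pi.add_apply, Pi.smul_apply, smul_eq_mul]
            rw [← hy0']
            ring
          · intro i
            simp [lift, hxr]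
        have hxrconv : xr ∈ convexHull ℝ S := by
          rw [hconv]
          intro i
          rw [hcg i, hliftxr, add_dotProduct, smul_dotProduct, smul_eq_mul]
          have h1 : 0 ≤ lift x0 ⬝ᵥ cg i := by rw [← hcg i]
                                              have : x0 ∈ {x | ∀ i, 0 ≤ eval x (g i)} := by
                                                rw [← hconv]; exact hx0c
                                              exact this i
          have h2 : 0 ≤ y ⬝ᵥ cg i := by rw [dotProduct_comm]; exact hyi i
          positivity
        have hfinal := hfconv xr hxrconv
        rw [hcf, hliftxr, add_dotProduct, smul_dotProduct, smul_eq_mul] at hfinal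
        have hyB : y ⬝ᵥ cf = B := by rw [hB, dotProduct_comm]
        rw [hyB, ← hA] at hfinal
        have hrB : r * B = -(A + 1) := by
          have hBne : B ≠ 0 := ne_of_lt hneg
          rw [hr]
          rw [div_mul_eq_mul_div, mul_div_assoc, div_neg, div_self hBne]
          ring
        rw [hrB] at hfinal
        linarith
      · -- last coordinate positive: rescale to a point of conv S
        set t : ℝ := y (Fin.last n) with ht
        set x : Fin n → ℝ := fun i => y i.castSucc / t with hx
        have hliftx : lift x = t⁻¹ • y := by
          funext j
          refine Fin.lastCases ?_ ?_ j
          · simp only [lift, Fin.snoc_last, Pi.smul_apply, smul_eq_mul]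
            rw [← ht, inv_mul_cancel₀ (ne_of_gt hy0')]
          · intro i
            simp [lift, hx, div_eq_inv_mul]
        have hxconv : x ∈ convexHull ℝ S := by
          rw [hconv]
          intro i
          rw [hcg i, hliftx, smul_dotProduct, smul_eq_mul]
          have h2 : 0 ≤ y ⬝ᵥ cg i := by rw [dotProduct_comm]; exact hyi i
          positivity
        have hfinal := hfconv x hxconv
        rw [hcf, hliftx, smul_dotProduct, smul_eq_mul] at hfinal
        have hz : 0 ≤ y ⬝ᵥ cf := by
          by_contra hzneg
          push_neg at hzneg
          have : t⁻¹ * (y ⬝ᵥ cf) < 0 := mul_neg_of_pos_of_neg (inv_pos.mpr hy0') hzneg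
          linarith
        rwa [dotProduct_comm]
    obtain ⟨t, ht, hct⟩ := farkas u cf hfarkas
    have hid : ∀ x : Fin n → ℝ, eval x f = t 0 + ∑ i : Fin m, t i.succ * eval x (g i) := by
      intro x
      rw [hcf, hct, StmtAux.dotProduct_sum]
      rw [Fin.sum_univ_succ]
      congr 1
      · rw [hu, Fin.cons_zero, dotProduct_smul, helast, dotProduct_single, smul_eq_mul]
        have : lift x (Fin.last n) = 1 := by simp [lift]
        rw [this, one_mul, mul_one]
      · refine Finset.sum_congr rfl fun i _ => ?_
        rw [hu, Fin.cons_succ, dotProduct_smul, smul_eq_mul, ← hcg i]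
    have hf' : IsKSos (vanishingIdeal ℝ S) 1 (C (t 0) + ∑ i : Fin m, C (t i.succ) * g i) :=
      ksos_add (ksos_const (ht 0)) (ksos_sum fun i => ksos_smul (ht i.succ) (hsos i))
    refine ksos_congr ?_ hf'
    intro x hx
    change eval x _ = 0
    simp only [map_sub, map_add, map_sum, eval_C, eval_mul]
    rw [hid x]
    ring
end

section
/- Let S be a nonempty finite subset of R^n. Then S is exact if and only if there exist finitely many polynomials g_1,...,g_m of degree at most 1 such that conv(S) = {x in R^n : g_i(x) >= 0 for i = 1,...,m} and for each i there is a real number c_i >= 0 with g_i(s) in {0, c_i} for every s in S (i.e., every point of S lies either on the hyperplane g_i = 0 or on a single parallel translate of it). -/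
open MvPolynomial

noncomputable section
set_option linter.unusedSectionVars false
set_option maxHeartbeats 1000000
namespace Stmt14


section AffinePairs


variable {n : ℕ}

/-- affine evaluation of a pair `(a, b)` at `x`. -/
def av (p : (Fin n → ℝ) × ℝ) (x : Fin n → ℝ) : ℝ := ∑ i, p.1 i * x i + p.2

lemma av_add (p q : (Fin n → ℝ) × ℝ) (x) : av (p + q) x = av p x + av q x := by
  simp [av, add_mul, Finset.sum_add_distrib]; ring

lemma av_smul (c : ℝ) (p : (Fin n → ℝ) × ℝ) (x) : av (c • p) x = c * av p x := by
  simp [av, Finset.mul_sum, mul_add, mul_assoc]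

lemma av_zero (x : Fin n → ℝ) : av (0 : (Fin n → ℝ) × ℝ) x = 0 := by simp [av]

/-- `av` as a linear map in the pair. -/
def avL (x : Fin n → ℝ) : ((Fin n → ℝ) × ℝ) →ₗ[ℝ] ℝ where
  toFun p := av p x
  map_add' p q := av_add p q x
  map_smul' c p := av_smul c p x

/-- affine combination property -/
lemma av_affineComb (p : (Fin n → ℝ) × ℝ) {ι : Type*} (t : Finset ι) (w : ι → ℝ)
    (y : ι → Fin n → ℝ) (hw : ∑ k ∈ t, w k = 1) :
    av p (∑ k ∈ t, w k • y k) = ∑ k ∈ t, w k * av p (y k) := by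
  simp only [av, mul_add, Finset.sum_add_distrib, Finset.mul_sum, Finset.sum_apply,
    Pi.smul_apply, smul_eq_mul]
  rw [← Finset.sum_mul, hw, one_mul, Finset.sum_comm]
  congr 1
  refine Finset.sum_congr rfl fun k _ => Finset.sum_congr rfl fun i _ => by ring

lemma convex_av_nonneg (p : (Fin n → ℝ) × ℝ) : Convex ℝ {x | 0 ≤ av p x} := by
  intro x hx y hy a b ha hb hab
  have : av p (a • x + b • y) = a * av p x + b * av p y := by
    have := av_affineComb p (Finset.univ : Finset (Fin 2)) ![a, b] ![x, y] (by
      simp [Fin.sum_univ_two, hab])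
    simpa [Fin.sum_univ_two] using this
  simp only [Set.mem_setOf_eq] at hx hy ⊢
  rw [this]
  positivity


variable {n : ℕ}

/-- pair to polynomial -/
def toPoly (p : (Fin n → ℝ) × ℝ) : MvPolynomial (Fin n) ℝ :=
  (∑ i, C (p.1 i) * X i) + C p.2

lemma eval_toPoly (p : (Fin n → ℝ) × ℝ) (x : Fin n → ℝ) : eval x (toPoly p) = av p x := by
  simp [toPoly, av]

lemma totalDegree_toPoly (p : (Fin n → ℝ) × ℝ) : (toPoly p).totalDegree ≤ 1 := by
  refine le_trans (totalDegree_add _ _) ?_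
  simp only [totalDegree_C, max_le_iff]
  constructor
  · refine le_trans (totalDegree_finset_sum _ _) ?_
    refine Finset.sup_le fun i _ => le_trans (totalDegree_mul _ _) ?_
    simp [totalDegree_C, totalDegree_X]
  · omega

/-- every polynomial of total degree at most one is affine -/
lemma exists_pair_of_totalDegree_le_one (f : MvPolynomial (Fin n) ℝ) (hf : f.totalDegree ≤ 1) :
    ∃ p : (Fin n → ℝ) × ℝ, ∀ x, eval x f = av p x := by
  refine ⟨⟨fun i => coeff (Finsupp.single i 1) f, coeff 0 f⟩, fun x => ?_⟩
  have hclass : ∀ m : Fin n →₀ ℕ, m ∈ f.support →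
      m = 0 ∨ ∃ i, m = Finsupp.single i 1 := by
    intro m hm
    have hdeg : (∑ i ∈ m.support, m i) ≤ 1 := by
      have := le_totalDegree hm
      exact le_trans (le_of_eq rfl) (le_trans this hf)
    rcases Nat.le_one_iff_eq_zero_or_eq_one.mp hdeg with h0 | h1
    · left
      have hall := Finset.sum_eq_zero_iff_of_nonneg (fun i (_ : i ∈ m.support) =>
        Nat.zero_le (m i)) |>.mp h0
      rw [← Finsupp.support_eq_empty]
      rw [Finset.eq_empty_iff_forall_notMem]
      intro i hi
      exact (Finsupp.mem_support_iff.mp hi) (hall i hi)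
    · right
      obtain ⟨i, hi⟩ : m.support.Nonempty := by
        by_contra hne
        rw [Finset.not_nonempty_iff_eq_empty] at hne
        simp [hne] at h1
      have h1i : 1 ≤ m i := Nat.one_le_iff_ne_zero.mpr (Finsupp.mem_support_iff.mp hi)
      have hle := Finset.single_le_sum (fun i _ => Nat.zero_le (m i)) hi
      refine ⟨i, (Finsupp.eq_single_iff).mpr ⟨?_, by omega⟩⟩
      intro j hj
      simp only [Finset.mem_singleton]
      by_contra hne
      have h1j : 1 ≤ m j := Nat.one_le_iff_ne_zero.mpr (Finsupp.mem_support_iff.mp hj)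
      have : m i + m j ≤ ∑ k ∈ m.support, m k := by
        rw [show m i + m j = ∑ k ∈ ({i, j} : Finset (Fin n)), m k by
          rw [Finset.sum_pair (fun h => hne h.symm)]]
        exact Finset.sum_le_sum_of_subset (by
          intro k hk
          simp only [Finset.mem_insert, Finset.mem_singleton] at hk
          rcases hk with rfl | rfl <;> assumption)
      omega
  set T : Finset (Fin n →₀ ℕ) := insert 0 (Finset.univ.image fun i => Finsupp.single i 1) with hT
  have hsupp : f.support ⊆ T := by
    intro m hm
    rcases hclass m hm with rfl | ⟨i, rfl⟩
    · exact Finset.mem_insert_self _ _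
    · exact Finset.mem_insert_of_mem (Finset.mem_image_of_mem _ (Finset.mem_univ i))
  have h0T : (0 : Fin n →₀ ℕ) ∉ Finset.univ.image fun i => Finsupp.single i 1 := by
    simp only [Finset.mem_image, not_exists, not_and]
    intro i _
    intro h
    have := DFunLike.congr_fun h i
    simp at this
  rw [eval_eq, Finset.sum_subset hsupp (fun m _ hm => by
    rw [MvPolynomial.notMem_support_iff.mp hm, zero_mul]), hT,
    Finset.sum_insert h0T, Finset.sum_image (fun i _ j _ h =>
      Finsupp.single_left_injective one_ne_zero h)]
  simp only [av]
  rw [add_comm]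
  congr 1
  · refine Finset.sum_congr rfl fun i _ => ?_
    rw [Finsupp.support_single_ne_zero i one_ne_zero]
    simp [mul_comm]
  · simp


end AffinePairs

section Cones
variable {N : ℕ} {ι : Type*} [Fintype ι] [DecidableEq ι]

open Finset

variable {E : Type*} [NormedAddCommGroup E] [NormedSpace ℝ E] [FiniteDimensional ℝ E]
variable {ι : Type*} [Fintype ι] [DecidableEq ι]

def coneOf (v : ι → E) : Set E := {x | ∃ l : ι → ℝ, (∀ i, 0 ≤ l i) ∧ x = ∑ i, l i • v i}

lemma carath (v : ι → E) :
    ∀ (k : ℕ) (l : ι → ℝ), (univ.filter fun i => l i ≠ 0).card ≤ k → (∀ i, 0 ≤ l i) →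
    ∃ l' : ι → ℝ, (∀ i, 0 ≤ l' i) ∧ (∑ i, l' i • v i = ∑ i, l i • v i) ∧
      LinearIndependent ℝ (fun i : {i // l' i ≠ 0} => v i) := by
  intro k
  induction k with
  | zero =>
    intro l hcard hpos
    refine ⟨l, hpos, rfl, ?_⟩
    have hall : ∀ i, l i = 0 := by
      intro i
      by_contra h
      have : (univ.filter fun i => l i ≠ 0).Nonempty := ⟨i, by simp [h]⟩
      have := Finset.card_pos.mpr this
      omega
    have : IsEmpty {i // l i ≠ 0} := ⟨fun ⟨i, hi⟩ => hi (hall i)⟩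
    exact linearIndependent_empty_type
  | succ k ih =>
    intro l hcard hpos
    by_cases hind : LinearIndependent ℝ (fun i : {i // l i ≠ 0} => v i)
    · exact ⟨l, hpos, rfl, hind⟩
    · -- get a dependency c supported where l ≠ 0, with a positive entry
      obtain ⟨c, hcsum, hcsupp, i₁, hi₁⟩ : ∃ c : ι → ℝ, (∑ i, c i • v i = 0) ∧
          (∀ i, l i = 0 → c i = 0) ∧ ∃ i, 0 < c i := by
        obtain ⟨g, hgsum, j₀, hj₀⟩ := Fintype.not_linearIndependent_iff.mp hind
        have key : ∀ g : {i // l i ≠ 0} → ℝ,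
            ∑ i, (fun i : ι => if h : l i ≠ 0 then g ⟨i, h⟩ else 0) i • v i
              = ∑ i : {i // l i ≠ 0}, g i • v i := by
          intro g
          rw [← Finset.sum_filter_of_ne (p := fun i => l i ≠ 0)
            (f := fun i => (fun i : ι => if h : l i ≠ 0 then g ⟨i, h⟩ else 0) i • v i)
            (by intro i _ h; by_contra hli; simp [hli] at h),
            Finset.sum_subtype (p := fun i => l i ≠ 0) (univ.filter fun i => l i ≠ 0) (by simp)
              (fun i => (fun i : ι => if h : l i ≠ 0 then g ⟨i, h⟩ else 0) i • v i)]
          refine Finset.sum_congr rfl fun i _ => ?_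
          simp only [i.prop, dif_pos, ne_eq, not_false_iff, dite_true]
        rcases lt_or_ge 0 (g j₀) with hpos' | hneg
        · refine ⟨fun i => if h : l i ≠ 0 then g ⟨i, h⟩ else 0, by rw [key, hgsum], ?_, j₀, ?_⟩
          · intro i hli; simp [hli]
          · simpa [dif_pos j₀.prop] using hpos'
        · refine ⟨fun i => if h : l i ≠ 0 then (-g) ⟨i, h⟩ else 0, ?_, ?_, j₀, ?_⟩
          · rw [key]; simp [hgsum]
          · intro i hli; simp [hli]
          · have hlt : g j₀ < 0 := lt_of_le_of_ne hneg hj₀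
            simp only [dif_pos j₀.prop, Pi.neg_apply]
            have : (⟨(j₀ : ι), j₀.prop⟩ : {i // l i ≠ 0}) = j₀ := Subtype.ext rfl
            rw [this]
            linarith
      set F : Finset ι := univ.filter fun i => 0 < c i with hF
      have hFne : F.Nonempty := ⟨i₁, by simp [hF, hi₁]⟩
      obtain ⟨i₀, hi₀F, hmin⟩ := F.exists_min_image (fun i => l i / c i) hFne
      have hci₀ : 0 < c i₀ := by simpa [hF] using hi₀F
      set t : ℝ := l i₀ / c i₀ with ht
      have ht0 : 0 ≤ t := div_nonneg (hpos i₀) hci₀.le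
      set l' : ι → ℝ := fun i => l i - t * c i with hl'
      have hl'pos : ∀ i, 0 ≤ l' i := by
        intro i
        rcases le_or_gt (c i) 0 with hc | hc
        · have : t * c i ≤ 0 := mul_nonpos_of_nonneg_of_nonpos ht0 hc
          simp only [hl']; linarith [hpos i]
        · have hiF : i ∈ F := by simp [hF, hc]
          have := hmin i hiF
          have : t * c i ≤ l i := by
            rw [ht]
            calc l i₀ / c i₀ * c i ≤ l i / c i * c i := by
                  exact mul_le_mul_of_nonneg_right this hc.le
            _ = l i := div_mul_cancel₀ _ hc.ne'
          simp only [hl']; linarith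
      have hsum : ∑ i, l' i • v i = ∑ i, l i • v i := by
        simp only [hl', sub_smul, Finset.sum_sub_distrib, mul_smul]
        rw [← Finset.smul_sum, hcsum, smul_zero, sub_zero]
      have hsub : (univ.filter fun i => l' i ≠ 0) ⊂ (univ.filter fun i => l i ≠ 0) := by
        constructor
        · intro i hi
          simp only [Finset.mem_filter, Finset.mem_univ, true_and] at hi ⊢
          intro hli
          exact hi (by simp [hl', hcsupp i hli, hli])
        · intro hsub'
          have hmem : i₀ ∈ univ.filter fun i => l i ≠ 0 := by
            simp only [Finset.mem_filter, Finset.mem_univ, true_and]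
            intro h
            exact hci₀.ne' (hcsupp i₀ h)
          have : i₀ ∈ univ.filter fun i => l' i ≠ 0 := hsub' hmem
          simp only [Finset.mem_filter, Finset.mem_univ, true_and, hl'] at this
          apply this
          rw [ht]
          field_simp
          ring
        
      obtain ⟨l'', h1, h2, h3⟩ := ih l' (by
        have := Finset.card_lt_card hsub
        omega) hl'pos
      exact ⟨l'', h1, h2.trans hsum, h3⟩

theorem isClosed_coneOf (v : ι → E) : IsClosed (coneOf v) := by
  -- write as finite union over linearly independent subsets
  have : coneOf v = ⋃ (J : Finset ι) (_ : LinearIndependent ℝ (fun i : J => v i)),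
      (fun l : J → ℝ => ∑ i : J, l i • v i.val) '' {l | ∀ i, 0 ≤ l i} := by
    ext x
    constructor
    · rintro ⟨l, hl, rfl⟩
      obtain ⟨l', hl'pos, hl'sum, hl'ind⟩ :=
        carath v (univ.filter fun i => l i ≠ 0).card l le_rfl hl
      set J : Finset ι := univ.filter fun i => l' i ≠ 0 with hJ
      have hmemJ : ∀ i : J, l' i.val ≠ 0 := by
        intro i
        have := i.prop
        simp only [hJ, Finset.mem_filter, Finset.mem_univ, true_and] at this
        exact this
      have hind : LinearIndependent ℝ (fun i : J => v i) := by
        refine hl'ind.comp (fun i : J => (⟨i.val, hmemJ i⟩ : {i // l' i ≠ 0})) ?_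
        intro a b hab
        have := congrArg (fun z : {i // l' i ≠ 0} => z.val) hab
        exact Subtype.ext this
      refine Set.mem_iUnion.mpr ⟨J, Set.mem_iUnion.mpr ⟨hind, ⟨fun i => l' i.val,
        fun i => hl'pos i.val, ?_⟩⟩⟩
      rw [← hl'sum]
      rw [← Finset.sum_filter_of_ne (p := fun i => l' i ≠ 0)
        (f := fun i => l' i • v i) (by intro i _ h; by_contra hli; simp [hli] at h),
        Finset.sum_subtype (p := fun i => i ∈ J) J (by simp) (fun i => l' i • v i)]
    · intro hx
      obtain ⟨J, hJ⟩ := Set.mem_iUnion.mp hx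
      obtain ⟨hind, l, hl, rfl⟩ := Set.mem_iUnion.mp hJ
      classical
      refine ⟨fun i => if h : i ∈ J then l ⟨i, h⟩ else 0, fun i => by
        by_cases h : i ∈ J
        · simpa [h] using hl ⟨i, h⟩
        · simp [h], ?_⟩
      rw [← Finset.sum_filter_of_ne (p := fun i => i ∈ J)
        (f := fun i => (if h : i ∈ J then l ⟨i, h⟩ else 0) • v i)
        (by intro i _ h; by_contra hli; simp [hli] at h),
        Finset.sum_subtype (p := fun i => i ∈ J) (univ.filter fun i => i ∈ J) (by simp)
          (fun i => (if h : i ∈ J then l ⟨i, h⟩ else 0) • v i)]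
      refine Finset.sum_congr rfl fun i _ => ?_
      simp only [i.prop, dif_pos]
  rw [this]
  refine isClosed_iUnion_of_finite fun J => isClosed_iUnion_of_finite fun hind => ?_
  -- image of a closed set under an injective linear map
  have hinj : Function.Injective (fun l : J → ℝ => ∑ i : J, l i • v i.val) := by
    intro a b hab
    have := Fintype.linearIndependent_iff.mp hind (a - b) (by
      simp only [sub_smul, Finset.sum_sub_distrib, Pi.sub_apply]
      simpa [sub_eq_zero] using hab)
    funext i
    have := this i
    rw [Pi.sub_apply, sub_eq_zero] at this
    exact this
  let L : (J → ℝ) →ₗ[ℝ] E :=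
    { toFun := fun l => ∑ i : J, l i • v i.val
      map_add' := by intro a b; simp [add_smul, Finset.sum_add_distrib]
      map_smul' := by intro c a; simp [mul_smul, Finset.smul_sum]
      }
  have hL : IsClosedMap L := (L.isClosedEmbedding_of_injective (by
    rw [LinearMap.ker_eq_bot]; exact hinj)).isClosedMap
  have : IsClosed ({l : J → ℝ | ∀ i, 0 ≤ l i}) := by
    have : {l : J → ℝ | ∀ i, 0 ≤ l i} = ⋂ i, {l | 0 ≤ l i} := by ext; simp [Set.mem_iInter]
    rw [this]
    exact isClosed_iInter fun i => isClosed_le continuous_const (continuous_apply i)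
  exact hL _ this



lemma convex_coneOf (v : ι → (Fin N → ℝ)) : Convex ℝ (coneOf v) := by
  rintro x ⟨lx, hlx, rfl⟩ y ⟨ly, hly, rfl⟩ a b ha hb _
  refine ⟨fun i => a * lx i + b * ly i, fun i => add_nonneg (mul_nonneg ha (hlx i)) (mul_nonneg hb (hly i)), ?_⟩
  simp only [add_smul, mul_smul, Finset.sum_add_distrib, Finset.smul_sum]

lemma zero_mem_coneOf (v : ι → (Fin N → ℝ)) : 0 ∈ coneOf v :=
  ⟨0, fun i => le_rfl, by simp⟩

lemma smul_mem_coneOf (v : ι → (Fin N → ℝ)) {x} (hx : x ∈ coneOf v) {t : ℝ} (ht : 0 ≤ t) :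
    t • x ∈ coneOf v := by
  obtain ⟨l, hl, rfl⟩ := hx
  exact ⟨fun i => t * l i, fun i => mul_nonneg ht (hl i), by
    simp [Finset.smul_sum, mul_smul]⟩

lemma mem_coneOf_gen (v : ι → (Fin N → ℝ)) (i : ι) : v i ∈ coneOf v := by
  classical
  refine ⟨fun j => if j = i then 1 else 0, fun j => by positivity, ?_⟩
  simp [Finset.sum_ite_eq']

/-- separation from a finitely generated cone -/
lemma exists_separation (v : ι → (Fin N → ℝ)) (hclosed : IsClosed (coneOf v))
    (x : Fin N → ℝ) (hx : x ∉ coneOf v) :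
    ∃ μ : Fin N → ℝ, (∀ i, 0 ≤ ∑ k, μ k * v i k) ∧ ∑ k, μ k * x k < 0 := by
  obtain ⟨f, u, hfa, hux⟩ :=
    geometric_hahn_banach_closed_point (convex_coneOf v) hclosed hx
  have hu : 0 < u := by simpa using hfa 0 (zero_mem_coneOf v)
  have hfnonpos : ∀ a ∈ coneOf v, f a ≤ 0 := by
    intro a ha
    by_contra h
    push_neg at h
    have h2 : ((u + 1) / f a) • a ∈ coneOf v :=
      smul_mem_coneOf v ha (by positivity)
    have := hfa _ h2
    rw [map_smul, smul_eq_mul, div_mul_cancel₀ _ (ne_of_gt h)] at this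
    linarith
  have hrep : ∀ y : Fin N → ℝ, f y = ∑ k, y k * f (Pi.single k 1) := by
    intro y
    have hy : y = ∑ k, y k • (Pi.single k (1:ℝ) : Fin N → ℝ) := by
      rw [show (∑ k, y k • (Pi.single k (1:ℝ) : Fin N → ℝ))
            = ∑ k, (Pi.single k (y k) : Fin N → ℝ) from
          Finset.sum_congr rfl fun k _ => by
            ext j
            by_cases h : j = k <;> simp [Pi.single_apply, h]]
      rw [Finset.univ_sum_single y]
    conv_lhs => rw [hy]
    rw [map_sum]
    refine Finset.sum_congr rfl fun k _ => ?_
    rw [map_smul, smul_eq_mul]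
  refine ⟨fun k => -f (Pi.single k 1), fun i => ?_, ?_⟩
  · have := hfnonpos (v i) (mem_coneOf_gen v i)
    rw [hrep (v i)] at this
    have : ∑ k, v i k * -f (Pi.single k 1) = - ∑ k, v i k * f (Pi.single k 1) := by
      simp [Finset.sum_neg_distrib]
    simp only [mul_comm]
    rw [this]
    linarith [hfnonpos (v i) (mem_coneOf_gen v i), hrep (v i) ▸ hfnonpos (v i) (mem_coneOf_gen v i)]
  · have hx' : 0 < f x := lt_trans hu hux
    rw [hrep x] at hx'
    have : ∑ k, (fun k => -f (Pi.single k 1)) k * x k = - ∑ k, x k * f (Pi.single k 1) := by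
      rw [← Finset.sum_neg_distrib]
      refine Finset.sum_congr rfl fun k _ => by ring
    rw [this]
    linarith


end Cones

section KM
open Finset

variable {N : ℕ} (V : Submodule ℝ (Fin N → ℝ))

def Cs : Set (Fin N → ℝ) := {y | y ∈ V ∧ ∀ k, 0 ≤ y k}

def Ksl : Set (Fin N → ℝ) := {y | y ∈ Cs V ∧ ∑ k, y k = 1}

lemma convex_Ksl : Convex ℝ (Ksl V) := by
  rintro x ⟨⟨hxV, hxpos⟩, hxsum⟩ y ⟨⟨hyV, hypos⟩, hysum⟩ a b ha hb hab
  refine ⟨⟨V.add_mem (V.smul_mem a hxV) (V.smul_mem b hyV), fun k => ?_⟩, ?_⟩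
  · have : (a • x + b • y) k = a * x k + b * y k := by simp
    rw [this]
    exact add_nonneg (mul_nonneg ha (hxpos k)) (mul_nonneg hb (hypos k))
  · simp only [Pi.add_apply, Pi.smul_apply, smul_eq_mul, Finset.sum_add_distrib,
      ← Finset.mul_sum, hxsum, hysum]
    simpa using hab

lemma isClosed_Ksl : IsClosed (Ksl V) := by
  have h1 : IsClosed (V : Set (Fin N → ℝ)) := Submodule.closed_of_finiteDimensional V
  have h2 : IsClosed {y : Fin N → ℝ | ∀ k, 0 ≤ y k} := by
    have : {y : Fin N → ℝ | ∀ k, 0 ≤ y k} = ⋂ k, {y | 0 ≤ y k} := by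
      ext; simp [Set.mem_iInter]
    rw [this]
    exact isClosed_iInter fun k => isClosed_le continuous_const (continuous_apply k)
  have h3 : IsClosed {y : Fin N → ℝ | ∑ k, y k = 1} :=
    isClosed_eq (by continuity) continuous_const
  exact ((h1.inter h2).inter h3)

lemma isCompact_Ksl : IsCompact (Ksl V) := by
  refine IsCompact.of_isClosed_subset (isCompact_Icc (a := (0 : Fin N → ℝ)) (b := 1))
    (isClosed_Ksl V) ?_
  rintro y ⟨⟨_, hypos⟩, hysum⟩
  constructor
  · intro k; exact hypos k
  · intro k
    have : y k ≤ ∑ j, y j := Finset.single_le_sum (fun j _ => hypos j) (Finset.mem_univ k)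
    rw [hysum] at this
    simpa using this

/-- extreme points of the slice span the "zero-pattern" subspace -/
lemma extreme_spans {e : Fin N → ℝ} (he : e ∈ (Ksl V).extremePoints ℝ) :
    ∀ y ∈ V, (∀ k, e k = 0 → y k = 0) → ∃ μ : ℝ, y = μ • e := by
  obtain ⟨heK, hext⟩ := he
  obtain ⟨⟨heV, hepos⟩, hesum⟩ := heK
  intro y hyV hyz
  set σ : ℝ := ∑ k, y k with hσ
  set w : Fin N → ℝ := y - σ • e with hw
  by_cases hw0 : w = 0
  · exact ⟨σ, by rw [← sub_eq_zero]; exact hw0⟩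
  exfalso
  have hwV : w ∈ V := V.sub_mem hyV (V.smul_mem σ heV)
  have hwsum : ∑ k, w k = 0 := by
    simp only [hw, Pi.sub_apply, Pi.smul_apply, smul_eq_mul, Finset.sum_sub_distrib,
      ← Finset.mul_sum, hesum, mul_one, ← hσ, sub_self]
  have hwz : ∀ k, e k = 0 → w k = 0 := by
    intro k hk
    simp [hw, hk, hyz k hk]
  -- find small ε
  set P : Finset (Fin N) := univ.filter fun k => 0 < e k with hP
  have hPne : P.Nonempty := by
    by_contra h
    rw [Finset.not_nonempty_iff_eq_empty] at h
    have : ∀ k, e k = 0 := by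
      intro k
      rcases eq_or_lt_of_le (hepos k) with h0 | h1
      · exact h0.symm
      · exact absurd (by simp [hP, h1] : k ∈ P) (by simp [h])
    simp [this] at hesum
  obtain ⟨k₀, hk₀P, hmin⟩ := P.exists_min_image (fun k => e k) hPne
  have hm : 0 < e k₀ := by simpa [hP] using hk₀P
  have hNne : (univ : Finset (Fin N)).Nonempty := ⟨k₀, Finset.mem_univ _⟩
  set Wb : ℝ := univ.sup' hNne fun k => |w k| with hWb
  have hWb0 : 0 ≤ Wb :=
    le_trans (abs_nonneg (w k₀)) (Finset.le_sup' (fun k => |w k|) (Finset.mem_univ k₀))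
  set ε : ℝ := e k₀ / (Wb + 1) with hε
  have hε0 : 0 < ε := by positivity
  have key : ∀ k, 0 ≤ e k + ε * w k ∧ 0 ≤ e k - ε * w k := by
    intro k
    rcases eq_or_lt_of_le (hepos k) with h0 | h1
    · rw [← h0, hwz k h0.symm]
      norm_num
    · have hkP : k ∈ P := by simp [hP, h1]
      have h1' : e k₀ ≤ e k := hmin k hkP
      have habs : |ε * w k| ≤ ε * Wb := by
        rw [abs_mul, abs_of_pos hε0]
        exact mul_le_mul_of_nonneg_left
          (Finset.le_sup' (fun k => |w k|) (Finset.mem_univ k)) hε0.le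
      have : ε * Wb < e k₀ := by
        rw [hε]
        rw [div_mul_eq_mul_div, div_lt_iff₀ (by positivity)]
        nlinarith
      have h2 : |ε * w k| < e k := lt_of_le_of_lt habs (lt_of_lt_of_le this h1')
      rw [abs_lt] at h2
      constructor <;> linarith [h2.1, h2.2]
  have hmem : ∀ (s : ℝ), s = 1 ∨ s = -1 → e + (s * ε) • w ∈ Ksl V := by
    rintro s hs
    refine ⟨⟨V.add_mem heV (V.smul_mem _ hwV), fun k => ?_⟩, ?_⟩
    · have := key k
      rcases hs with rfl | rfl
      · simpa using this.1
      · have : 0 ≤ e k - ε * w k := this.2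
        simp only [Pi.add_apply, Pi.smul_apply, smul_eq_mul]
        linarith
    · simp only [Pi.add_apply, Pi.smul_apply, smul_eq_mul, Finset.sum_add_distrib,
        ← Finset.mul_sum, hwsum, mul_zero, add_zero, hesum]
  have h1m : e + ε • w ∈ Ksl V := by simpa using hmem 1 (Or.inl rfl)
  have h2m : e + (-ε) • w ∈ Ksl V := by
    have := hmem (-1) (Or.inr rfl)
    simpa using this
  have hseg : e ∈ openSegment ℝ (e + ε • w) (e + (-ε) • w) := by
    refine ⟨1/2, 1/2, by norm_num, by norm_num, by norm_num, ?_⟩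
    ext k
    simp only [Pi.add_apply, Pi.smul_apply, smul_eq_mul]
    ring
  have hh := hext h1m h2m hseg
  have : e + ε • w = e := hh
  have : ε • w = 0 := by
    have h := congrArg (· - e) this
    simpa [add_sub_cancel_left] using h
  exact hw0 (by
    have := congrArg (fun z => ε⁻¹ • z) this
    simpa [smul_smul, inv_mul_cancel₀ hε0.ne'] using this)

lemma finite_extremePoints : ((Ksl V).extremePoints ℝ).Finite := by
  classical
  have hinj : Set.InjOn (fun e => univ.filter fun k => e k = 0) ((Ksl V).extremePoints ℝ) := by
    intro e he e' he' hee
    simp only at hee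
    have hz : ∀ k, e k = 0 → e' k = 0 := by
      intro k hk
      have hmem : k ∈ univ.filter fun k => e k = 0 := by simp [hk]
      rw [hee] at hmem
      simpa using hmem
    obtain ⟨μ, hμ⟩ := extreme_spans V he e' he'.1.1.1 hz
    have hsum : ∑ k, e' k = 1 := he'.1.2
    have hsum' : ∑ k, e k = 1 := he.1.2
    rw [hμ] at hsum
    simp only [Pi.smul_apply, smul_eq_mul, ← Finset.mul_sum, hsum'] at hsum
    rw [hμ]
    rw [show μ = 1 by linarith]
    simp
  exact Set.Finite.of_finite_image (Set.toFinite _) hinj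

/-- Minkowski–Weyl style generation of `Cs` by "extreme" elements. -/
theorem exists_generators :
    ∃ (M : ℕ) (u : Fin M → Fin N → ℝ),
      (∀ j, u j ∈ Cs V) ∧
      (∀ j, ∑ k, u j k = 1) ∧
      (∀ j, ∀ y ∈ V, (∀ k, u j k = 0 → y k = 0) → ∃ μ : ℝ, y = μ • u j) ∧
      (∀ y ∈ Cs V, ∃ l : Fin M → ℝ, (∀ j, 0 ≤ l j) ∧ y = ∑ j, l j • u j) := by
  classical
  have hfin := finite_extremePoints V
  set Ext : Finset (Fin N → ℝ) := hfin.toFinset with hExt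
  have hKconv : convexHull ℝ (Ext : Set (Fin N → ℝ)) = Ksl V := by
    have h1 := closure_convexHull_extremePoints (isCompact_Ksl V) (convex_Ksl V)
    have h2 : (Ext : Set (Fin N → ℝ)) = (Ksl V).extremePoints ℝ := hfin.coe_toFinset
    rw [h2, ← (Set.Finite.isClosed_convexHull ℝ hfin).closure_eq]
    exact h1
  let M : ℕ := Ext.card
  let uEq := Ext.equivFin
  let u : Fin M → Fin N → ℝ := fun j => (uEq.symm j).val
  have hu : ∀ j, u j = (uEq.symm j).val := fun _ => rfl
  have huExt : ∀ j, u j ∈ (Ksl V).extremePoints ℝ := by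
    intro j
    exact hfin.mem_toFinset.mp (uEq.symm j).prop
  refine ⟨M, u, fun j => (huExt j).1.1, fun j => (huExt j).1.2,
    fun j => extreme_spans V (huExt j), ?_⟩
  intro y hy
  by_cases hy0 : y = 0
  · exact ⟨0, fun j => le_rfl, by simp [hy0]⟩
  have hexk : ∃ k, 0 < y k := by
    by_contra h
    push_neg at h
    exact hy0 (funext fun k => le_antisymm (h k) (hy.2 k))
  obtain ⟨k₁, hk₁⟩ := hexk
  have hσ : 0 < ∑ k, y k :=
    Finset.sum_pos' (fun k _ => hy.2 k) ⟨k₁, Finset.mem_univ _, hk₁⟩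
  set σ := ∑ k, y k with hσdef
  have hyK : σ⁻¹ • y ∈ Ksl V := by
    refine ⟨⟨V.smul_mem _ hy.1, fun k => by
      simpa using mul_nonneg (inv_nonneg.mpr hσ.le) (hy.2 k)⟩, ?_⟩
    simp only [Pi.smul_apply, smul_eq_mul, ← Finset.mul_sum, ← hσdef]
    exact inv_mul_cancel₀ hσ.ne'
  rw [← hKconv] at hyK
  rw [Finset.convexHull_eq] at hyK
  obtain ⟨w, hw0, hw1, hwc⟩ := hyK
  have hcm : Ext.centerMass w id = ∑ e ∈ Ext, w e • e := by
    rw [Finset.centerMass_eq_of_sum_1 _ _ hw1]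
    rfl
  rw [hcm] at hwc
  refine ⟨fun j => σ * w (u j), fun j => mul_nonneg hσ.le (hw0 _ (by
    rw [hu j]
    exact (uEq.symm j).prop)), ?_⟩
  have : ∑ j, (σ * w (u j)) • u j = σ • ∑ e ∈ Ext, w e • e := by
    rw [Finset.smul_sum, ← Finset.sum_attach Ext (fun e => σ • (w e • e)),
      ← Equiv.sum_comp uEq (fun j => (σ * w (u j)) • u j), Finset.univ_eq_attach]
    refine Finset.sum_congr rfl fun i _ => ?_
    simp only [u, Equiv.symm_apply_apply, smul_smul]
  rw [this, hwc, smul_smul, mul_inv_cancel₀ hσ.ne', one_smul]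


end KM

section Main


variable {n : ℕ}

/-! ### linear part lemmas -/

def lin (p : (Fin n → ℝ) × ℝ) (x : Fin n → ℝ) : ℝ := ∑ i, p.1 i * x i

lemma av_eq_lin (p : (Fin n → ℝ) × ℝ) (x) : av p x = lin p x + p.2 := rfl

lemma lin_add_right (p : (Fin n → ℝ) × ℝ) (x z) : lin p (x + z) = lin p x + lin p z := by
  simp [lin, mul_add, Finset.sum_add_distrib]

lemma lin_smul_right (p : (Fin n → ℝ) × ℝ) (t : ℝ) (z) : lin p (t • z) = t * lin p z := by
  simp only [lin, Pi.smul_apply, smul_eq_mul, Finset.mul_sum]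
  exact Finset.sum_congr rfl fun i _ => by ring

lemma lin_sum_right (p : (Fin n → ℝ) × ℝ) {ι : Type*} (t : Finset ι) (c : ι → ℝ)
    (z : ι → Fin n → ℝ) : lin p (∑ k ∈ t, c k • z k) = ∑ k ∈ t, c k * lin p (z k) := by
  classical
  induction t using Finset.induction with
  | empty => simp [lin]
  | insert _ _ hni ih =>
    rw [Finset.sum_insert hni, Finset.sum_insert hni, lin_add_right, lin_smul_right, ih]

lemma lin_eq_av_sub (p : (Fin n → ℝ) × ℝ) (x) : lin p x = av p x - p.2 := by
  rw [av_eq_lin]; ring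

/-- representation of a continuous linear functional on `Fin n → ℝ` -/
lemma clm_rep (φ : (Fin n → ℝ) →L[ℝ] ℝ) (y : Fin n → ℝ) :
    φ y = ∑ i, y i * φ (Pi.single i 1) := by
  have hy : y = ∑ k, y k • (Pi.single k (1:ℝ) : Fin n → ℝ) := by
    rw [show (∑ k, y k • (Pi.single k (1:ℝ) : Fin n → ℝ))
          = ∑ k, (Pi.single k (y k) : Fin n → ℝ) from
        Finset.sum_congr rfl fun k _ => by
          ext j
          by_cases h : j = k <;> simp [Pi.single_apply, h]]
    rw [Finset.univ_sum_single y]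
  conv_lhs => rw [hy]
  rw [map_sum]
  exact Finset.sum_congr rfl fun k _ => by rw [map_smul, smul_eq_mul]

/-! ### setup: enumeration of S and the restriction map -/

variable {S : Set (Fin n → ℝ)}

def NN (hfin : S.Finite) : ℕ := hfin.toFinset.card

def pt (hfin : S.Finite) (k : Fin (NN hfin)) : Fin n → ℝ :=
  (hfin.toFinset.equivFin.symm k).val

lemma pt_mem (hfin : S.Finite) (k) : pt hfin k ∈ S :=
  hfin.mem_toFinset.mp (hfin.toFinset.equivFin.symm k).prop

lemma exists_pt (hfin : S.Finite) {s} (hs : s ∈ S) : ∃ k, pt hfin k = s := by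
  refine ⟨hfin.toFinset.equivFin ⟨s, hfin.mem_toFinset.mpr hs⟩, ?_⟩
  simp [pt]

def Rmap (hfin : S.Finite) : ((Fin n → ℝ) × ℝ) →ₗ[ℝ] (Fin (NN hfin) → ℝ) :=
  LinearMap.pi fun k => avL (pt hfin k)

lemma Rmap_apply (hfin : S.Finite) (p) (k) : Rmap hfin p k = av p (pt hfin k) := rfl

/-! ### sos bridge -/

lemma isKSos_of_values (f : MvPolynomial (Fin n) ℝ) (t : ℕ) (q : Fin t → (Fin n → ℝ) × ℝ)
    (hq : ∀ s ∈ S, eval s f = ∑ j, (av (q j) s) ^ 2) :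
    IsKSos (vanishingIdeal ℝ S) 1 f := by
  refine ⟨t, fun j => toPoly (q j), fun j => totalDegree_toPoly _, ?_⟩
  rw [mem_vanishingIdeal_iff]
  intro x hx
  rw [map_sub, map_sum, aeval_eq_eval]
  rw [hq x hx]
  rw [sub_eq_zero]
  exact Finset.sum_congr rfl fun j _ => by rw [map_pow, eval_toPoly]

lemma values_of_isKSos (f : MvPolynomial (Fin n) ℝ)
    (hsos : IsKSos (vanishingIdeal ℝ S) 1 f) :
    ∃ (t : ℕ) (q : Fin t → (Fin n → ℝ) × ℝ), ∀ s ∈ S, eval s f = ∑ j, (av (q j) s) ^ 2 := by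
  obtain ⟨t, h, hdeg, hmem⟩ := hsos
  choose q hq using fun j => exists_pair_of_totalDegree_le_one (h j) (hdeg j)
  refine ⟨t, q, fun s hs => ?_⟩
  have := mem_vanishingIdeal_iff.mp hmem s hs
  rw [map_sub, map_sum, sub_eq_zero, aeval_eq_eval] at this
  rw [this]
  exact Finset.sum_congr rfl fun j _ => by rw [map_pow, hq j s]


end Main

section Dir
variable {n : ℕ} {S : Set (Fin n → ℝ)}



theorem backward (hfin : S.Finite) (hne : S.Nonempty)
    (hdesc : ∃ (m : ℕ) (g : Fin m → MvPolynomial (Fin n) ℝ),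
      (∀ i, (g i).totalDegree ≤ 1) ∧
      convexHull ℝ S = {x | ∀ i, 0 ≤ eval x (g i)} ∧
      (∀ i, ∃ c : ℝ, 0 ≤ c ∧ ∀ s ∈ S, eval s (g i) = 0 ∨ eval s (g i) = c)) :
    IsExact S := by
  classical
  obtain ⟨m, g, hdeg, hconv, h2⟩ := hdesc
  intro f hfdeg hfnn
  obtain ⟨pf, hpf⟩ := exists_pair_of_totalDegree_le_one f hfdeg
  choose gp hgp using fun i => exists_pair_of_totalDegree_le_one (g i) (hdeg i)
  -- f is nonnegative on the convex hull
  have hfc : ∀ x ∈ convexHull ℝ S, 0 ≤ av pf x := by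
    intro x hx
    have : convexHull ℝ S ⊆ {x | 0 ≤ av pf x} :=
      convexHull_min (fun s hs => by rw [Set.mem_setOf_eq, ← hpf]; exact hfnn s hs)
        (convex_av_nonneg pf)
    exact this hx
  -- the generators of the cone in ℝ^N
  set v : Fin (m+1) → (Fin (NN hfin) → ℝ) :=
    Fin.cons (fun _ => 1) (fun i => Rmap hfin (gp i)) with hv
  have hRpf : Rmap hfin pf ∈ coneOf v := by
    by_contra hnot
    obtain ⟨μ, hμv, hμx⟩ := exists_separation v (isClosed_coneOf v) _ hnot
    have hσ : 0 ≤ ∑ k, μ k := by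
      have := hμv 0
      simpa [hv] using this
    have hμg : ∀ i, 0 ≤ ∑ k, μ k * av (gp i) (pt hfin k) := by
      intro i
      have := hμv i.succ
      simpa [hv, Rmap_apply] using this
    have hμf : ∑ k, μ k * av pf (pt hfin k) < 0 := by
      simpa [Rmap_apply] using hμx
    rcases eq_or_lt_of_le hσ with hσ0 | hσpos
    · -- recession direction case
      obtain ⟨x₀, hx₀⟩ := hne
      set y : Fin n → ℝ := ∑ k, μ k • pt hfin k with hy
      have hliny : ∀ p : (Fin n → ℝ) × ℝ, lin p y = ∑ k, μ k * av p (pt hfin k) := by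
        intro p
        rw [hy, lin_sum_right]
        have : ∑ k, μ k * lin p (pt hfin k) = ∑ k, μ k * (av p (pt hfin k) - p.2) :=
          Finset.sum_congr rfl fun k _ => by rw [lin_eq_av_sub]
        rw [this]
        simp only [mul_sub, Finset.sum_sub_distrib, ← Finset.sum_mul, ← hσ0]
        ring
      have havt : ∀ (p : (Fin n → ℝ) × ℝ) (t : ℝ),
          av p (x₀ + t • y) = av p x₀ + t * ∑ k, μ k * av p (pt hfin k) := by
        intro p t
        rw [av_eq_lin, lin_add_right, lin_smul_right, hliny, av_eq_lin]
        ring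
      have hmemt : ∀ t : ℝ, 0 ≤ t → x₀ + t • y ∈ convexHull ℝ S := by
        intro t ht
        rw [hconv]
        intro i
        rw [hgp i, havt]
        have h0 : 0 ≤ av (gp i) x₀ := by
          have := (hconv ▸ subset_convexHull ℝ S) hx₀ i
          rwa [hgp i] at this
        exact add_nonneg h0 (mul_nonneg ht (hμg i))
      set A := ∑ k, μ k * av pf (pt hfin k) with hA
      set t : ℝ := (av pf x₀ + 1) / (-A) with htdef
      have hx₀c : 0 ≤ av pf x₀ := hfc x₀ (subset_convexHull ℝ S hx₀)
      have ht : 0 ≤ t := div_nonneg (by linarith) (by linarith)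
      have hfin2 := hfc _ (hmemt t ht)
      rw [havt pf t] at hfin2
      have htA : t * A = -(av pf x₀ + 1) := by
        rw [htdef]
        have : -A ≠ 0 := by linarith
        rw [div_mul_eq_mul_div, div_eq_iff this]
        ring
      rw [← hA] at hfin2
      linarith
    · -- interior case: build a point in the hull
      set x : Fin n → ℝ := ∑ k, ((∑ j, μ j)⁻¹ * μ k) • pt hfin k with hx
      have hw : ∑ k, (∑ j, μ j)⁻¹ * μ k = 1 := by
        rw [← Finset.mul_sum]
        exact inv_mul_cancel₀ (ne_of_gt hσpos)
      have havx : ∀ p : (Fin n → ℝ) × ℝ,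
          av p x = (∑ j, μ j)⁻¹ * ∑ k, μ k * av p (pt hfin k) := by
        intro p
        rw [hx, av_affineComb p _ _ _ hw, Finset.mul_sum]
        exact Finset.sum_congr rfl fun k _ => by ring
      have hxconv : x ∈ convexHull ℝ S := by
        rw [hconv]
        intro i
        rw [hgp i, havx]
        exact mul_nonneg (inv_nonneg.mpr hσpos.le) (hμg i)
      have := hfc x hxconv
      rw [havx] at this
      nlinarith [inv_pos.mpr hσpos]
  -- extract multipliers
  obtain ⟨l, hl, hsum⟩ := hRpf
  have hvals : ∀ s ∈ S, eval s f = l 0 + ∑ i, l i.succ * eval s (g i) := by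
    intro s hs
    obtain ⟨k, rfl⟩ := exists_pt hfin hs
    have := congrFun hsum k
    rw [Rmap_apply] at this
    rw [hpf] at *
    rw [this]
    simp only [Finset.sum_apply, Pi.smul_apply, smul_eq_mul]
    rw [Fin.sum_univ_succ]
    simp only [hv, Fin.cons_zero, Fin.cons_succ, mul_one]
    congr 1
    exact Finset.sum_congr rfl fun i _ => by rw [Rmap_apply, hgp i]
  -- the two-level constants
  choose c hc0 hcv using h2
  -- build the sos certificate
  refine ⟨m + 1, Fin.cons (C (Real.sqrt (l 0)))
    (fun i => if 0 < c i then C (Real.sqrt (l i.succ / c i)) * g i else 0), fun j => ?_, ?_⟩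
  · refine Fin.cases ?_ (fun i => ?_) j
    · simp [totalDegree_C]
    · rw [Fin.cons_succ]
      split_ifs
      · refine le_trans (totalDegree_mul _ _) ?_
        simp [totalDegree_C, hdeg i]
      · simp
  · rw [mem_vanishingIdeal_iff]
    intro s hs
    rw [map_sub, map_sum, sub_eq_zero, aeval_eq_eval, hvals s hs, Fin.sum_univ_succ]
    congr 1
    · rw [Fin.cons_zero, map_pow, eval_C, Real.sq_sqrt (by
        have := hl 0
        exact this)]
    · refine Finset.sum_congr rfl fun i _ => ?_
      rw [Fin.cons_succ]
      split_ifs with hci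
      · rw [map_pow, map_mul, eval_C]
        rcases hcv i s hs with h0 | h1
        · rw [h0]; ring
        · rw [h1, mul_pow, Real.sq_sqrt (div_nonneg (hl i.succ) (hc0 i))]
          field_simp
      · have hci0 : c i = 0 := le_antisymm (not_lt.mp hci) (hc0 i)
        rcases hcv i s hs with h0 | h1
        · rw [h0]; simp
        · rw [h1, hci0]; simp




lemma av_neg (p : (Fin n → ℝ) × ℝ) (x) : av (-p) x = -av p x :=
  map_neg (avL x) p

theorem forward (hfin : S.Finite) (hne : S.Nonempty) (hex : IsExact S) :
    ∃ (m : ℕ) (g : Fin m → MvPolynomial (Fin n) ℝ),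
      (∀ i, (g i).totalDegree ≤ 1) ∧
      convexHull ℝ S = {x | ∀ i, 0 ≤ eval x (g i)} ∧
      (∀ i, ∃ c : ℝ, 0 ≤ c ∧ ∀ s ∈ S, eval s (g i) = 0 ∨ eval s (g i) = c) := by
  classical
  set R := Rmap hfin with hR
  set V : Submodule ℝ (Fin (NN hfin) → ℝ) := LinearMap.range R with hV
  obtain ⟨M, u, hu1, hu2, hu3, hu4⟩ := exists_generators V
  -- lift the generators to affine pairs
  have : ∀ j, ∃ p, R p = u j := fun j => (hu1 j).1
  choose pu hpu using this
  -- basis of the kernel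
  set d : ℕ := Module.finrank ℝ (LinearMap.ker R) with hd
  set B := Module.finBasis ℝ (LinearMap.ker R) with hB
  set wb : Fin d → (Fin n → ℝ) × ℝ := fun b => ((B b : LinearMap.ker R) : (Fin n → ℝ) × ℝ)
    with hwb
  have hwbker : ∀ b, R (wb b) = 0 := fun b => (B b).prop
  have hwbS : ∀ b, ∀ s ∈ S, av (wb b) s = 0 := by
    intro b s hs
    obtain ⟨k, rfl⟩ := exists_pt hfin hs
    have := congrFun (hwbker b) k
    rwa [Rmap_apply] at this
  have hker_rep : ∀ p ∈ LinearMap.ker R, ∀ x : Fin n → ℝ,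
      (∀ b, av (wb b) x = 0) → av p x = 0 := by
    intro p hp x hwx
    have hrepr := B.sum_repr ⟨p, hp⟩
    have : p = ∑ b, (B.repr ⟨p, hp⟩) b • wb b := by
      have := congrArg (Submodule.subtype (LinearMap.ker R)) hrepr
      rw [map_sum] at this
      simp only [map_smul] at this
      exact this.symm
    rw [this]
    have : av (∑ b, (B.repr ⟨p, hp⟩) b • wb b) x
        = ∑ b, (B.repr ⟨p, hp⟩) b * av (wb b) x := by
      rw [show ∀ q, av q x = avL x q from fun q => rfl, map_sum]
      exact Finset.sum_congr rfl fun b _ => by rw [map_smul, smul_eq_mul]; rfl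
    rw [this]
    exact Finset.sum_eq_zero fun b _ => by rw [hwx b, mul_zero]
  -- nonnegativity of generators on S
  have hpuS : ∀ j, ∀ s ∈ S, 0 ≤ av (pu j) s := by
    intro j s hs
    obtain ⟨k, rfl⟩ := exists_pt hfin hs
    have : av (pu j) (pt hfin k) = u j k := by rw [← Rmap_apply hfin, hpu j]
    rw [this]
    exact (hu1 j).2 k
  -- two-level property of the generators, using exactness
  have h2lvl : ∀ j, ∃ c : ℝ, 0 ≤ c ∧ ∀ s ∈ S, av (pu j) s = 0 ∨ av (pu j) s = c := by
    intro j
    have hsos := hex (toPoly (pu j)) (totalDegree_toPoly _)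
      (fun s hs => by rw [eval_toPoly]; exact hpuS j s hs)
    obtain ⟨t, q, hq⟩ := values_of_isKSos _ hsos
    simp only [eval_toPoly] at hq
    -- each q i restricted to S is a multiple of u j
    have hmul : ∀ i, ∃ μ : ℝ, R (q i) = μ • u j := by
      intro i
      refine hu3 j (R (q i)) (LinearMap.mem_range_self R (q i)) ?_
      intro k hk
      have h0 : av (pu j) (pt hfin k) = 0 := by
        rw [← Rmap_apply hfin, hpu j, hk]
      have hq' := hq (pt hfin k) (pt_mem hfin k)
      rw [h0] at hq'
      have : ∀ i' ∈ Finset.univ, (av (q i') (pt hfin k)) ^ 2 = 0 := by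
        refine (Finset.sum_eq_zero_iff_of_nonneg (fun i' _ => sq_nonneg _)).mp hq'.symm
      have := this i (Finset.mem_univ i)
      rw [Rmap_apply]
      exact pow_eq_zero_iff (by norm_num) |>.mp this
    choose μ hμ using hmul
    set Ks : ℝ := ∑ i, μ i ^ 2 with hKs
    have hKs0 : 0 ≤ Ks := Finset.sum_nonneg fun i _ => sq_nonneg _
    have hvals : ∀ k, u j k = Ks * (u j k) ^ 2 := by
      intro k
      have hq' := hq (pt hfin k) (pt_mem hfin k)
      have hL : av (pu j) (pt hfin k) = u j k := by rw [← Rmap_apply hfin, hpu j]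
      have hqi : ∀ i, av (q i) (pt hfin k) = μ i * u j k := by
        intro i
        have h := congrFun (hμ i) k
        rw [Rmap_apply] at h
        rw [h]
        simp
      calc u j k = ∑ i, (av (q i) (pt hfin k)) ^ 2 := by rw [← hL, hq']
        _ = ∑ i, μ i ^ 2 * (u j k) ^ 2 := by
            refine Finset.sum_congr rfl fun i _ => ?_
            rw [hqi i]
            ring
        _ = Ks * (u j k) ^ 2 := by rw [hKs, Finset.sum_mul]
    have hKspos : 0 < Ks := by
      rcases eq_or_lt_of_le hKs0 with h0 | h1
      · exfalso
        have hzero : ∀ k, u j k = 0 := fun k => by rw [hvals k, ← h0, zero_mul]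
        have h1 : (1:ℝ) = 0 := (hu2 j).symm.trans (Finset.sum_eq_zero fun k _ => hzero k)
        exact one_ne_zero h1
      · exact h1
    refine ⟨Ks⁻¹, inv_nonneg.mpr hKs0, fun s hs => ?_⟩
    obtain ⟨k, rfl⟩ := exists_pt hfin hs
    have hL : av (pu j) (pt hfin k) = u j k := by rw [← Rmap_apply hfin, hpu j]
    rw [hL]
    rcases eq_or_ne (u j k) 0 with h0 | hne'
    · exact Or.inl h0
    · right
      have hfact : u j k * (Ks * u j k - 1) = 0 := by linear_combination (-1 : ℝ) * hvals k
      rcases mul_eq_zero.mp hfact with h | h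
      · exact absurd h hne'
      · have hmul : u j k * Ks = 1 := by linarith [h]
        exact eq_inv_of_mul_eq_one_left hmul
  choose cs hcs0 hcs using h2lvl
  -- assemble the inequality description
  set pe : Fin (M + (d + d)) → (Fin n → ℝ) × ℝ :=
    Fin.append pu (Fin.append wb fun b => -(wb b)) with hpe
  have hpepu : ∀ j, pe (Fin.castAdd (d + d) j) = pu j := by
    intro j
    rw [hpe, Fin.append_left]
  have hpewb1 : ∀ b, pe (Fin.natAdd M (Fin.castAdd d b)) = wb b := by
    intro b
    rw [hpe, Fin.append_right, Fin.append_left]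
  have hpewb2 : ∀ b, pe (Fin.natAdd M (Fin.natAdd d b)) = -(wb b) := by
    intro b
    rw [hpe, Fin.append_right, Fin.append_right]
  have hpenn : ∀ i, ∀ s ∈ S, 0 ≤ av (pe i) s := by
    intro i s hs
    refine Fin.addCases (motive := fun i => 0 ≤ av (pe i) s) (fun j => ?_) (fun b => ?_) i
    · show 0 ≤ av (pe (Fin.castAdd (d + d) j)) s
      rw [hpepu j]
      exact hpuS j s hs
    · refine Fin.addCases (motive := fun b => 0 ≤ av (pe (Fin.natAdd M b)) s)
        (fun b' => ?_) (fun b' => ?_) b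
      · show 0 ≤ av (pe (Fin.natAdd M (Fin.castAdd d b'))) s
        rw [hpewb1 b', hwbS b' s hs]
      · show 0 ≤ av (pe (Fin.natAdd M (Fin.natAdd d b'))) s
        rw [hpewb2 b', av_neg, hwbS b' s hs, neg_zero]
  have hpe2lvl : ∀ i, ∃ c : ℝ, 0 ≤ c ∧ ∀ s ∈ S, av (pe i) s = 0 ∨ av (pe i) s = c := by
    intro i
    refine Fin.addCases (motive := fun i => ∃ c : ℝ, 0 ≤ c ∧
      ∀ s ∈ S, av (pe i) s = 0 ∨ av (pe i) s = c) (fun j => ?_) (fun b => ?_) i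
    · show ∃ c : ℝ, 0 ≤ c ∧ ∀ s ∈ S,
        av (pe (Fin.castAdd (d + d) j)) s = 0 ∨ av (pe (Fin.castAdd (d + d) j)) s = c
      refine ⟨cs j, hcs0 j, fun s hs => ?_⟩
      rw [hpepu j]
      exact hcs j s hs
    · refine Fin.addCases (motive := fun b => ∃ c : ℝ, 0 ≤ c ∧
        ∀ s ∈ S, av (pe (Fin.natAdd M b)) s = 0 ∨ av (pe (Fin.natAdd M b)) s = c)
        (fun b' => ?_) (fun b' => ?_) b
      · exact ⟨0, le_rfl, fun s hs => Or.inl (by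
          show av (pe (Fin.natAdd M (Fin.castAdd d b'))) s = 0
          rw [hpewb1 b', hwbS b' s hs])⟩
      · exact ⟨0, le_rfl, fun s hs => Or.inl (by
          show av (pe (Fin.natAdd M (Fin.natAdd d b'))) s = 0
          rw [hpewb2 b', av_neg, hwbS b' s hs, neg_zero])⟩
  refine ⟨M + (d + d), fun i => toPoly (pe i), fun i => totalDegree_toPoly _, ?_, ?_⟩
  · -- convex hull equality
    apply le_antisymm
    · -- ⊆
      refine convexHull_min ?_ ?_
      · intro s hs i
        simp only [Set.mem_setOf_eq, eval_toPoly]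
        exact hpenn i s hs
      · have hset : {x : Fin n → ℝ | ∀ i, 0 ≤ eval x (toPoly (pe i))}
            = ⋂ i, {x | 0 ≤ av (pe i) x} := by
          ext x
          simp [eval_toPoly, Set.mem_iInter]
        rw [hset]
        exact convex_iInter fun i => convex_av_nonneg (pe i)
    · -- ⊇
      intro x hx
      simp only [Set.mem_setOf_eq, eval_toPoly] at hx
      have hxpu : ∀ j, 0 ≤ av (pu j) x := by
        intro j
        have := hx (Fin.castAdd (d + d) j)
        rwa [hpe, Fin.append_left] at this
      have hxw : ∀ b, av (wb b) x = 0 := by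
        intro b
        have h1 := hx (Fin.natAdd M (Fin.castAdd d b))
        have h2 := hx (Fin.natAdd M (Fin.natAdd d b))
        rw [hpe, Fin.append_right, Fin.append_left] at h1
        rw [hpe, Fin.append_right, Fin.append_right, av_neg] at h2
        linarith
      by_contra hxc
      obtain ⟨φ, r, hφ, hr⟩ := geometric_hahn_banach_closed_point
        (convex_convexHull ℝ S) (hfin.isClosed_convexHull ℝ) hxc
      set qx : (Fin n → ℝ) × ℝ := (fun i => -φ (Pi.single i 1), r) with hqx
      have havq : ∀ y, av qx y = r - φ y := by
        intro y
        rw [av_eq_lin]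
        have : lin qx y = -φ y := by
          rw [lin, clm_rep φ y, ← Finset.sum_neg_distrib]
          exact Finset.sum_congr rfl fun i _ => by simp [hqx]; ring
        rw [this, hqx]
        ring
      have hqS : R qx ∈ Cs V := by
        refine ⟨LinearMap.mem_range_self R qx, fun k => ?_⟩
        rw [Rmap_apply, havq]
        have := hφ _ (subset_convexHull ℝ S (pt_mem hfin k))
        linarith
      obtain ⟨l, hl, hlsum⟩ := hu4 (R qx) hqS
      set psum : (Fin n → ℝ) × ℝ := ∑ j, l j • pu j with hpsum
      have hkerdiff : qx - psum ∈ LinearMap.ker R := by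
        rw [LinearMap.mem_ker, map_sub, hpsum, map_sum]
        rw [sub_eq_zero, hlsum]
        exact Finset.sum_congr rfl fun j _ => by rw [map_smul, hpu j]
      have hav0 : av (qx - psum) x = 0 := hker_rep _ hkerdiff x hxw
      have havpsum : av psum x = ∑ j, l j * av (pu j) x := by
        rw [show ∀ q, av q x = avL x q from fun q => rfl, hpsum, map_sum]
        exact Finset.sum_congr rfl fun j _ => by rw [map_smul, smul_eq_mul]; rfl
      have h1 : av qx x = av psum x := by
        have : av (qx - psum) x = av qx x - av psum x := map_sub (avL x) qx psum
        rw [this] at hav0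
        linarith
      have h2 : 0 ≤ av psum x := by
        rw [havpsum]
        exact Finset.sum_nonneg fun j _ => mul_nonneg (hl j) (hxpu j)
      rw [havq] at h1
      linarith
  · -- two-level property
    intro i
    obtain ⟨c, hc0, hc⟩ := hpe2lvl i
    refine ⟨c, hc0, fun s hs => ?_⟩
    simp only [eval_toPoly]
    exact hc s hs


end Dir
end Stmt14
end

/-- A nonempty finite set S ⊆ ℝ^n is exact if and only if there is a finite
linear inequality description `conv(S) = {x : g_i(x) ≥ 0, i = 1,...,m}` by degree-≤1
polynomials g_i such that every point of S lies either on the hyperplane g_i = 0 or on a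
single parallel translate of it, i.e. g_i takes only the values 0 and some c_i ≥ 0 on S. -/
theorem stmt_14 (n : ℕ) (S : Set (Fin n → ℝ)) (hfin : S.Finite) (hne : S.Nonempty) :
    IsExact S ↔
    ∃ (m : ℕ) (g : Fin m → MvPolynomial (Fin n) ℝ),
      (∀ i, (g i).totalDegree ≤ 1) ∧
      convexHull ℝ S = {x | ∀ i, 0 ≤ eval x (g i)} ∧
      (∀ i, ∃ c : ℝ, 0 ≤ c ∧ ∀ s ∈ S, eval s (g i) = 0 ∨ eval s (g i) = c) := by
  exact ⟨fun hex => Stmt14.forward hfin hne hex, fun h => Stmt14.backward hfin hne h⟩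
end

section
/- Let S be a nonempty finite subset of R^n and let t be a positive integer. Suppose there exist finitely many polynomials g_1,...,g_m of degree at most 1 such that conv(S) = {x in R^n : g_i(x) >= 0 for i = 1,...,m} and each g_i takes at most t+1 distinct values on S (equivalently, for each facet F of conv(S) there is a hyperplane H_F with H_F \cap conv(S) = F such that S is contained in at most t+1 parallel translates of H_F). Then I(S) is TH_t-exact, i.e., TH_t(I(S)) = conv(S). -/
open MvPolynomial

-- affine evaluation lemma
lemma eval_affine {n : ℕ} {f : MvPolynomial (Fin n) ℝ} (hf : f.totalDegree ≤ 1)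
    (x y : Fin n → ℝ) (a b : ℝ) (hab : a + b = 1) :
    eval (a • x + b • y) f = a * eval x f + b * eval y f := by
  have key : ∀ d ∈ f.support,
      eval (a • x + b • y) (monomial d (coeff d f))
        = a * eval x (monomial d (coeff d f)) + b * eval y (monomial d (coeff d f)) := by
    intro d hd
    have hdeg : d.sum (fun _ e => e) ≤ 1 := le_trans (le_totalDegree hd) hf
    by_cases hd0 : d = 0
    · subst hd0
      simp only [eval_monomial, Finsupp.prod_zero_index, mul_one]
      rw [← add_mul, hab, one_mul]
    · obtain ⟨i, hi⟩ := Finsupp.ne_iff.mp hd0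
      have hi' : i ∈ d.support := Finsupp.mem_support_iff.mpr (by simpa using hi)
      have hsum : d.sum (fun _ e => e) = ∑ j ∈ d.support, d j := rfl
      have h1 : d i ≤ ∑ j ∈ d.support, d j :=
        Finset.single_le_sum (fun j _ => Nat.zero_le _) hi'
      have hdi : d i = 1 := by
        have : 1 ≤ d i := Nat.one_le_iff_ne_zero.mpr (by simpa using hi)
        omega
      have hdeq : d = Finsupp.single i 1 := by
        ext j
        by_cases hji : j = i
        · simp [hji, hdi]
        · have hij : ¬ i = j := fun h => hji h.symm
          by_contra hne
          have hj' : j ∈ d.support := Finsupp.mem_support_iff.mpr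
            (by simpa [Finsupp.single_apply, hij] using hne)
          have : d i + d j ≤ ∑ k ∈ d.support, d k := by
            rw [← Finset.sum_pair (by exact fun h => hji (h.symm ▸ rfl) : i ≠ j)]
            exact Finset.sum_le_sum_of_subset (by
              intro k hk
              simp only [Finset.mem_insert, Finset.mem_singleton] at hk
              rcases hk with h | h <;> simp [h, hi', hj'])
          have hdj : 1 ≤ d j := Nat.one_le_iff_ne_zero.mpr
            (by simpa [Finsupp.single_apply, hij] using hne)
          omega
      subst hdeq
      simp only [eval_monomial]
      rw [Finsupp.prod_single_index (by simp), Finsupp.prod_single_index (by simp),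
        Finsupp.prod_single_index (by simp)]
      simp only [pow_one, Pi.add_apply, Pi.smul_apply, smul_eq_mul]
      ring
  calc eval (a • x + b • y) f
      = ∑ d ∈ f.support, eval (a • x + b • y) (monomial d (coeff d f)) := by
        conv_lhs => rw [f.as_sum]
        rw [map_sum]
    _ = ∑ d ∈ f.support, (a * eval x (monomial d (coeff d f))
          + b * eval y (monomial d (coeff d f))) := Finset.sum_congr rfl key
    _ = a * eval x f + b * eval y f := by
        rw [Finset.sum_add_distrib, ← Finset.mul_sum, ← Finset.mul_sum,
          ← map_sum, ← map_sum]
        conv_rhs => rw [f.as_sum]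

lemma totalDegree_polyaeval {n : ℕ} {g : MvPolynomial (Fin n) ℝ} (hg : g.totalDegree ≤ 1)
    (p : Polynomial ℝ) : (Polynomial.aeval g p).totalDegree ≤ p.natDegree := by
  rw [Polynomial.aeval_def, Polynomial.eval₂_eq_sum, Polynomial.sum_def]
  refine totalDegree_finsetSum_le fun k hk => ?_
  calc (algebraMap ℝ (MvPolynomial (Fin n) ℝ) (p.coeff k) * g ^ k).totalDegree
      ≤ (algebraMap ℝ (MvPolynomial (Fin n) ℝ) (p.coeff k)).totalDegree + (g ^ k).totalDegree :=
        totalDegree_mul _ _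
    _ ≤ 0 + k * g.totalDegree := by
        gcongr
        · exact le_of_eq (totalDegree_C _)
        · exact totalDegree_pow _ _
    _ ≤ 0 + k * 1 := by gcongr
    _ = k := by omega
    _ ≤ p.natDegree := Polynomial.le_natDegree_of_mem_supp _ hk


/-- Let S ⊆ ℝ^n be nonempty and finite and let t be a positive integer.
Suppose conv(S) = {x : g_i(x) ≥ 0, i = 1,...,m} for degree-≤1 polynomials g_i each of
which takes at most t+1 distinct values on S. Then I(S) is TH_t-exact, i.e.
TH_t(I(S)) = conv(S). -/
theorem stmt_15 (n t : ℕ) (ht : 0 < t) (S : Set (Fin n → ℝ)) (hfin : S.Finite)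
    (hne : S.Nonempty) (m : ℕ) (g : Fin m → MvPolynomial (Fin n) ℝ)
    (hdeg : ∀ i, (g i).totalDegree ≤ 1)
    (hconv : convexHull ℝ S = {x | ∀ i, 0 ≤ eval x (g i)})
    (hvals : ∀ i, ((fun s => eval s (g i)) '' S).ncard ≤ t + 1) :
    thetaBody (vanishingIdeal ℝ S) t = convexHull ℝ S := by
  apply Set.Subset.antisymm
  · -- thetaBody ⊆ convexHull
    intro x hx
    rw [hconv]
    intro i
    -- build the sos certificate for g i
    set img : Set ℝ := (fun s => eval s (g i)) '' S with himg
    have himgfin : img.Finite := hfin.image _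
    set V : Finset ℝ := himgfin.toFinset with hV
    have hcard : V.card ≤ t + 1 := by
      rw [hV, ← Set.ncard_eq_toFinset_card _ himgfin]
      exact hvals i
    set p : Polynomial ℝ := Lagrange.interpolate V id Real.sqrt with hp
    have hinj : Set.InjOn (id : ℝ → ℝ) V := Function.injective_id.injOn
    have hpdeg : p.natDegree ≤ t := by
      by_cases hp0 : p = 0
      · simp [hp0]
      · have := Lagrange.degree_interpolate_lt Real.sqrt hinj
        have h2 : p.natDegree < V.card := by
          rwa [← Polynomial.natDegree_lt_iff_degree_lt hp0] at this
        omega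
    set h : MvPolynomial (Fin n) ℝ := Polynomial.aeval (g i) p with hh
    have hhdeg : h.totalDegree ≤ t := le_trans (totalDegree_polyaeval (hdeg i) p) hpdeg
    have hSsub : S ⊆ convexHull ℝ S := subset_convexHull ℝ S
    have hnonneg : ∀ s ∈ S, 0 ≤ eval s (g i) := fun s hs => by
      have := hSsub hs; rw [hconv] at this; exact this i
    have hsos : IsKSos (vanishingIdeal ℝ S) t (g i) := by
      refine ⟨1, fun _ => h, fun _ => hhdeg, ?_⟩
      rw [mem_vanishingIdeal_iff]
      intro s hs
      change eval s (g i - ∑ j, (fun _ => h) j ^ 2) = 0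
      have hv : eval s (g i) ∈ V := by
        rw [hV, Set.Finite.mem_toFinset]
        exact ⟨s, hs, rfl⟩
      have hae : ∀ q : MvPolynomial (Fin n) ℝ, (MvPolynomial.aeval s) q = eval s q := by
        intro q; rw [← MvPolynomial.coe_aeval_eq_eval]; rfl
      have heval : eval s h = Real.sqrt (eval s (g i)) := by
        rw [hh, ← hae, ← Polynomial.aeval_algHom_apply, hae]
        have h2 : Polynomial.aeval (eval s (g i)) p = Polynomial.eval (eval s (g i)) p :=
          congrFun (Polynomial.coe_aeval_eq_eval _) p
        rw [h2, hp]
        exact Lagrange.eval_interpolate_at_node Real.sqrt hinj hv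
      simp only [Fin.sum_univ_one, map_sub, map_pow, heval]
      rw [Real.sq_sqrt (hnonneg s hs)]
      ring
    exact hx (g i) (hdeg i) hsos
  · -- convexHull ⊆ thetaBody
    intro x hx f hf1 ⟨t', h, hdh, hmem⟩
    have hS : ∀ s ∈ S, 0 ≤ eval s f := by
      intro s hs
      have h0 : eval s (f - ∑ j, h j ^ 2) = 0 :=
        (mem_vanishingIdeal_iff.mp hmem) s hs
      have : eval s f = ∑ j, (eval s (h j)) ^ 2 := by
        simpa [sub_eq_zero] using h0
      rw [this]
      exact Finset.sum_nonneg fun j _ => sq_nonneg _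
    have hcvx : Convex ℝ {y : Fin n → ℝ | 0 ≤ eval y f} := by
      intro u hu v hv a b ha hb hab
      have := eval_affine hf1 u v a b hab
      simp only [Set.mem_setOf_eq] at hu hv ⊢
      rw [this]
      exact add_nonneg (mul_nonneg ha hu) (mul_nonneg hb hv)
    exact convexHull_min hS hcvx hx
end
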